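/- arXiv:1706.07703 — 6 statements merged into one kernel-verified Lean document; each statement's English description precedes it below -/
import Mathlib

section
/- Let a > -1 and M ∈ ℂ with Re M > 0. Then there exists a constant C > 0, depending only on M and a, such that for all t > 0: ∫₀¹ φ(t)^a s^a |K₁(φ(t)s, t; M)| φ(t) ds ≤ C e^{-a t} (e^t - 1)^{a+1} (e^t + 1)^{Re M - 1}. -/
open MeasureTheory

/-- The Gauss hypergeometric function `F(a,b;c;x)` as a sum of the hypergeometric series. -/
noncomputable def GaussF (a b c x : ℂ) : ℂ :=
  ∑' n : ℕ, (ascPochhammer ℂ n).eval a * (ascPochhammer ℂ n).eval b /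
    ((ascPochhammer ℂ n).eval c * (n.factorial : ℂ)) * x ^ n

/-- The kernel `K₁(z,t;M)`. -/
noncomputable def K1 (z t : ℝ) (M : ℂ) : ℂ :=
  (4 : ℂ) ^ (-M) * Complex.exp (M * (t : ℂ)) *
    (((1 + Real.exp (-t)) ^ 2 - z ^ 2 : ℝ) : ℂ) ^ (-(1/2 : ℂ) + M) *
    GaussF (1/2 - M) (1/2 - M) 1
      ((((1 - Real.exp (-t)) ^ 2 - z ^ 2) / ((1 + Real.exp (-t)) ^ 2 - z ^ 2) : ℝ) : ℂ)

lemma poch_step_bound (p : ℂ) (q : ℝ) (hq0 : 0 < q) (hq1 : q ≤ 1)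
    (hq : q ≤ 1/2 - p.re) (n : ℕ)
    (hn : p.re^2 + p.im^2 + 1 ≤ (n:ℝ) * q) :
    (‖p + n‖)^2 * ((n:ℝ)+2)^(1+q) ≤ ((n:ℝ)+1)^2 * ((n:ℝ)+1)^(1+q) := by
  have h2 : (0:ℝ) < (n:ℝ)+2 := by positivity
  have h1 : (0:ℝ) < (n:ℝ)+1 := by positivity
  have hD : (0:ℝ) ≤ 1 - (1+q)/((n:ℝ)+2) := by
    rw [sub_nonneg, div_le_one h2]; linarith
  have hB : 1 - (1+q)/((n:ℝ)+2) ≤ (((n:ℝ)+1)/((n:ℝ)+2))^(1+q) := by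
    have hs : (-1:ℝ) ≤ -(1/((n:ℝ)+2)) := by
      rw [neg_le_neg_iff]
      rw [div_le_one h2]; linarith
    have := one_add_mul_self_le_rpow_one_add hs (by linarith : (1:ℝ) ≤ 1 + q)
    have he : 1 + -(1/((n:ℝ)+2)) = ((n:ℝ)+1)/((n:ℝ)+2) := by field_simp; ring
    rw [he] at this
    refine le_trans (le_of_eq ?_) this
    field_simp; ring
  have hBB : ((n:ℝ)+2)^(1+q) * (1 - (1+q)/((n:ℝ)+2)) ≤ ((n:ℝ)+1)^(1+q) := by
    have := mul_le_mul_of_nonneg_left hB (le_of_lt (Real.rpow_pos_of_pos h2 (1+q)))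
    rwa [Real.div_rpow (by linarith) (by linarith), mul_div_cancel₀] at this
    exact ne_of_gt (Real.rpow_pos_of_pos h2 (1+q))
  have hA : (‖p + n‖)^2 ≤ ((n:ℝ)+1)^2 * (1 - (1+q)/((n:ℝ)+2)) := by
    have habs : (‖p + n‖)^2 = (p.re + n)^2 + p.im^2 := by
      rw [Complex.sq_norm, Complex.normSq_apply]
      simp [Complex.add_re, Complex.add_im]
      ring
    rw [habs]
    have key : ((n:ℝ)+1)^2 - (1+q)*((n:ℝ)+1) ≤ ((n:ℝ)+1)^2 * (1 - (1+q)/((n:ℝ)+2)) := by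
      rw [mul_sub, mul_one, sub_le_sub_iff_left, mul_comm, div_mul_eq_mul_div,
        div_le_iff₀ h2]
      nlinarith
    refine le_trans ?_ key
    nlinarith [hn, hq, hq0, hq1]
  calc (‖p + n‖)^2 * ((n:ℝ)+2)^(1+q)
      ≤ (((n:ℝ)+1)^2 * (1 - (1+q)/((n:ℝ)+2))) * ((n:ℝ)+2)^(1+q) := by
        apply mul_le_mul_of_nonneg_right hA (le_of_lt (Real.rpow_pos_of_pos h2 _))
    _ = ((n:ℝ)+1)^2 * (((n:ℝ)+2)^(1+q) * (1 - (1+q)/((n:ℝ)+2))) := by ring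
    _ ≤ ((n:ℝ)+1)^2 * ((n:ℝ)+1)^(1+q) := by
        apply mul_le_mul_of_nonneg_left hBB (by positivity)

lemma summable_poch_sq (p : ℂ) (hp : p.re < 1/2) :
    Summable (fun n : ℕ => (‖(ascPochhammer ℂ n).eval p‖)^2 / ((n.factorial : ℝ))^2) := by
  set c : ℕ → ℝ := fun n => (‖(ascPochhammer ℂ n).eval p‖)^2 / ((n.factorial : ℝ))^2
    with hc
  have hc0 : ∀ n, 0 ≤ c n := fun n => by positivity
  set q : ℝ := min (1/2 - p.re) 1 with hqdef
  have hq0 : 0 < q := lt_min (by linarith) one_pos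
  have hq1 : q ≤ 1 := min_le_right _ _
  have hqe : q ≤ 1/2 - p.re := min_le_left _ _
  set N : ℕ := ⌈(p.re^2 + p.im^2 + 1)/q⌉₊ with hN
  have step : ∀ n, N ≤ n → c (n+1) * ((n:ℝ)+2)^(1+q) ≤ c n * ((n:ℝ)+1)^(1+q) := by
    intro n hn
    have hnq : p.re^2 + p.im^2 + 1 ≤ (n:ℝ) * q := by
      have h1 : (p.re^2 + p.im^2 + 1)/q ≤ (N:ℝ) := Nat.le_ceil _
      have h2 : (N:ℝ) ≤ (n:ℝ) := Nat.cast_le.2 hn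
      calc p.re^2 + p.im^2 + 1 = ((p.re^2 + p.im^2 + 1)/q) * q := by field_simp
        _ ≤ (n:ℝ) * q := by apply mul_le_mul_of_nonneg_right (h1.trans h2) (le_of_lt hq0)
    have key := poch_step_bound p q hq0 hq1 hqe n hnq
    have hcsucc : c (n+1) = c n * ((‖p + n‖)^2 / ((n:ℝ)+1)^2) := by
      rw [hc]
      simp only [ascPochhammer_succ_eval, Nat.factorial_succ]
      rw [norm_mul]
      push_cast
      rw [mul_pow, mul_pow]
      have hf : ((n.factorial : ℝ))^2 ≠ 0 := by positivity
      field_simp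
      try ring
      try tauto
    rw [hcsucc]
    have h1 : (0:ℝ) < ((n:ℝ)+1)^2 := by positivity
    calc c n * ((‖p + n‖)^2 / ((n:ℝ)+1)^2) * ((n:ℝ)+2)^(1+q)
        = (c n / ((n:ℝ)+1)^2) * ((‖p + n‖)^2 * ((n:ℝ)+2)^(1+q)) := by ring
      _ ≤ (c n / ((n:ℝ)+1)^2) * (((n:ℝ)+1)^2 * ((n:ℝ)+1)^(1+q)) := by
          apply mul_le_mul_of_nonneg_left key (by positivity)
      _ = c n * ((n:ℝ)+1)^(1+q) := by field_simp
  have anti : ∀ n, N ≤ n → c n * ((n:ℝ)+1)^(1+q) ≤ c N * ((N:ℝ)+1)^(1+q) := by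
    intro n hn
    induction n, hn using Nat.le_induction with
    | base => exact le_refl _
    | succ n hn ih =>
        refine le_trans ?_ ih
        have := step n hn
        push_cast
        convert this using 3
        · rfl
        · ring
  set B : ℝ := c N * ((N:ℝ)+1)^(1+q) with hB
  have hBnn : 0 ≤ B := mul_nonneg (hc0 N) (Real.rpow_nonneg (by positivity) _)
  have hbound : ∀ n : ℕ, c (n+N) ≤ B / ((n:ℝ)+1)^(1+q) := by
    intro n
    have h1 := anti (n+N) (Nat.le_add_left N n)
    have hp1 : (0:ℝ) < ((n:ℝ)+1)^(1+q) := Real.rpow_pos_of_pos (by positivity) _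
    have hp2 : (0:ℝ) < (((n+N:ℕ):ℝ)+1)^(1+q) := Real.rpow_pos_of_pos (by positivity) _
    have h2 : c (n+N) ≤ B / ((((n+N:ℕ):ℝ))+1)^(1+q) := (le_div_iff₀ hp2).2 h1
    refine h2.trans ?_
    apply div_le_div_of_nonneg_left hBnn hp1
    apply Real.rpow_le_rpow (by positivity) (by push_cast; linarith [Nat.cast_nonneg (α := ℝ) N]) (by linarith)
  rw [← summable_nat_add_iff N]
  apply Summable.of_nonneg_of_le (fun n => hc0 _) hbound
  have hs : Summable (fun n : ℕ => 1/((n:ℝ)+1)^(1+q)) := by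
    have h0 : Summable (fun n : ℕ => 1/((n:ℝ))^(1+q)) :=
      Real.summable_one_div_nat_rpow.2 (by linarith)
    have h1 := (summable_nat_add_iff 1).2 h0
    simpa using h1
  have := hs.mul_left B
  refine this.congr (fun n => ?_)
  rw [mul_one_div]

lemma gaussF_bound (p : ℂ) (hp : p.re < 1/2) (x : ℝ) (hx0 : 0 ≤ x) (hx1 : x ≤ 1) :
    ‖GaussF p p 1 x‖ ≤
      ∑' n : ℕ, (‖(ascPochhammer ℂ n).eval p‖)^2 / ((n.factorial : ℝ))^2 := by
  have hsum := summable_poch_sq p hp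
  have hnorm : ∀ n : ℕ, ‖(ascPochhammer ℂ n).eval p * (ascPochhammer ℂ n).eval p /
      (((ascPochhammer ℂ n).eval 1) * (n.factorial : ℂ)) * (x:ℂ) ^ n‖ ≤
      (‖(ascPochhammer ℂ n).eval p‖)^2 / ((n.factorial : ℝ))^2 := by
    intro n
    simp only [norm_mul, norm_div, norm_pow, Complex.norm_real, Real.norm_eq_abs, ascPochhammer_eval_one,
      Complex.norm_natCast, abs_of_nonneg hx0]
    have hxn : x ^ n ≤ 1 := pow_le_one₀ hx0 hx1
    have h1 : (0:ℝ) ≤ ‖(ascPochhammer ℂ n).eval p‖ *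
        ‖(ascPochhammer ℂ n).eval p‖ / ((n.factorial : ℝ) * (n.factorial : ℝ)) := by
      positivity
    calc ‖(ascPochhammer ℂ n).eval p‖ * ‖(ascPochhammer ℂ n).eval p‖ /
          ((n.factorial : ℝ) * (n.factorial : ℝ)) * x ^ n
        ≤ ‖(ascPochhammer ℂ n).eval p‖ * ‖(ascPochhammer ℂ n).eval p‖ /
          ((n.factorial : ℝ) * (n.factorial : ℝ)) * 1 := mul_le_mul_of_nonneg_left hxn h1
      _ = (‖(ascPochhammer ℂ n).eval p‖)^2 / ((n.factorial : ℝ))^2 := by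
          rw [mul_one]; ring
  have hsum2 : Summable (fun n : ℕ => ‖(ascPochhammer ℂ n).eval p * (ascPochhammer ℂ n).eval p /
      (((ascPochhammer ℂ n).eval 1) * (n.factorial : ℂ)) * (x:ℂ) ^ n‖) :=
    Summable.of_nonneg_of_le (fun n => norm_nonneg _) hnorm hsum
  rw [GaussF]
  exact le_trans (norm_tsum_le_tsum_norm hsum2) (hsum2.tsum_le_tsum hnorm hsum)

lemma beta_integrable (a μ : ℝ) (ha : -1 < a) (hμ : -1 < μ) :
    IntegrableOn (fun s : ℝ => s ^ a * (1 - s) ^ μ) (Set.Ioo 0 1) := by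
  have h := Complex.betaIntegral_convergent (u := ((a+1 : ℝ) : ℂ)) (v := ((μ+1 : ℝ) : ℂ))
    (by simpa using by linarith) (by simpa using by linarith)
  have h2 := h.norm
  rw [intervalIntegrable_iff_integrableOn_Ioo_of_le (by norm_num : (0:ℝ) ≤ 1)] at h2
  refine h2.congr_fun (fun s hs => ?_) measurableSet_Ioo
  obtain ⟨hs0, hs1⟩ := hs
  have h1s : (0:ℝ) < 1 - s := by linarith
  have e1 : ((a+1 : ℝ) : ℂ) - 1 = ((a:ℝ):ℂ) := by push_cast; ring
  have e2 : ((μ+1 : ℝ) : ℂ) - 1 = ((μ:ℝ):ℂ) := by push_cast; ring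
  have e3 : (1 : ℂ) - (s:ℝ) = (((1 - s : ℝ)):ℂ) := by push_cast; ring
  dsimp only
  rw [e1, e2, e3, norm_mul,
    Complex.norm_cpow_eq_rpow_re_of_pos hs0, Complex.norm_cpow_eq_rpow_re_of_pos h1s]
  simp


lemma aux_w1 (e φ s : ℝ) (he0 : 0 < e) (hφ0 : 0 < φ) (hφ1 : φ < 1)
    (hs0 : 0 < s) (hs1 : s < 1) : 1 - s ≤ (1 + e)^2 - (φ*s)^2 := by
  have h1s : (0:ℝ) < 1 - s := by linarith
  have h1 : 0 ≤ s - φ*s := by nlinarith [mul_pos hs0 (show 0 < 1-φ by linarith)]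
  have h2 : 0 ≤ s + φ*s := by nlinarith [mul_nonneg hφ0.le hs0.le]
  have hz2 : (φ*s)^2 ≤ s^2 := by nlinarith [mul_nonneg h1 h2]
  nlinarith [hz2, he0, mul_pos hs0 h1s]

lemma aux_w4 (e z : ℝ) (he0 : 0 < e) (he1 : e < 1) : (1 + e)^2 - z^2 ≤ 4 := by
  nlinarith [sq_nonneg z]

lemma aux_num (φ s : ℝ) (hφ0 : 0 < φ) (hs0 : 0 < s) (hs1 : s < 1) :
    0 ≤ φ^2 - (φ*s)^2 := by
  nlinarith [mul_nonneg (sq_nonneg φ) (show (0:ℝ) ≤ 1 - s^2 by nlinarith [mul_pos hs0 (show (0:ℝ) < 1 - s by linarith)])]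

lemma aux_frac (e z : ℝ) (he0 : 0 < e) : (1 - e)^2 - z^2 ≤ (1 + e)^2 - z^2 := by
  nlinarith [he0]

theorem stmt0 (a : ℝ) (ha : a > -1) (M : ℂ) (hM : 0 < M.re) :
    ∃ C > 0, ∀ t : ℝ, 0 < t →
      (∫ s in Set.Ioo (0:ℝ) 1,
          (1 - Real.exp (-t)) ^ a * s ^ a *
            ‖K1 ((1 - Real.exp (-t)) * s) t M‖ * (1 - Real.exp (-t)))
        ≤ C * Real.exp (-a * t) * (Real.exp t - 1) ^ (a + 1) *
            (Real.exp t + 1) ^ (M.re - 1) := by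
  have hM2 : (1/2 - M).re < 1/2 := by
    simp only [Complex.sub_re, Complex.ofReal_re, Complex.div_ofNat_re, Complex.one_re]
    norm_num
    linarith
  set ε := M.re with hε
  set lam : ℝ := ε - 1/2 with hlam
  set μ : ℝ := min lam 0 with hμ
  have hμ0 : μ ≤ 0 := min_le_right _ _
  have hμlam : μ ≤ lam := min_le_left _ _
  have hμ1 : -1 < μ := lt_min (by rw [hlam]; linarith) (by norm_num)
  clear_value ε lam μ
  set Cf : ℝ := ∑' n : ℕ,
    (‖(ascPochhammer ℂ n).eval (1/2 - M)‖)^2 / ((n.factorial : ℝ))^2 with hCf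
  have hCf0 : 0 ≤ Cf := tsum_nonneg (fun n => by positivity)
  clear_value Cf
  have hInt := beta_integrable a μ ha hμ1
  set I : ℝ := ∫ s in Set.Ioo (0:ℝ) 1, s ^ a * (1 - s) ^ μ with hI
  have hI0 : 0 ≤ I := setIntegral_nonneg measurableSet_Ioo (fun s hs =>
    mul_nonneg (Real.rpow_nonneg hs.1.le a) (Real.rpow_nonneg (by linarith [hs.2]) μ))
  clear_value I
  set K0 : ℝ := (4:ℝ)^(lam - μ) * Cf * I with hK0
  have hK0nn : 0 ≤ K0 := by
    rw [hK0]
    exact mul_nonneg (mul_nonneg (Real.rpow_nonneg (by norm_num) _) hCf0) hI0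
  clear_value K0
  set C : ℝ := (K0 + 1) * max 1 ((2:ℝ)^(1-ε)) with hC
  have hCpos : 0 < C := by
    rw [hC]
    exact mul_pos (by linarith) (lt_of_lt_of_le one_pos (le_max_left _ _))
  clear_value C
  refine ⟨C, hCpos, fun t ht => ?_⟩
  have he0 : 0 < Real.exp (-t) := Real.exp_pos _
  have he1 : Real.exp (-t) < 1 := by
    rw [Real.exp_lt_one_iff]; linarith
  have hE1 : 1 < Real.exp t := by
    have := Real.exp_lt_exp.2 ht
    rwa [Real.exp_zero] at this
  set φ : ℝ := 1 - Real.exp (-t) with hφ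
  have hφ0 : 0 < φ := by rw [hφ]; linarith
  have hφ1 : φ < 1 := by rw [hφ]; linarith
  clear_value φ
  set con : ℝ := φ ^ a * φ * Real.exp (ε * t) * ((4:ℝ)^(lam - μ) * Cf) with hcon
  clear_value con
  have hg : Integrable (fun s : ℝ => con * (s ^ a * (1 - s) ^ μ))
      (volume.restrict (Set.Ioo (0:ℝ) 1)) := hInt.const_mul con
  -- pointwise bound
  have hfg : ∀ s ∈ Set.Ioo (0:ℝ) 1,
      φ ^ a * s ^ a * ‖K1 (φ * s) t M‖ * φ ≤ con * (s ^ a * (1 - s) ^ μ) := by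
    intro s hs
    obtain ⟨hs0, hs1⟩ := hs
    have h1s : (0:ℝ) < 1 - s := by linarith
    set z : ℝ := φ * s with hz
    have hz0 : 0 ≤ z := mul_nonneg hφ0.le hs0.le
    clear_value z
    set w : ℝ := (1 + Real.exp (-t)) ^ 2 - z ^ 2 with hw
    clear_value w
    have hw1 : 1 - s ≤ w := by
      rw [hw, hz]
      exact aux_w1 _ _ _ he0 hφ0 hφ1 hs0 hs1
    have hw0 : 0 < w := lt_of_lt_of_le h1s hw1
    have hw4 : w ≤ 4 := by
      rw [hw]
      exact aux_w4 _ _ he0 he1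
    set xx : ℝ := ((1 - Real.exp (-t)) ^ 2 - z ^ 2) / ((1 + Real.exp (-t)) ^ 2 - z ^ 2) with hxx
    clear_value xx
    have hxx0 : 0 ≤ xx := by
      rw [hxx, ← hw]
      apply div_nonneg _ hw0.le
      rw [hz, ← hφ]
      exact aux_num _ _ hφ0 hs0 hs1
    have hxx1 : xx ≤ 1 := by
      rw [hxx, ← hw, div_le_one hw0, hw]
      exact aux_frac _ _ he0
    -- bound on |K1|
    have hK1 : ‖K1 z t M‖ ≤
        Real.exp (ε * t) * ((4:ℝ)^(lam - μ) * (1 - s) ^ μ) * Cf := by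
      have h4 : ‖(4:ℂ) ^ (-M)‖ ≤ 1 := by
        have h44 : ((4:ℝ):ℂ) = (4:ℂ) := by norm_num
        rw [← h44, Complex.norm_cpow_eq_rpow_re_of_pos (by norm_num)]
        apply Real.rpow_le_one_of_one_le_of_nonpos (by norm_num)
        simp only [Complex.neg_re]
        linarith
      have hexp : ‖Complex.exp (M * t)‖ = Real.exp (ε * t) := by
        rw [Complex.norm_exp, hε]
        congr 1
        simp [Complex.mul_re]
      have hwabs : ‖((((1 + Real.exp (-t)) ^ 2 - z ^ 2 : ℝ)):ℂ) ^ (-(1/2:ℂ) + M)‖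
          = w ^ lam := by
        rw [← hw, Complex.norm_cpow_eq_rpow_re_of_pos hw0]
        congr 1
        simp only [Complex.add_re, Complex.neg_re, hlam, hε]
        norm_num
        ring
      have hF : ‖GaussF (1/2 - M) (1/2 - M) 1 (xx : ℂ)‖ ≤ Cf := by
        rw [hCf]
        exact gaussF_bound _ hM2 xx hxx0 hxx1
      have hwb : w ^ lam ≤ (4:ℝ)^(lam - μ) * (1 - s) ^ μ := by
        have h1 : w ^ lam = w ^ (lam - μ) * w ^ μ := by
          rw [← Real.rpow_add hw0]; ring_nf
        rw [h1]
        apply mul_le_mul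
        · exact Real.rpow_le_rpow hw0.le hw4 (by linarith)
        · exact Real.rpow_le_rpow_of_nonpos h1s hw1 hμ0
        · exact Real.rpow_nonneg hw0.le μ
        · exact Real.rpow_nonneg (by norm_num) _
      rw [K1]
      rw [norm_mul, norm_mul, norm_mul]
      rw [hexp, hwabs, ← hxx]
      calc ‖(4:ℂ) ^ (-M)‖ * Real.exp (ε * t) * w ^ lam *
            ‖GaussF (1/2 - M) (1/2 - M) 1 (xx:ℂ)‖
          ≤ 1 * Real.exp (ε * t) * ((4:ℝ)^(lam - μ) * (1 - s) ^ μ) * Cf := by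
            apply mul_le_mul (mul_le_mul (mul_le_mul h4 (le_refl _) (Real.exp_pos _).le
              (by norm_num)) hwb (Real.rpow_nonneg hw0.le _)
              (by positivity)) hF (norm_nonneg _)
              (mul_nonneg (by positivity) (mul_nonneg (Real.rpow_nonneg (by norm_num) _)
                (Real.rpow_nonneg h1s.le _)))
        _ = Real.exp (ε * t) * ((4:ℝ)^(lam - μ) * (1 - s) ^ μ) * Cf := by ring
    calc φ ^ a * s ^ a * ‖K1 z t M‖ * φ
        ≤ φ ^ a * s ^ a * (Real.exp (ε * t) * ((4:ℝ)^(lam - μ) * (1 - s) ^ μ) * Cf) * φ := by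
          apply mul_le_mul_of_nonneg_right _ hφ0.le
          apply mul_le_mul_of_nonneg_left hK1
          exact mul_nonneg (Real.rpow_nonneg hφ0.le a) (Real.rpow_nonneg hs0.le a)
      _ = con * (s ^ a * (1 - s) ^ μ) := by rw [hcon]; ring
  have h0f : ∀ s ∈ Set.Ioo (0:ℝ) 1,
      0 ≤ φ ^ a * s ^ a * ‖K1 (φ * s) t M‖ * φ := by
    intro s hs
    exact mul_nonneg (mul_nonneg (mul_nonneg (Real.rpow_nonneg hφ0.le a)
      (Real.rpow_nonneg hs.1.le a)) (norm_nonneg _)) hφ0.le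
  have hmono := integral_mono_of_nonneg
    ((ae_restrict_iff' measurableSet_Ioo).2 (ae_of_all _ h0f)) hg
    ((ae_restrict_iff' measurableSet_Ioo).2 (ae_of_all _ hfg))
  refine le_trans hmono ?_
  rw [MeasureTheory.integral_const_mul, ← hI]
  -- final arithmetic
  have hφa1 : φ ^ a * φ = φ ^ (a+1) := by
    rw [Real.rpow_add_one hφ0.ne' a]
  have hφeq : φ = Real.exp (-t) * (Real.exp t - 1) := by
    rw [hφ, mul_sub, ← Real.exp_add, mul_one]
    norm_num
  have hE0 : (0:ℝ) ≤ Real.exp t - 1 := by linarith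
  have hφpow : φ ^ (a+1) = Real.exp (-(a+1)*t) * (Real.exp t - 1) ^ (a+1) := by
    rw [hφeq, Real.mul_rpow he0.le hE0]
    congr 1
    rw [Real.rpow_def_of_pos he0, Real.log_exp]
    ring_nf
  have hEe : (Real.exp t) ^ (ε-1) = Real.exp ((ε-1)*t) := by
    rw [Real.rpow_def_of_pos (Real.exp_pos t), Real.log_exp]
    ring_nf
  set m : ℝ := min 1 ((2:ℝ)^(ε-1)) with hm
  have hm0 : 0 < m := lt_min one_pos (Real.rpow_pos_of_pos (by norm_num) _)
  have hmkey : m * Real.exp ((ε-1)*t) ≤ (Real.exp t + 1) ^ (ε-1) := by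
    rcases le_or_gt 1 ε with h | h
    · calc m * Real.exp ((ε-1)*t) ≤ 1 * Real.exp ((ε-1)*t) :=
            mul_le_mul_of_nonneg_right (min_le_left _ _) (Real.exp_pos _).le
        _ = (Real.exp t) ^ (ε-1) := by rw [one_mul, hEe]
        _ ≤ (Real.exp t + 1) ^ (ε-1) :=
            Real.rpow_le_rpow (Real.exp_pos t).le (by linarith) (by linarith)
    · calc m * Real.exp ((ε-1)*t) ≤ (2:ℝ)^(ε-1) * Real.exp ((ε-1)*t) :=
            mul_le_mul_of_nonneg_right (min_le_right _ _) (Real.exp_pos _).le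
        _ = (2 * Real.exp t) ^ (ε-1) := by
            rw [Real.mul_rpow (by norm_num) (Real.exp_pos t).le, hEe]
        _ ≤ (Real.exp t + 1) ^ (ε-1) := by
            apply Real.rpow_le_rpow_of_nonpos (by positivity) (by linarith) (by linarith)
  have hCm : C * m = K0 + 1 := by
    rw [hC, hm]
    have h2pos : ∀ x : ℝ, (0:ℝ) < (2:ℝ)^x := fun x => Real.rpow_pos_of_pos (by norm_num) x
    rcases le_or_gt ε 1 with h | h
    · rw [max_eq_right, min_eq_right]
      · rw [mul_assoc, ← Real.rpow_add (by norm_num : (0:ℝ) < 2)]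
        norm_num
      · exact Real.rpow_le_one_of_one_le_of_nonpos (by norm_num) (by linarith)
      · exact Real.one_le_rpow (by norm_num) (by linarith)
    · rw [max_eq_left, min_eq_left]
      · ring
      · exact Real.one_le_rpow (by norm_num) (by linarith)
      · exact Real.rpow_le_one_of_one_le_of_nonpos (by norm_num) (by linarith)
  -- assemble
  have key : K0 * Real.exp ((ε-1)*t) ≤ C * (Real.exp t + 1) ^ (ε-1) := by
    calc K0 * Real.exp ((ε-1)*t) ≤ (K0 + 1) * Real.exp ((ε-1)*t) := by
          apply mul_le_mul_of_nonneg_right (by linarith) (Real.exp_pos _).le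
      _ = C * (m * Real.exp ((ε-1)*t)) := by rw [← hCm]; ring
      _ ≤ C * ((Real.exp t + 1) ^ (ε-1)) := by
          apply mul_le_mul_of_nonneg_left hmkey hCpos.le
  calc con * I = (Real.exp (-a*t) * (Real.exp t - 1) ^ (a+1)) * (K0 * Real.exp ((ε-1)*t)) := by
        rw [hcon, hK0]
        rw [mul_assoc (φ ^ a * φ), hφa1, hφpow]
        rw [show Real.exp (-(a+1)*t) = Real.exp (-a*t) * Real.exp (-t) by
          rw [← Real.exp_add]; ring_nf]
        rw [show Real.exp ((ε-1)*t) = Real.exp (ε*t) * Real.exp (-t) by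
          rw [← Real.exp_add]; ring_nf]
        ring
    _ ≤ (Real.exp (-a*t) * (Real.exp t - 1) ^ (a+1)) * (C * (Real.exp t + 1) ^ (ε-1)) := by
        apply mul_le_mul_of_nonneg_left key
        exact mul_nonneg (Real.exp_pos _).le (Real.rpow_nonneg hE0 _)
    _ = C * Real.exp (-a*t) * (Real.exp t - 1) ^ (a+1) * (Real.exp t + 1) ^ (ε-1) := by ring
end

section
/- Let a > -1 and M ∈ ℂ with Re M > 0 and Re M ≠ 1/2. Then there exists a constant C > 0, depending only on M and a, such that for all z > 1, writing ξ(y) = ((z−1)² − y²)/((z+1)² − y²): ∫₀^{z−1} y^a ((z+1)² − y²)^{Re M} · (((z−1)² − y²) · √((z+1)² − y²))^{−1} · | (z − z² + M(1 − z² − y²)) F(1/2−M, 1/2−M; 1; ξ(y)) + (z² − 1 + y²)(1/2 + M) F(−1/2−M, 1/2−M; 1; ξ(y)) | dy ≤ C (z−1)^{1+a} (z+1)^{Re M − 1/2} if Re M < 1/2, and ≤ C (z−1)^{1+a} (z+1)^{2 Re M − 1} if Re M > 1/2. -/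
open MeasureTheory

noncomputable def Hh (n : ℕ) : ℝ := ∑ i ∈ Finset.range n, (1 : ℝ) / (i + 1)

lemma Hh_succ (n : ℕ) : Hh (n+1) = Hh n + 1 / ((n:ℝ) + 1) := by
  simp [Hh, Finset.sum_range_succ]

lemma log_le_Hh (n : ℕ) : Real.log (n + 1) ≤ Hh n := by
  induction n with
  | zero => simp [Hh]
  | succ n ih =>
    have h1 : Real.log ((n:ℝ) + 1 + 1) - Real.log ((n:ℝ) + 1) ≤ 1 / ((n:ℝ) + 1) := by
      rw [← Real.log_div (by positivity) (by positivity)]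
      have := Real.log_le_sub_one_of_pos (x := ((n:ℝ) + 1 + 1) / ((n:ℝ) + 1)) (by positivity)
      have h2 : ((n:ℝ) + 1 + 1) / ((n:ℝ) + 1) - 1 = 1 / ((n:ℝ)+1) := by field_simp; ring
      linarith
    rw [Hh_succ]
    push_cast
    linarith

lemma Hh_le_aux (n : ℕ) : Hh (n+1) ≤ 1 + Real.log (n + 1) := by
  induction n with
  | zero => simp [Hh]
  | succ n ih =>
    have h1 : 1 / ((n:ℝ) + 1 + 1) ≤ Real.log ((n:ℝ) + 1 + 1) - Real.log ((n:ℝ) + 1) := by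
      have := Real.log_le_sub_one_of_pos (x := ((n:ℝ) + 1) / ((n:ℝ) + 1 + 1)) (by positivity)
      rw [Real.log_div (by positivity) (by positivity)] at this
      have h2 : ((n:ℝ) + 1) / ((n:ℝ) + 1 + 1) - 1 = -(1 / ((n:ℝ)+1+1)) := by field_simp; ring
      linarith
    rw [Hh_succ]
    push_cast
    linarith

lemma Hh_le (n : ℕ) : Hh n ≤ 1 + Real.log (n + 1) := by
  cases n with
  | zero => simp [Hh]
  | succ n =>
    refine (Hh_le_aux n).trans ?_
    have : Real.log ((n:ℝ)+1) ≤ Real.log ((n:ℝ)+1+1) := by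
      apply Real.log_le_log (by positivity); linarith
    push_cast
    linarith

lemma invsq_le (n : ℕ) : ∑ i ∈ Finset.range n, (1:ℝ) / ((i+1)*(i+1)) ≤ 2 := by
  have key : ∀ m : ℕ, ∑ i ∈ Finset.range (m+1), (1:ℝ) / ((i+1)*(i+1)) ≤ 2 - 1/(m+1) := by
    intro m
    induction m with
    | zero => norm_num
    | succ m ih =>
      rw [Finset.sum_range_succ]
      have h1 : (1:ℝ) / (((m:ℝ)+1+1)*((m:ℝ)+1+1)) ≤ 1/((m:ℝ)+1) - 1/((m:ℝ)+1+1) := by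
        rw [div_sub_div _ _ (by positivity) (by positivity), div_le_div_iff₀ (by positivity) (by positivity)]
        nlinarith [sq_nonneg ((m:ℝ)+1)]
      push_cast at ih ⊢
      linarith
  cases n with
  | zero => simp
  | succ m =>
    have h := key m
    have : (0:ℝ) < 1/((m:ℝ)+1) := by positivity
    linarith



lemma pc_prod (α : ℂ) (n : ℕ) : (ascPochhammer ℂ n).eval α = ∏ i ∈ Finset.range n, (α + i) := by
  induction n with
  | zero => simp
  | succ n ih => rw [ascPochhammer_succ_right, Finset.prod_range_succ, ← ih]; simp [Polynomial.eval_mul]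

lemma norm_one_add_le (w : ℂ) : ‖1 + w‖ ≤ Real.exp (w.re + ‖w‖^2 / 2) := by
  have h1 : ‖1+w‖^2 = 1 + (2*w.re + ‖w‖^2) := by
    rw [Complex.sq_norm, Complex.sq_norm]
    simp [Complex.normSq_apply, Complex.add_re, Complex.add_im]
    ring
  have h2 : ‖1+w‖^2 ≤ Real.exp (2*w.re + ‖w‖^2) := by
    rw [h1]; have := Real.add_one_le_exp (2*w.re + ‖w‖^2); linarith
  have h3 : Real.exp (2*w.re + ‖w‖^2) = (Real.exp (w.re + ‖w‖^2/2))^2 := by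
    rw [← Real.exp_nat_mul]; ring_nf
  nlinarith [norm_nonneg (1+w), Real.exp_pos (w.re + ‖w‖^2/2), sq_nonneg (‖1+w‖ - Real.exp (w.re + ‖w‖^2/2))]

noncomputable def pcC (α : ℂ) : ℝ := Real.exp (|α.re - 1| + ‖α - 1‖^2)

lemma pcC_pos (α : ℂ) : 0 < pcC α := Real.exp_pos _

lemma poch_bound (α : ℂ) (n : ℕ) :
    ‖(ascPochhammer ℂ n).eval α‖ ≤ pcC α * ((n:ℝ)+1)^(α.re - 1) * n.factorial := by
  have key : ∀ i : ℕ, ‖α + i‖ ≤ ((i:ℝ)+1) * Real.exp ((α.re-1)/((i:ℝ)+1) + ‖α-1‖^2/(2*(((i:ℝ)+1)*((i:ℝ)+1)))) := by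
    intro i
    have hip : (0:ℝ) < (i:ℝ)+1 := by positivity
    set w : ℂ := (α - 1) / ((((i:ℝ) + 1) : ℝ) : ℂ) with hw
    have hne : ((((i:ℝ)+1):ℝ):ℂ) ≠ 0 := by exact_mod_cast hip.ne'
    have hfac : α + i = ((((i:ℝ)+1):ℝ):ℂ) * (1 + w) := by
      rw [hw, mul_add, mul_one, mul_div_cancel₀ _ hne]; push_cast; ring
    have hre : w.re = (α.re-1)/((i:ℝ)+1) := by
      rw [hw, Complex.div_ofReal_re]; simp [Complex.sub_re]
    have hnw : ‖w‖^2 = ‖α-1‖^2 / (((i:ℝ)+1)*((i:ℝ)+1)) := by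
      rw [hw, norm_div, Complex.norm_real, Real.norm_eq_abs, abs_of_pos hip, div_pow]
      ring
    have hkey := norm_one_add_le w
    have hexp : w.re + ‖w‖^2/2 = (α.re-1)/((i:ℝ)+1) + ‖α-1‖^2/(2*(((i:ℝ)+1)*((i:ℝ)+1))) := by
      rw [hre, hnw]
      generalize (((i:ℝ)+1)*((i:ℝ)+1)) = t
      ring
    calc ‖α + i‖ = ((i:ℝ)+1) * ‖1 + w‖ := by
          rw [hfac, norm_mul, Complex.norm_real, Real.norm_eq_abs, abs_of_pos hip]
      _ ≤ ((i:ℝ)+1) * Real.exp (w.re + ‖w‖^2/2) := mul_le_mul_of_nonneg_left hkey hip.le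
      _ = _ := by rw [hexp]
  rw [pc_prod, norm_prod]
  have hfct : (∏ i ∈ Finset.range n, ((i:ℝ)+1)) = (n.factorial : ℝ) := by
    exact_mod_cast congrArg (Nat.cast : ℕ → ℝ) (Finset.prod_range_add_one_eq_factorial n)
  calc ∏ i ∈ Finset.range n, ‖α + (i:ℂ)‖
      ≤ ∏ i ∈ Finset.range n, (((i:ℝ)+1) * Real.exp ((α.re-1)/((i:ℝ)+1) + ‖α-1‖^2/(2*(((i:ℝ)+1)*((i:ℝ)+1))))) :=
        Finset.prod_le_prod (fun i _ => norm_nonneg _) (fun i _ => key i)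
    _ = (n.factorial : ℝ) *
        Real.exp (∑ i ∈ Finset.range n, ((α.re-1)/((i:ℝ)+1) + ‖α-1‖^2/(2*(((i:ℝ)+1)*((i:ℝ)+1))))) := by
        rw [Finset.prod_mul_distrib, Real.exp_sum, hfct]
    _ ≤ pcC α * ((n:ℝ)+1)^(α.re - 1) * n.factorial := by
        have hsum : ∑ i ∈ Finset.range n, ((α.re-1)/((i:ℝ)+1) + ‖α-1‖^2/(2*(((i:ℝ)+1)*((i:ℝ)+1))))
            ≤ (α.re-1) * Real.log ((n:ℝ)+1) + (|α.re - 1| + ‖α - 1‖^2) := by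
          rw [Finset.sum_add_distrib]
          have e1 : ∑ i ∈ Finset.range n, (α.re-1)/((i:ℝ)+1) = (α.re-1) * Hh n := by
            rw [Hh, Finset.mul_sum]; apply Finset.sum_congr rfl; intro i _; ring
          have e2 : ∑ i ∈ Finset.range n, ‖α-1‖^2/(2*(((i:ℝ)+1)*((i:ℝ)+1)))
              = (‖α-1‖^2/2) * ∑ i ∈ Finset.range n, (1:ℝ)/(((i:ℝ)+1)*((i:ℝ)+1)) := by
            rw [Finset.mul_sum]; apply Finset.sum_congr rfl; intro i _
            generalize (((i:ℝ)+1)*((i:ℝ)+1)) = t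
            ring
          rw [e1, e2]
          have hsum_nonneg : (0:ℝ) ≤ ∑ i ∈ Finset.range n, (1:ℝ)/(((i:ℝ)+1)*((i:ℝ)+1)) :=
            Finset.sum_nonneg (fun i _ => by positivity)
          have hinv : ∑ i ∈ Finset.range n, (1:ℝ)/(((i:ℝ)+1)*((i:ℝ)+1)) ≤ 2 := by
            exact invsq_le n
          have h2 : (‖α-1‖^2/2) * ∑ i ∈ Finset.range n, (1:ℝ)/(((i:ℝ)+1)*((i:ℝ)+1)) ≤ ‖α-1‖^2 := by
            nlinarith [sq_nonneg ‖α-1‖]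
          have h1 : (α.re-1) * Hh n ≤ (α.re-1) * Real.log ((n:ℝ)+1) + |α.re - 1| := by
            rcases le_or_gt 0 (α.re - 1) with hs | hs
            · have hle := Hh_le n
              have := mul_le_mul_of_nonneg_left hle hs
              rw [abs_of_nonneg hs]; nlinarith
            · have hle := log_le_Hh n
              have := mul_le_mul_of_nonpos_left hle hs.le
              rw [abs_of_neg hs]; nlinarith
          linarith
        have hpow : Real.exp ((α.re-1) * Real.log ((n:ℝ)+1) + (|α.re - 1| + ‖α - 1‖^2))
            = pcC α * ((n:ℝ)+1)^(α.re-1) := by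
          rw [Real.exp_add, Real.rpow_def_of_pos (by positivity), mul_comm (Real.log _), pcC]
          ring
        have h2 := (Real.exp_le_exp.mpr hsum).trans_eq hpow
        calc (n.factorial : ℝ) * Real.exp (∑ i ∈ Finset.range n, ((α.re-1)/((i:ℝ)+1) + ‖α-1‖^2/(2*(((i:ℝ)+1)*((i:ℝ)+1)))))
            ≤ (n.factorial : ℝ) * (pcC α * ((n:ℝ)+1)^(α.re-1)) :=
              mul_le_mul_of_nonneg_left h2 (Nat.cast_nonneg _)
          _ = _ := by ring




lemma summable_rpow_shift {c : ℝ} (hc : c < -1) : Summable (fun n : ℕ => ((n:ℝ)+1)^c) := by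
  have h := (Real.summable_nat_rpow (p := c)).mpr hc
  have := (summable_nat_add_iff (f := fun n : ℕ => (n:ℝ)^c) 1).mpr h
  apply this.congr
  intro n
  push_cast
  norm_num

lemma summable_pochratio (α β : ℂ) (h : α.re + β.re < 1) :
    Summable (fun n : ℕ => ‖(ascPochhammer ℂ n).eval α‖ * ‖(ascPochhammer ℂ n).eval β‖ /
      ((n.factorial : ℝ) * n.factorial)) := by
  apply Summable.of_nonneg_of_le (fun n => by positivity)
    (f := fun n : ℕ => (pcC α * pcC β) * ((n:ℝ)+1)^(α.re + β.re - 2))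
  · intro n
    have h1 := poch_bound α n
    have h2 := poch_bound β n
    have hf : (0:ℝ) < n.factorial := by exact_mod_cast n.factorial_pos
    have hmul : ‖(ascPochhammer ℂ n).eval α‖ * ‖(ascPochhammer ℂ n).eval β‖ ≤
        (pcC α * ((n:ℝ)+1)^(α.re - 1) * n.factorial) * (pcC β * ((n:ℝ)+1)^(β.re - 1) * n.factorial) :=
      mul_le_mul h1 h2 (norm_nonneg _) (by have := pcC_pos α; positivity)
    rw [div_le_iff₀ (by positivity)]
    calc ‖(ascPochhammer ℂ n).eval α‖ * ‖(ascPochhammer ℂ n).eval β‖ ≤ _ := hmul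
      _ = (pcC α * pcC β) * (((n:ℝ)+1)^(α.re - 1) * ((n:ℝ)+1)^(β.re - 1)) * ((n.factorial:ℝ) * n.factorial) := by ring
      _ = (pcC α * pcC β) * ((n:ℝ)+1)^(α.re + β.re - 2) * ((n.factorial:ℝ) * n.factorial) := by
          rw [← Real.rpow_add (by positivity)]; ring_nf
  · exact ((summable_rpow_shift (by linarith)).mul_left _)

lemma summable_pochratio' (α β : ℂ) (h : α.re + β.re < 1) :
    Summable (fun n : ℕ => ‖(ascPochhammer ℂ n).eval α‖ * ‖(ascPochhammer ℂ (n+1)).eval β‖ /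
      ((n.factorial : ℝ) * (n+1).factorial)) := by
  apply Summable.of_nonneg_of_le (fun n => by positivity)
    (f := fun n : ℕ => (pcC α * pcC β * 2^|β.re - 1|) * ((n:ℝ)+1)^(α.re + β.re - 2))
  · intro n
    have h1 := poch_bound α n
    have h2 := poch_bound β (n+1)
    have hshift : (((n+1:ℕ):ℝ)+1)^(β.re - 1) ≤ 2^|β.re - 1| * ((n:ℝ)+1)^(β.re - 1) := by
      have hb1 : (0:ℝ) < (n:ℝ)+1 := by positivity
      rcases le_or_gt 0 (β.re - 1) with hs | hs
      · rw [abs_of_nonneg hs]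
        calc (((n+1:ℕ):ℝ)+1)^(β.re - 1) ≤ (2*((n:ℝ)+1))^(β.re - 1) := by
              apply Real.rpow_le_rpow (by positivity) (by push_cast; linarith) hs
          _ = 2^(β.re-1) * ((n:ℝ)+1)^(β.re - 1) := Real.mul_rpow (by norm_num) (by positivity)
      · rw [abs_of_neg hs]
        have two_ge : (1:ℝ) ≤ 2^(-(β.re-1)) := Real.one_le_rpow (by norm_num) (by linarith)
        calc (((n+1:ℕ):ℝ)+1)^(β.re - 1) ≤ ((n:ℝ)+1)^(β.re - 1) := by
              apply Real.rpow_le_rpow_of_nonpos hb1 (by push_cast; linarith) hs.le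
          _ ≤ 2^(-(β.re-1)) * ((n:ℝ)+1)^(β.re - 1) := by
              nlinarith [Real.rpow_pos_of_pos hb1 (β.re - 1)]
    have hf : (0:ℝ) < n.factorial := by exact_mod_cast n.factorial_pos
    have hf1 : (0:ℝ) < (n+1).factorial := by exact_mod_cast (n+1).factorial_pos
    rw [div_le_iff₀ (by positivity)]
    have hmul : ‖(ascPochhammer ℂ n).eval α‖ * ‖(ascPochhammer ℂ (n+1)).eval β‖ ≤
        (pcC α * ((n:ℝ)+1)^(α.re - 1) * n.factorial) *
        (pcC β * (2^|β.re - 1| * ((n:ℝ)+1)^(β.re - 1)) * (n+1).factorial) := by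
      apply mul_le_mul h1 _ (norm_nonneg _) (by have := pcC_pos α; positivity)
      refine h2.trans ?_
      have := mul_le_mul_of_nonneg_left hshift (le_of_lt (pcC_pos β))
      calc pcC β * (((n+1:ℕ):ℝ)+1)^(β.re - 1) * ((n+1).factorial:ℝ)
          ≤ pcC β * (2^|β.re - 1| * ((n:ℝ)+1)^(β.re - 1)) * ((n+1).factorial:ℝ) := by
            apply mul_le_mul_of_nonneg_right _ (le_of_lt hf1)
            exact this
        _ = _ := rfl
    calc ‖(ascPochhammer ℂ n).eval α‖ * ‖(ascPochhammer ℂ (n+1)).eval β‖ ≤ _ := hmul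
      _ = (pcC α * pcC β * 2^|β.re - 1|) * (((n:ℝ)+1)^(α.re - 1) * ((n:ℝ)+1)^(β.re - 1)) * ((n.factorial:ℝ) * (n+1).factorial) := by ring
      _ = _ := by rw [← Real.rpow_add (by positivity)]; ring_nf
  · exact ((summable_rpow_shift (by linarith)).mul_left _)




noncomputable def Sab (α β : ℂ) : ℝ :=
  ∑' n : ℕ, ‖(ascPochhammer ℂ n).eval α‖ * ‖(ascPochhammer ℂ n).eval β‖ /
      ((n.factorial : ℝ) * n.factorial)

noncomputable def S3ab (α β : ℂ) : ℝ :=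
  ∑' n : ℕ, ‖(ascPochhammer ℂ n).eval α‖ * ‖(ascPochhammer ℂ (n+1)).eval β‖ /
      ((n.factorial : ℝ) * (n+1).factorial)

lemma Sab_nonneg (α β : ℂ) : 0 ≤ Sab α β :=
  tsum_nonneg (fun n => by positivity)

lemma S3ab_nonneg (α β : ℂ) : 0 ≤ S3ab α β :=
  tsum_nonneg (fun n => by positivity)

noncomputable def gterm (α β : ℂ) (x : ℝ) (n : ℕ) : ℂ :=
  (ascPochhammer ℂ n).eval α * (ascPochhammer ℂ n).eval β /
    ((ascPochhammer ℂ n).eval 1 * (n.factorial : ℂ)) * (x:ℂ) ^ n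

lemma gauss_eq_tsum (α β : ℂ) (x : ℝ) : GaussF α β 1 (x:ℂ) = ∑' n, gterm α β x n := rfl

lemma gterm_norm (α β : ℂ) (x : ℝ) (hx : 0 ≤ x) (n : ℕ) :
    ‖gterm α β x n‖ = ‖(ascPochhammer ℂ n).eval α‖ * ‖(ascPochhammer ℂ n).eval β‖ /
      ((n.factorial : ℝ) * n.factorial) * x ^ n := by
  rw [gterm, ascPochhammer_eval_one, norm_mul, norm_div, norm_mul, norm_mul, norm_pow]
  simp [Complex.norm_natCast, Complex.norm_real, Real.norm_eq_abs, abs_of_nonneg hx]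

lemma gterm_norm_le (α β : ℂ) (x : ℝ) (hx : 0 ≤ x) (hx1 : x ≤ 1) (n : ℕ) :
    ‖gterm α β x n‖ ≤ ‖(ascPochhammer ℂ n).eval α‖ * ‖(ascPochhammer ℂ n).eval β‖ /
      ((n.factorial : ℝ) * n.factorial) := by
  rw [gterm_norm α β x hx]
  have h1 : x ^ n ≤ 1 := pow_le_one₀ hx hx1
  have h0 : (0:ℝ) ≤ ‖(ascPochhammer ℂ n).eval α‖ * ‖(ascPochhammer ℂ n).eval β‖ /
      ((n.factorial : ℝ) * n.factorial) := by positivity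
  nlinarith [pow_nonneg hx n]

lemma gterm_summable_norm (α β : ℂ) (h : α.re + β.re < 1) (x : ℝ) (hx : 0 ≤ x) (hx1 : x ≤ 1) :
    Summable (fun n => ‖gterm α β x n‖) :=
  Summable.of_nonneg_of_le (fun n => norm_nonneg _) (gterm_norm_le α β x hx hx1)
    (summable_pochratio α β h)

lemma gauss_bound (α β : ℂ) (h : α.re + β.re < 1) (x : ℝ) (hx : 0 ≤ x) (hx1 : x ≤ 1) :
    ‖GaussF α β 1 (x:ℂ)‖ ≤ Sab α β := by
  rw [gauss_eq_tsum]
  refine (norm_tsum_le_tsum_norm (gterm_summable_norm α β h x hx hx1)).trans ?_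
  exact Summable.tsum_le_tsum (gterm_norm_le α β x hx hx1) (gterm_summable_norm α β h x hx hx1)
    (summable_pochratio α β h)

lemma pc_diff (α : ℂ) (n : ℕ) :
    (ascPochhammer ℂ (n+1)).eval (α - 1) - (ascPochhammer ℂ (n+1)).eval α
      = -((n:ℂ)+1) * (ascPochhammer ℂ n).eval α := by
  rw [pc_prod (α-1) (n+1), pc_prod α (n+1), Finset.prod_range_succ', Finset.prod_range_succ]
  have e : ∀ i ∈ Finset.range n, (α - 1 + (↑(i+1) : ℂ)) = α + i := by
    intro i _; push_cast; ring
  rw [Finset.prod_congr rfl e, ← pc_prod]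
  push_cast
  ring

lemma gauss_diff_bound (α β : ℂ) (h : α.re + β.re < 1) (x : ℝ) (hx : 0 ≤ x) (hx1 : x ≤ 1) :
    ‖GaussF (α - 1) β 1 (x:ℂ) - GaussF α β 1 (x:ℂ)‖ ≤ S3ab α β * x := by
  have h' : (α - 1).re + β.re < 1 := by simp [Complex.sub_re]; linarith
  have hs1 : Summable (fun n => gterm (α-1) β x n) :=
    Summable.of_norm (gterm_summable_norm (α-1) β h' x hx hx1)
  have hs2 : Summable (fun n => gterm α β x n) :=
    Summable.of_norm (gterm_summable_norm α β h x hx hx1)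
  rw [gauss_eq_tsum, gauss_eq_tsum, ← Summable.tsum_sub hs1 hs2]
  set d : ℕ → ℂ := fun n => gterm (α-1) β x n - gterm α β x n with hd
  have hd0 : d 0 = 0 := by simp [hd, gterm]
  have hdsucc : ∀ n : ℕ, ‖d (n+1)‖ ≤ (‖(ascPochhammer ℂ n).eval α‖ * ‖(ascPochhammer ℂ (n+1)).eval β‖ /
      ((n.factorial : ℝ) * (n+1).factorial)) * x := by
    intro n
    have hnum : d (n+1) = -(((n+1:ℕ):ℂ)) * ((ascPochhammer ℂ n).eval α * (ascPochhammer ℂ (n+1)).eval β) /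
        ((((n+1).factorial : ℕ):ℂ) * (((n+1).factorial : ℕ):ℂ)) * (x:ℂ)^(n+1) := by
      simp only [hd, gterm, ascPochhammer_eval_one]
      rw [div_mul_eq_mul_div, div_mul_eq_mul_div, div_mul_eq_mul_div, ← sub_div]
      congr 1
      rw [← sub_mul, ← sub_mul, pc_diff]
      push_cast
      ring
    have hfn : (0:ℝ) < (n.factorial:ℝ) := by exact_mod_cast n.factorial_pos
    have hfn1 : (0:ℝ) < ((n+1).factorial:ℝ) := by exact_mod_cast (n+1).factorial_pos
    have hnorm : ‖d (n+1)‖ = (((n+1:ℕ):ℝ)) * (‖(ascPochhammer ℂ n).eval α‖ * ‖(ascPochhammer ℂ (n+1)).eval β‖) /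
        ((((n+1).factorial:ℕ):ℝ) * (((n+1).factorial:ℕ):ℝ)) * x^(n+1) := by
      rw [hnum]
      simp only [norm_mul, norm_div, norm_pow, norm_neg, Complex.norm_natCast,
        Complex.norm_real, Real.norm_eq_abs]
      rw [abs_of_nonneg hx]
    rw [hnorm]
    have hcoef : (((n+1:ℕ):ℝ)) * (‖(ascPochhammer ℂ n).eval α‖ * ‖(ascPochhammer ℂ (n+1)).eval β‖) /
        ((((n+1).factorial:ℕ):ℝ) * (((n+1).factorial:ℕ):ℝ))
        = ‖(ascPochhammer ℂ n).eval α‖ * ‖(ascPochhammer ℂ (n+1)).eval β‖ /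
          ((n.factorial : ℝ) * (n+1).factorial) := by
      rw [Nat.factorial_succ]
      push_cast
      field_simp
    rw [hcoef]
    have hxp : x^(n+1) ≤ x := by
      calc x^(n+1) = x * x^n := by ring
        _ ≤ x * 1 := by
            apply mul_le_mul_of_nonneg_left (pow_le_one₀ hx hx1) hx
        _ = x := by ring
    apply mul_le_mul_of_nonneg_left hxp (by positivity)
  have hsum3 : Summable (fun n : ℕ => (‖(ascPochhammer ℂ n).eval α‖ * ‖(ascPochhammer ℂ (n+1)).eval β‖ /
      ((n.factorial : ℝ) * (n+1).factorial)) * x) := (summable_pochratio' α β h).mul_right x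
  have hsum' : Summable (fun n => ‖d (n+1)‖) :=
    Summable.of_nonneg_of_le (fun n => norm_nonneg _) hdsucc hsum3
  have hsumd : Summable (fun n => ‖d n‖) := by
    exact (summable_nat_add_iff (f := fun n => ‖d n‖) 1).mp hsum'
  calc ‖∑' n, d n‖ ≤ ∑' n, ‖d n‖ := norm_tsum_le_tsum_norm hsumd
    _ = ‖d 0‖ + ∑' n, ‖d (n+1)‖ := Summable.tsum_eq_zero_add hsumd
    _ = ∑' n, ‖d (n+1)‖ := by rw [hd0]; simp
    _ ≤ ∑' n : ℕ, (‖(ascPochhammer ℂ n).eval α‖ * ‖(ascPochhammer ℂ (n+1)).eval β‖ /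
      ((n.factorial : ℝ) * (n+1).factorial)) * x := Summable.tsum_le_tsum hdsucc hsum' hsum3
    _ = S3ab α β * x := by rw [tsum_mul_right]; rfl




noncomputable def K1c (M : ℂ) : ℝ := ‖1+2*M‖ * S3ab (1/2 - M) (1/2 - M)
noncomputable def K2c (M : ℂ) : ℝ :=
  ‖M‖ * Sab (1/2 - M) (1/2 - M) + ‖1/2+M‖ * Sab (1/2 - M - 1) (1/2 - M)

lemma K1c_nonneg (M : ℂ) : 0 ≤ K1c M := mul_nonneg (norm_nonneg _) (S3ab_nonneg _ _)
lemma K2c_nonneg (M : ℂ) : 0 ≤ K2c M :=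
  add_nonneg (mul_nonneg (norm_nonneg _) (Sab_nonneg _ _))
    (mul_nonneg (norm_nonneg _) (Sab_nonneg _ _))

lemma bracket_bound (M : ℂ) (hM : 0 < M.re) (z y : ℝ) (hz : 1 < z) (hy0 : 0 < y) (hyz : y < z-1) :
    Norm.norm
      ((((z - z ^ 2 : ℝ) : ℂ) + M * ((1 - z ^ 2 - y ^ 2 : ℝ) : ℂ)) *
          GaussF (1/2 - M) (1/2 - M) 1
            ((((z - 1) ^ 2 - y ^ 2) / ((z + 1) ^ 2 - y ^ 2) : ℝ) : ℂ)
        + ((z ^ 2 - 1 + y ^ 2 : ℝ) : ℂ) * (1/2 + M) *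
          GaussF (-(1/2) - M) (1/2 - M) 1
            ((((z - 1) ^ 2 - y ^ 2) / ((z + 1) ^ 2 - y ^ 2) : ℝ) : ℂ))
      ≤ ((z-1)^2 - y^2) * (K1c M * ((z^2 - z)/((z+1)^2 - y^2)) + K2c M) := by
  have hu : (0:ℝ) < (z-1)^2 - y^2 := by nlinarith
  have hv : (0:ℝ) < (z+1)^2 - y^2 := by nlinarith
  have huv : (z-1)^2 - y^2 < (z+1)^2 - y^2 := by nlinarith
  set α : ℂ := 1/2 - M with hα
  set x : ℝ := ((z - 1) ^ 2 - y ^ 2) / ((z + 1) ^ 2 - y ^ 2) with hx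
  have hx0 : 0 ≤ x := le_of_lt (div_pos hu hv)
  have hx1 : x ≤ 1 := le_of_lt ((div_lt_one hv).mpr huv)
  have hcond : α.re + α.re < 1 := by
    rw [hα]; simp [Complex.sub_re, Complex.div_re]; linarith
  set F1 : ℂ := GaussF α α 1 (x:ℂ) with hF1
  set F2 : ℂ := GaussF (α - 1) α 1 (x:ℂ) with hF2
  have hneg : (-(1/2) - M : ℂ) = α - 1 := by rw [hα]; ring
  have hiden :
      (((z - z ^ 2 : ℝ) : ℂ) + M * ((1 - z ^ 2 - y ^ 2 : ℝ) : ℂ)) * F1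
        + ((z ^ 2 - 1 + y ^ 2 : ℝ) : ℂ) * (1/2 + M) * F2
      = ((z^2 - z : ℝ) : ℂ) * (1+2*M) * (F2 - F1)
        + (((z-1)^2 - y^2 : ℝ) : ℂ) * (M * F1 - (1/2+M) * F2) := by
    push_cast
    ring
  rw [hneg, hiden]
  have h1 : ‖((z^2 - z : ℝ) : ℂ) * (1+2*M) * (F2 - F1)‖
      ≤ (z^2 - z) * ‖1+2*M‖ * (S3ab α α * x) := by
    rw [norm_mul, norm_mul, Complex.norm_real, Real.norm_eq_abs, abs_of_pos (by nlinarith)]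
    apply mul_le_mul_of_nonneg_left (gauss_diff_bound α α hcond x hx0 hx1)
    have : (0:ℝ) < z^2 - z := by nlinarith
    positivity
  have h2 : ‖(((z-1)^2 - y^2 : ℝ) : ℂ) * (M * F1 - (1/2+M) * F2)‖
      ≤ ((z-1)^2 - y^2) * K2c M := by
    rw [norm_mul, Complex.norm_real, Real.norm_eq_abs, abs_of_pos hu]
    apply mul_le_mul_of_nonneg_left _ hu.le
    calc ‖M * F1 - (1/2+M) * F2‖ ≤ ‖M * F1‖ + ‖(1/2+M) * F2‖ := norm_sub_le _ _
      _ = ‖M‖ * ‖F1‖ + ‖1/2+M‖ * ‖F2‖ := by rw [norm_mul, norm_mul]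
      _ ≤ ‖M‖ * Sab α α + ‖1/2+M‖ * Sab (α-1) α := by
          have hb1 := gauss_bound α α hcond x hx0 hx1
          have hcond' : (α-1).re + α.re < 1 := by
            simp [Complex.sub_re]; linarith
          have hb2 := gauss_bound (α-1) α hcond' x hx0 hx1
          gcongr
      _ = K2c M := by rw [K2c, hα]
  calc Norm.norm _ ≤ _ := (norm_add_le _ _)
    _ ≤ (z^2 - z) * ‖1+2*M‖ * (S3ab α α * x) + ((z-1)^2 - y^2) * K2c M := add_le_add h1 h2
    _ = ((z-1)^2 - y^2) * (K1c M * ((z^2 - z)/((z+1)^2 - y^2)) + K2c M) := by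
        rw [K1c, hα, hx]
        field_simp


lemma rpow_near {b x : ℝ} (hb : 0 < b) (h1 : b/2 ≤ x) (h2 : x ≤ 2*b) (q : ℝ) :
    x^q ≤ 2^|q| * b^q := by
  have hx : 0 < x := lt_of_lt_of_le (by linarith) h1
  rcases le_or_gt 0 q with hq | hq
  · rw [abs_of_nonneg hq]
    calc x^q ≤ (2*b)^q := Real.rpow_le_rpow hx.le h2 hq
      _ = 2^q * b^q := Real.mul_rpow (by norm_num) hb.le
  · rw [abs_of_neg hq]
    calc x^q ≤ (b/2)^q := Real.rpow_le_rpow_of_nonpos (by linarith) h1 hq.le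
      _ = 2^(-q) * b^q := by
          rw [div_eq_mul_inv, mul_comm, Real.mul_rpow (by norm_num) hb.le,
            Real.inv_rpow (by norm_num), ← Real.rpow_neg (by norm_num)]

lemma int_rpow_Ioo (a : ℝ) (ha : -1 < a) (T : ℝ) (hT : 0 < T) :
    ∫ y in Set.Ioo (0:ℝ) T, y^a = T^(1+a)/(1+a) := by
  rw [← MeasureTheory.integral_Ioc_eq_integral_Ioo, ← intervalIntegral.integral_of_le hT.le,
    integral_rpow (Or.inl ha), Real.zero_rpow (by linarith), sub_zero, add_comm a 1]

lemma int_rpow_interval (a : ℝ) (ha : -1 < a) (T : ℝ) (hT : 0 < T) :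
    ∫ y in (0:ℝ)..T, y^a = T^(1+a)/(1+a) := by
  rw [integral_rpow (Or.inl ha), Real.zero_rpow (by linarith), sub_zero, add_comm a 1]

lemma integrableOn_rpow_Ioc (a : ℝ) (ha : -1 < a) (T : ℝ) (hT : 0 < T) :
    IntegrableOn (fun y : ℝ => y^a) (Set.Ioc 0 T) volume := by
  have := intervalIntegral.intervalIntegrable_rpow' (a := 0) (b := T) ha
  exact (intervalIntegrable_iff_integrableOn_Ioc_of_le hT.le).mp this




set_option maxHeartbeats 1000000 in
lemma pointwise_bound (a : ℝ) (M : ℂ) (hM : 0 < M.re) (z y : ℝ) (hz : 1 < z)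
    (hy0 : 0 < y) (hyz : y < z - 1) :
    y ^ a * ((z + 1) ^ 2 - y ^ 2) ^ M.re *
        (((z - 1) ^ 2 - y ^ 2) * Real.sqrt ((z + 1) ^ 2 - y ^ 2))⁻¹ *
        Norm.norm
          ((((z - z ^ 2 : ℝ) : ℂ) + M * ((1 - z ^ 2 - y ^ 2 : ℝ) : ℂ)) *
              GaussF (1/2 - M) (1/2 - M) 1
                ((((z - 1) ^ 2 - y ^ 2) / ((z + 1) ^ 2 - y ^ 2) : ℝ) : ℂ)
            + ((z ^ 2 - 1 + y ^ 2 : ℝ) : ℂ) * (1/2 + M) *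
              GaussF (-(1/2) - M) (1/2 - M) 1
                ((((z - 1) ^ 2 - y ^ 2) / ((z + 1) ^ 2 - y ^ 2) : ℝ) : ℂ))
      ≤ (K1c M * (z^2-z) * 2^|M.re-3/2| * (z+1)^(M.re-3/2)) * (y^a * (z+1-y)^(M.re-3/2))
        + (K2c M * max ((2*(z+1))^(M.re-1/2)) (((z+1)^2)^(M.re-1/2))) * y^a := by
  have hz1 : (0:ℝ) < z + 1 := by linarith
  have hu : (0:ℝ) < (z-1)^2 - y^2 := by nlinarith
  have hv : (0:ℝ) < (z+1)^2 - y^2 := by nlinarith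
  have hsv : (0:ℝ) < Real.sqrt ((z+1)^2 - y^2) := Real.sqrt_pos.mpr hv
  have hya : (0:ℝ) ≤ y^a := Real.rpow_nonneg hy0.le a
  have hw0 : (0:ℝ) ≤ z^2 - z := by nlinarith
  have hfac : (0:ℝ) ≤ y ^ a * ((z + 1) ^ 2 - y ^ 2) ^ M.re *
      (((z - 1) ^ 2 - y ^ 2) * Real.sqrt ((z + 1) ^ 2 - y ^ 2))⁻¹ := by positivity
  refine (mul_le_mul_of_nonneg_left (bracket_bound M hM z y hz hy0 hyz) hfac).trans ?_
  have hsqrt_eq : Real.sqrt ((z+1)^2 - y^2) = ((z+1)^2 - y^2)^((1:ℝ)/2) :=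
    Real.sqrt_eq_rpow _
  have e1 : ((z+1)^2 - y^2) ^ M.re * (((z+1)^2 - y^2)^((1:ℝ)/2))⁻¹
      = ((z+1)^2 - y^2)^(M.re - 1/2) := by
    rw [← Real.rpow_neg hv.le, ← Real.rpow_add hv]
    congr 1; try ring
  have e2 : ((z+1)^2 - y^2)^(M.re - 1/2) * (((z+1)^2 - y^2))⁻¹
      = ((z+1)^2 - y^2)^(M.re - 3/2) := by
    rw [← Real.rpow_neg_one ((z+1)^2 - y^2), ← Real.rpow_add hv]
    congr 1; try ring
  have collapse : (y ^ a * ((z + 1) ^ 2 - y ^ 2) ^ M.re *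
        (((z - 1) ^ 2 - y ^ 2) * Real.sqrt ((z + 1) ^ 2 - y ^ 2))⁻¹) *
        (((z-1)^2 - y^2) * (K1c M * ((z^2 - z)/((z+1)^2 - y^2)) + K2c M))
      = K1c M * (z^2-z) * (y^a * ((z+1)^2 - y^2)^(M.re - 3/2))
        + K2c M * (y^a * ((z+1)^2 - y^2)^(M.re - 1/2)) := by
    rw [hsqrt_eq, ← e2, ← e1]
    field_simp
  rw [collapse]
  have s4 : ((z+1)^2 - y^2)^(M.re - 3/2) ≤ 2^|M.re-3/2| * (z+1)^(M.re-3/2) * (z+1-y)^(M.re-3/2) := by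
    have hfact : (z+1)^2 - y^2 = (z+1-y) * (z+1+y) := by ring
    have hy1 : (0:ℝ) < z+1-y := by linarith
    have hy2 : (0:ℝ) < z+1+y := by linarith
    rw [hfact, Real.mul_rpow hy1.le hy2.le]
    have hnear := rpow_near (b := z+1) (x := z+1+y) hz1 (by linarith) (by linarith) (M.re-3/2)
    calc (z+1-y)^(M.re-3/2) * (z+1+y)^(M.re-3/2)
        ≤ (z+1-y)^(M.re-3/2) * (2^|M.re-3/2| * (z+1)^(M.re-3/2)) :=
          mul_le_mul_of_nonneg_left hnear (Real.rpow_nonneg hy1.le _)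
      _ = 2^|M.re-3/2| * (z+1)^(M.re-3/2) * (z+1-y)^(M.re-3/2) := by ring
  have s5 : ((z+1)^2 - y^2)^(M.re - 1/2) ≤ max ((2*(z+1))^(M.re-1/2)) (((z+1)^2)^(M.re-1/2)) := by
    rcases le_or_gt (M.re - 1/2) 0 with he | he
    · refine le_trans ?_ (le_max_left _ _)
      apply Real.rpow_le_rpow_of_nonpos (by linarith) (by nlinarith) he
    · refine le_trans ?_ (le_max_right _ _)
      apply Real.rpow_le_rpow (by linarith) (by nlinarith) he.le
  have h1 : (0:ℝ) ≤ K1c M * (z^2-z) := mul_nonneg (K1c_nonneg M) hw0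
  calc K1c M * (z^2-z) * (y^a * ((z+1)^2 - y^2)^(M.re - 3/2))
        + K2c M * (y^a * ((z+1)^2 - y^2)^(M.re - 1/2))
      ≤ K1c M * (z^2-z) * (y^a * (2^|M.re-3/2| * (z+1)^(M.re-3/2) * (z+1-y)^(M.re-3/2)))
        + K2c M * (y^a * max ((2*(z+1))^(M.re-1/2)) (((z+1)^2)^(M.re-1/2))) := by
        gcongr
        exact K2c_nonneg M
    _ = (K1c M * (z^2-z) * 2^|M.re-3/2| * (z+1)^(M.re-3/2)) * (y^a * (z+1-y)^(M.re-3/2))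
        + (K2c M * max ((2*(z+1))^(M.re-1/2)) (((z+1)^2)^(M.re-1/2))) * y^a := by ring




-- integrability of y^a * (z+1-y)^q on Ioc 0 (z-1)
lemma integrableOn_h (a : ℝ) (ha : -1 < a) (z q : ℝ) (hz : 1 < z) :
    IntegrableOn (fun y : ℝ => y^a * (z+1-y)^q) (Set.Ioc 0 (z-1)) volume := by
  have hT : (0:ℝ) < z - 1 := by linarith
  set mx := max ((z+1)^q) (2^q) with hmx
  have hmx0 : 0 ≤ mx := le_trans (Real.rpow_nonneg (by linarith) q) (le_max_left _ _)
  have hcont : ContinuousOn (fun y : ℝ => y^a * (z+1-y)^q) (Set.Ioc 0 (z-1)) := by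
    apply ContinuousOn.mul
    · exact ContinuousOn.rpow_const continuousOn_id (fun y hy => Or.inl (ne_of_gt hy.1))
    · refine ContinuousOn.rpow_const (continuousOn_const.sub continuousOn_id) (fun y hy => Or.inl ?_)
      have hpos : (0:ℝ) < z+1-y := by nlinarith [hy.2]
      exact hpos.ne'
  apply Integrable.mono ((integrableOn_rpow_Ioc a ha (z-1) hT).const_mul mx)
    (hcont.aestronglyMeasurable measurableSet_Ioc)
  rw [ae_restrict_iff' measurableSet_Ioc]
  apply ae_of_all
  intro y hy
  have hy0 : 0 < y := hy.1
  have hy2 : y ≤ z - 1 := hy.2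
  have h2 : (0:ℝ) < z+1-y := by linarith
  have hya : (0:ℝ) ≤ y^a := Real.rpow_nonneg hy0.le a
  have hb : (z+1-y)^q ≤ mx := by
    rcases le_or_gt 0 q with hq | hq
    · refine le_trans ?_ (le_max_left _ _)
      exact Real.rpow_le_rpow h2.le (by linarith) hq
    · refine le_trans ?_ (le_max_right _ _)
      exact Real.rpow_le_rpow_of_nonpos (by norm_num) (by linarith) hq.le
  rw [Real.norm_eq_abs, Real.norm_eq_abs, abs_of_nonneg (by positivity)]
  calc y^a * (z+1-y)^q ≤ y^a * mx := mul_le_mul_of_nonneg_left hb hya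
    _ = mx * y^a := by ring
    _ ≤ |mx * y^a| := le_abs_self _

set_option maxHeartbeats 1000000 in
lemma integral_est (a : ℝ) (ha : a > -1) (M : ℂ) (hM : 0 < M.re) (z : ℝ) (hz : 1 < z) :
    (∫ y in Set.Ioo (0:ℝ) (z - 1),
        y ^ a * ((z + 1) ^ 2 - y ^ 2) ^ M.re *
          (((z - 1) ^ 2 - y ^ 2) * Real.sqrt ((z + 1) ^ 2 - y ^ 2))⁻¹ *
          Norm.norm
            ((((z - z ^ 2 : ℝ) : ℂ) + M * ((1 - z ^ 2 - y ^ 2 : ℝ) : ℂ)) *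
                GaussF (1/2 - M) (1/2 - M) 1
                  ((((z - 1) ^ 2 - y ^ 2) / ((z + 1) ^ 2 - y ^ 2) : ℝ) : ℂ)
              + ((z ^ 2 - 1 + y ^ 2 : ℝ) : ℂ) * (1/2 + M) *
                GaussF (-(1/2) - M) (1/2 - M) 1
                  ((((z - 1) ^ 2 - y ^ 2) / ((z + 1) ^ 2 - y ^ 2) : ℝ) : ℂ)))
      ≤ (K1c M * (z^2-z) * 2^|M.re-3/2| * (z+1)^(M.re-3/2)) *
          (2^|M.re-3/2| * (z+1)^(M.re-3/2) * ((z-1)^(1+a)/(1+a))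
            + 2^|a| * (z-1)^a * (∫ t in (2:ℝ)..((z+3)/2), t^(M.re-3/2)))
        + (K2c M * max ((2*(z+1))^(M.re-1/2)) (((z+1)^2)^(M.re-1/2))) * ((z-1)^(1+a)/(1+a)) := by
  have hT : (0:ℝ) < z - 1 := by linarith
  have hz1 : (0:ℝ) < z + 1 := by linarith
  have ha' : (-1:ℝ) < a := ha
  set q := M.re - 3/2 with hq
  set W := max ((2*(z+1))^(M.re-1/2)) (((z+1)^2)^(M.re-1/2)) with hW
  set c1 := K1c M * (z^2-z) * 2^|q| * (z+1)^q with hc1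
  set c2 := K2c M * W with hc2
  have hW0 : 0 ≤ W := le_trans (Real.rpow_nonneg (by linarith) _) (le_max_left _ _)
  have hw0 : (0:ℝ) ≤ z^2 - z := by nlinarith
  have hc10 : 0 ≤ c1 := by
    have := K1c_nonneg M; positivity
  have hc20 : 0 ≤ c2 := mul_nonneg (K2c_nonneg M) hW0
  have hIa : IntegrableOn (fun y : ℝ => y^a) (Set.Ioc 0 (z-1)) volume :=
    integrableOn_rpow_Ioc a ha' (z-1) hT
  have hIh : IntegrableOn (fun y : ℝ => y^a * (z+1-y)^q) (Set.Ioc 0 (z-1)) volume :=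
    integrableOn_h a ha' z q hz
  have hbase : IntegrableOn (fun y : ℝ => c1 * (y^a * (z+1-y)^q) + c2 * y^a)
      (Set.Ioc 0 (z-1)) volume := (hIh.const_mul c1).add (hIa.const_mul c2)
  have hIg : IntegrableOn (fun y : ℝ => c1 * (y^a * (z+1-y)^q) + c2 * y^a)
      (Set.Ioo 0 (z-1)) volume := hbase.mono_set Set.Ioo_subset_Ioc_self
  -- step 1: compare with g
  have step1 : (∫ y in Set.Ioo (0:ℝ) (z - 1),
        y ^ a * ((z + 1) ^ 2 - y ^ 2) ^ M.re *
          (((z - 1) ^ 2 - y ^ 2) * Real.sqrt ((z + 1) ^ 2 - y ^ 2))⁻¹ *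
          Norm.norm
            ((((z - z ^ 2 : ℝ) : ℂ) + M * ((1 - z ^ 2 - y ^ 2 : ℝ) : ℂ)) *
                GaussF (1/2 - M) (1/2 - M) 1
                  ((((z - 1) ^ 2 - y ^ 2) / ((z + 1) ^ 2 - y ^ 2) : ℝ) : ℂ)
              + ((z ^ 2 - 1 + y ^ 2 : ℝ) : ℂ) * (1/2 + M) *
                GaussF (-(1/2) - M) (1/2 - M) 1
                  ((((z - 1) ^ 2 - y ^ 2) / ((z + 1) ^ 2 - y ^ 2) : ℝ) : ℂ)))
      ≤ ∫ y in Set.Ioo (0:ℝ) (z-1), (c1 * (y^a * (z+1-y)^q) + c2 * y^a) := by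
    apply integral_mono_of_nonneg _ hIg
    · filter_upwards [ae_restrict_mem measurableSet_Ioo] with y hy
      exact pointwise_bound a M hM z y hz hy.1 hy.2
    · filter_upwards [ae_restrict_mem measurableSet_Ioo] with y hy
      have hu : (0:ℝ) < (z-1)^2 - y^2 := by nlinarith [hy.1, hy.2]
      have hv : (0:ℝ) < (z+1)^2 - y^2 := by nlinarith [hy.1, hy.2]
      have hsv : (0:ℝ) ≤ Real.sqrt ((z+1)^2 - y^2) := Real.sqrt_nonneg _
      have hya : (0:ℝ) ≤ y^a := Real.rpow_nonneg hy.1.le a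
      have := norm_nonneg
        ((((z - z ^ 2 : ℝ) : ℂ) + M * ((1 - z ^ 2 - y ^ 2 : ℝ) : ℂ)) *
                GaussF (1/2 - M) (1/2 - M) 1
                  ((((z - 1) ^ 2 - y ^ 2) / ((z + 1) ^ 2 - y ^ 2) : ℝ) : ℂ)
              + ((z ^ 2 - 1 + y ^ 2 : ℝ) : ℂ) * (1/2 + M) *
                GaussF (-(1/2) - M) (1/2 - M) 1
                  ((((z - 1) ^ 2 - y ^ 2) / ((z + 1) ^ 2 - y ^ 2) : ℝ) : ℂ))
      positivity
  refine step1.trans ?_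
  -- step 2: split the integral
  have step2 : (∫ y in Set.Ioo (0:ℝ) (z-1), (c1 * (y^a * (z+1-y)^q) + c2 * y^a))
      = c1 * (∫ y in Set.Ioo (0:ℝ) (z-1), y^a * (z+1-y)^q)
        + c2 * (∫ y in Set.Ioo (0:ℝ) (z-1), y^a) := by
    rw [integral_add ((hIh.mono_set Set.Ioo_subset_Ioc_self).const_mul c1)
      ((hIa.mono_set Set.Ioo_subset_Ioc_self).const_mul c2),
      integral_const_mul, integral_const_mul]
  rw [step2, int_rpow_Ioo a ha' (z-1) hT]
  -- step 3: bound the h-integral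
  have hIh_int : (∫ y in Set.Ioo (0:ℝ) (z-1), y^a * (z+1-y)^q)
      ≤ 2^|q| * (z+1)^q * ((z-1)^(1+a)/(1+a))
        + 2^|a| * (z-1)^a * (∫ t in (2:ℝ)..((z+3)/2), t^q) := by
    have hio : (∫ y in Set.Ioo (0:ℝ) (z-1), y^a * (z+1-y)^q)
        = ∫ y in (0:ℝ)..(z-1), y^a * (z+1-y)^q := by
      rw [intervalIntegral.integral_of_le hT.le, integral_Ioc_eq_integral_Ioo]
    have hi1 : IntervalIntegrable (fun y : ℝ => y^a * (z+1-y)^q) volume 0 ((z-1)/2) := by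
      rw [intervalIntegrable_iff_integrableOn_Ioc_of_le (by linarith)]
      exact hIh.mono_set (Set.Ioc_subset_Ioc_right (by linarith))
    have hi2 : IntervalIntegrable (fun y : ℝ => y^a * (z+1-y)^q) volume ((z-1)/2) (z-1) := by
      rw [intervalIntegrable_iff_integrableOn_Ioc_of_le (by linarith)]
      exact hIh.mono_set (Set.Ioc_subset_Ioc_left (by linarith))
    rw [hio, ← intervalIntegral.integral_add_adjacent_intervals hi1 hi2]
    have b1 : (∫ y in (0:ℝ)..((z-1)/2), y^a * (z+1-y)^q)
        ≤ 2^|q| * (z+1)^q * ((z-1)^(1+a)/(1+a)) := by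
      have hmono : (∫ y in (0:ℝ)..((z-1)/2), y^a * (z+1-y)^q)
          ≤ ∫ y in (0:ℝ)..((z-1)/2), (2^|q| * (z+1)^q) * y^a := by
        apply intervalIntegral.integral_mono_on (by linarith) hi1
        · rw [intervalIntegrable_iff_integrableOn_Ioc_of_le (by linarith)]
          exact (integrableOn_rpow_Ioc a ha' ((z-1)/2) (by linarith)).const_mul _
        · intro y hy
          obtain ⟨hy0, hy2⟩ := hy
          have hya : (0:ℝ) ≤ y^a := Real.rpow_nonneg hy0 a
          have hb : (z+1-y)^q ≤ 2^|q| * (z+1)^q :=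
            rpow_near (b := z+1) (x := z+1-y) hz1 (by linarith) (by linarith) q
          calc y^a * (z+1-y)^q ≤ y^a * (2^|q| * (z+1)^q) := mul_le_mul_of_nonneg_left hb hya
            _ = (2^|q| * (z+1)^q) * y^a := by ring
      refine hmono.trans ?_
      rw [intervalIntegral.integral_const_mul, int_rpow_interval a ha' ((z-1)/2) (by linarith)]
      have hle : ((z-1)/2)^(1+a) ≤ (z-1)^(1+a) :=
        Real.rpow_le_rpow (by linarith) (by linarith) (by linarith)
      apply mul_le_mul_of_nonneg_left _ (by positivity : (0:ℝ) ≤ 2^|q| * (z+1)^q)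
      exact div_le_div_of_nonneg_right hle (by linarith)
    have b2 : (∫ y in ((z-1)/2)..(z-1), y^a * (z+1-y)^q)
        ≤ 2^|a| * (z-1)^a * (∫ t in (2:ℝ)..((z+3)/2), t^q) := by
      have hcont2 : ContinuousOn (fun y : ℝ => (z+1-y)^q) (Set.uIcc ((z-1)/2) (z-1)) := by
        apply ContinuousOn.rpow_const (continuousOn_const.sub continuousOn_id)
        intro y hy
        rw [Set.uIcc_of_le (by linarith)] at hy
        have hpos : (0:ℝ) < z+1-y := by nlinarith [hy.2]
        exact Or.inl hpos.ne'
      have hint2 : IntervalIntegrable (fun y : ℝ => (z+1-y)^q) volume ((z-1)/2) (z-1) :=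
        hcont2.intervalIntegrable
      have hmono : (∫ y in ((z-1)/2)..(z-1), y^a * (z+1-y)^q)
          ≤ ∫ y in ((z-1)/2)..(z-1), (2^|a| * (z-1)^a) * (z+1-y)^q := by
        apply intervalIntegral.integral_mono_on (by linarith) hi2 (hint2.const_mul _)
        intro y hy
        obtain ⟨hy1, hy2⟩ := hy
        have hzy : (0:ℝ) < z+1-y := by linarith
        have hb : y^a ≤ 2^|a| * (z-1)^a :=
          rpow_near (b := z-1) (x := y) hT (by linarith) (by linarith) a
        exact mul_le_mul_of_nonneg_right hb (Real.rpow_nonneg hzy.le q)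
      refine hmono.trans ?_
      rw [intervalIntegral.integral_const_mul]
      have hsub : (∫ y in ((z-1)/2)..(z-1), (z+1-y)^q) = ∫ t in (2:ℝ)..((z+3)/2), t^q := by
        have := intervalIntegral.integral_comp_sub_left (a := (z-1)/2) (b := z-1)
          (fun t : ℝ => t^q) (z+1)
        rw [this]
        have e1 : z+1-(z-1) = 2 := by ring
        have e2 : z+1-(z-1)/2 = (z+3)/2 := by ring
        rw [e1, e2]
      rw [hsub]
    linarith [b1, b2]
  -- final assembly
  have final : c1 * (∫ y in Set.Ioo (0:ℝ) (z-1), y^a * (z+1-y)^q)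
      ≤ c1 * (2^|q| * (z+1)^q * ((z-1)^(1+a)/(1+a))
        + 2^|a| * (z-1)^a * (∫ t in (2:ℝ)..((z+3)/2), t^q)) :=
    mul_le_mul_of_nonneg_left hIh_int hc10
  linarith [final]



lemma J_bound_lt (q z : ℝ) (hz : 1 < z) (hq1 : q + 1 < 0) :
    (∫ t in (2:ℝ)..((z+3)/2), t^q) ≤ 2^(q+1)/(-(q+1)) := by
  have hne : q ≠ -1 := by intro h; rw [h] at hq1; linarith
  have h0 : (0:ℝ) ∉ Set.uIcc 2 ((z+3)/2) := by
    rw [Set.uIcc_of_le (by linarith)]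
    intro hmem
    exact absurd hmem.1 (by norm_num)
  rw [integral_rpow (Or.inr ⟨hne, h0⟩)]
  have hA0 : (0:ℝ) ≤ ((z+3)/2)^(q+1) := Real.rpow_nonneg (by linarith) _
  rw [div_le_iff_of_neg (by linarith : q+1 < 0)]
  have hqq : (q+1)/(-(q+1)) = -1 := by
    rw [div_eq_iff (by linarith : -(q+1) ≠ 0)]; ring
  have he : 2^(q+1)/(-(q+1)) * (q+1) = -(2^(q+1)) := by
    rw [div_mul_eq_mul_div, mul_div_assoc, hqq]; ring
  rw [he]
  linarith

lemma J_bound_gt (q z : ℝ) (hz : 1 < z) (hq1 : 0 < q + 1) :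
    (∫ t in (2:ℝ)..((z+3)/2), t^q) ≤ (z+1)^(q+1)/(q+1) := by
  have hne : q ≠ -1 := by intro h; rw [h] at hq1; linarith
  have h0 : (0:ℝ) ∉ Set.uIcc 2 ((z+3)/2) := by
    rw [Set.uIcc_of_le (by linarith)]
    intro hmem
    exact absurd hmem.1 (by norm_num)
  rw [integral_rpow (Or.inr ⟨hne, h0⟩)]
  have hB0 : (0:ℝ) ≤ 2^(q+1) := Real.rpow_nonneg (by norm_num) _
  have hle : ((z+3)/2)^(q+1) ≤ (z+1)^(q+1) :=
    Real.rpow_le_rpow (by linarith) (by linarith) hq1.le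
  rw [div_le_div_iff₀ (by linarith) (by linarith)]
  nlinarith

set_option maxHeartbeats 800000 in
lemma caseA (a : ℝ) (ha : a > -1) (M : ℂ) (hM : 0 < M.re) (hp : M.re < 1/2) :
    ∃ C > 0, ∀ z : ℝ, 1 < z →
      (K1c M * (z^2-z) * 2^|M.re-3/2| * (z+1)^(M.re-3/2)) *
          (2^|M.re-3/2| * (z+1)^(M.re-3/2) * ((z-1)^(1+a)/(1+a))
            + 2^|a| * (z-1)^a * (∫ t in (2:ℝ)..((z+3)/2), t^(M.re-3/2)))
        + (K2c M * max ((2*(z+1))^(M.re-1/2)) (((z+1)^2)^(M.re-1/2))) * ((z-1)^(1+a)/(1+a))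
      ≤ C * (z-1)^(1+a) * (z+1)^(M.re-1/2) := by
  set q := M.re - 3/2 with hq
  set cq := 2^(q+1)/(-(q+1)) with hcq
  have hq1 : q + 1 < 0 := by rw [hq]; linarith
  have hcq0 : 0 ≤ cq := by
    rw [hcq]
    apply div_nonneg (Real.rpow_nonneg (by norm_num) _) (by linarith)
  have h1a : (0:ℝ) < 1 + a := by linarith
  refine ⟨K1c M * 2^|q| * 2^|q| / (1+a) + K1c M * 2^|q| * 2^|a| * cq + K2c M / (1+a) + 1, ?_, ?_⟩
  · have := K1c_nonneg M
    have := K2c_nonneg M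
    positivity
  intro z hz
  have hz1 : (0:ℝ) < z + 1 := by linarith
  have hz1' : (1:ℝ) ≤ z + 1 := by linarith
  have hT : (0:ℝ) < z - 1 := by linarith
  have hS : (0:ℝ) ≤ (z-1)^(1+a) := Real.rpow_nonneg hT.le _
  have hE : (0:ℝ) ≤ (z+1)^(M.re-1/2) := Real.rpow_nonneg hz1.le _
  have hJ := J_bound_lt q z hz hq1
  -- hA
  have h2 : z^2 - z ≤ (z+1)^((2:ℝ)) := by
    rw [show ((2:ℝ)) = ((2:ℕ):ℝ) by norm_num, Real.rpow_natCast]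
    nlinarith
  have hA : (z^2-z) * ((z+1)^q * (z+1)^q) ≤ (z+1)^(M.re-1/2) := by
    calc (z^2-z) * ((z+1)^q * (z+1)^q)
        ≤ (z+1)^((2:ℝ)) * ((z+1)^q * (z+1)^q) := by
          apply mul_le_mul_of_nonneg_right h2 (by positivity)
      _ = (z+1)^(2 + (q+q)) := by
          rw [← Real.rpow_add hz1 q q, ← Real.rpow_add hz1]
      _ ≤ (z+1)^(M.re-1/2) := by
          apply Real.rpow_le_rpow_of_exponent_le hz1'
          rw [hq]; linarith
  -- hW
  have hW : max ((2*(z+1))^(M.re-1/2)) (((z+1)^2)^(M.re-1/2)) ≤ (z+1)^(M.re-1/2) := by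
    apply max_le
    · exact Real.rpow_le_rpow_of_nonpos hz1 (by linarith) (by linarith)
    · have e : (((z+1)^2:ℝ))^(M.re-1/2) = (z+1)^(2*(M.re-1/2)) := by
        rw [← Real.rpow_natCast (z+1) 2, ← Real.rpow_mul hz1.le]
        norm_num
      rw [e]
      exact Real.rpow_le_rpow_of_exponent_le hz1' (by linarith)
  -- hB base
  have hbase : (z^2-z) * (z+1)^q * (z-1)^a ≤ (z-1)^(1+a) * (z+1)^(M.re-1/2) := by
    have e1 : (z^2-z) * (z+1)^q * (z-1)^a = (z*(z+1)^q) * ((z-1)*(z-1)^a) := by ring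
    have f1 : z*(z+1)^q ≤ (z+1)^(q+1) := by
      calc z*(z+1)^q ≤ (z+1)*(z+1)^q := by
            apply mul_le_mul_of_nonneg_right (by linarith) (Real.rpow_nonneg hz1.le q)
        _ = (z+1)^(q+1) := by rw [Real.rpow_add hz1, Real.rpow_one]; try ring
    have f2 : (z-1)*(z-1)^a = (z-1)^(1+a) := by
      rw [Real.rpow_add hT, Real.rpow_one]; try ring
    have f3 : (q+1 : ℝ) = M.re - 1/2 := by rw [hq]; ring
    rw [e1, f2]
    have : z*(z+1)^q ≤ (z+1)^(M.re-1/2) := by rw [← f3]; exact f1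
    calc (z*(z+1)^q) * (z-1)^(1+a) ≤ (z+1)^(M.re-1/2) * (z-1)^(1+a) :=
          mul_le_mul_of_nonneg_right this hS
      _ = (z-1)^(1+a) * (z+1)^(M.re-1/2) := by ring
  -- three term bounds
  have hK1 := K1c_nonneg M
  have hK2 := K2c_nonneg M
  have t1 : K1c M * (z^2-z) * 2^|q| * (z+1)^q * (2^|q| * (z+1)^q * ((z-1)^(1+a)/(1+a)))
      ≤ (K1c M * 2^|q| * 2^|q| / (1+a)) * ((z-1)^(1+a) * (z+1)^(M.re-1/2)) := by
    have e : K1c M * (z^2-z) * 2^|q| * (z+1)^q * (2^|q| * (z+1)^q * ((z-1)^(1+a)/(1+a)))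
        = (K1c M * 2^|q| * 2^|q| / (1+a) * (z-1)^(1+a)) * ((z^2-z)*((z+1)^q*(z+1)^q)) := by
      ring
    rw [e]
    have hc : 0 ≤ K1c M * 2^|q| * 2^|q| / (1+a) * (z-1)^(1+a) := by positivity
    calc _ ≤ (K1c M * 2^|q| * 2^|q| / (1+a) * (z-1)^(1+a)) * (z+1)^(M.re-1/2) :=
          mul_le_mul_of_nonneg_left hA hc
      _ = (K1c M * 2^|q| * 2^|q| / (1+a)) * ((z-1)^(1+a) * (z+1)^(M.re-1/2)) := by ring
  have t2 : K1c M * (z^2-z) * 2^|q| * (z+1)^q * (2^|a| * (z-1)^a * (∫ t in (2:ℝ)..((z+3)/2), t^q))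
      ≤ (K1c M * 2^|q| * 2^|a| * cq) * ((z-1)^(1+a) * (z+1)^(M.re-1/2)) := by
    have hP0 : 0 ≤ (z^2-z) * (z+1)^q * (z-1)^a := by
      have : (0:ℝ) ≤ z^2 - z := by nlinarith
      positivity
    have s1 : ((z^2-z) * (z+1)^q * (z-1)^a) * (∫ t in (2:ℝ)..((z+3)/2), t^q)
        ≤ ((z^2-z) * (z+1)^q * (z-1)^a) * cq := mul_le_mul_of_nonneg_left hJ hP0
    have s2 : ((z^2-z) * (z+1)^q * (z-1)^a) * cq
        ≤ ((z-1)^(1+a) * (z+1)^(M.re-1/2)) * cq := mul_le_mul_of_nonneg_right hbase hcq0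
    have e : K1c M * (z^2-z) * 2^|q| * (z+1)^q * (2^|a| * (z-1)^a * (∫ t in (2:ℝ)..((z+3)/2), t^q))
        = (K1c M * 2^|q| * 2^|a|) * (((z^2-z) * (z+1)^q * (z-1)^a) * (∫ t in (2:ℝ)..((z+3)/2), t^q)) := by
      ring
    rw [e]
    have hc : (0:ℝ) ≤ K1c M * 2^|q| * 2^|a| := by positivity
    calc (K1c M * 2^|q| * 2^|a|) * (((z^2-z) * (z+1)^q * (z-1)^a) * (∫ t in (2:ℝ)..((z+3)/2), t^q))
        ≤ (K1c M * 2^|q| * 2^|a|) * (((z-1)^(1+a) * (z+1)^(M.re-1/2)) * cq) :=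
          mul_le_mul_of_nonneg_left (s1.trans s2) hc
      _ = (K1c M * 2^|q| * 2^|a| * cq) * ((z-1)^(1+a) * (z+1)^(M.re-1/2)) := by ring
  have t3 : (K2c M * max ((2*(z+1))^(M.re-1/2)) (((z+1)^2)^(M.re-1/2))) * ((z-1)^(1+a)/(1+a))
      ≤ (K2c M / (1+a)) * ((z-1)^(1+a) * (z+1)^(M.re-1/2)) := by
    have e : (K2c M * max ((2*(z+1))^(M.re-1/2)) (((z+1)^2)^(M.re-1/2))) * ((z-1)^(1+a)/(1+a))
        = (K2c M / (1+a) * (z-1)^(1+a)) * (max ((2*(z+1))^(M.re-1/2)) (((z+1)^2)^(M.re-1/2))) := by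
      ring
    rw [e]
    have hc : 0 ≤ K2c M / (1+a) * (z-1)^(1+a) := by positivity
    calc _ ≤ (K2c M / (1+a) * (z-1)^(1+a)) * (z+1)^(M.re-1/2) :=
          mul_le_mul_of_nonneg_left hW hc
      _ = (K2c M / (1+a)) * ((z-1)^(1+a) * (z+1)^(M.re-1/2)) := by ring
  have hsplit : (K1c M * (z^2-z) * 2^|q| * (z+1)^q) *
          (2^|q| * (z+1)^q * ((z-1)^(1+a)/(1+a))
            + 2^|a| * (z-1)^a * (∫ t in (2:ℝ)..((z+3)/2), t^q))
        + (K2c M * max ((2*(z+1))^(M.re-1/2)) (((z+1)^2)^(M.re-1/2))) * ((z-1)^(1+a)/(1+a))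
      = K1c M * (z^2-z) * 2^|q| * (z+1)^q * (2^|q| * (z+1)^q * ((z-1)^(1+a)/(1+a)))
        + K1c M * (z^2-z) * 2^|q| * (z+1)^q * (2^|a| * (z-1)^a * (∫ t in (2:ℝ)..((z+3)/2), t^q))
        + (K2c M * max ((2*(z+1))^(M.re-1/2)) (((z+1)^2)^(M.re-1/2))) * ((z-1)^(1+a)/(1+a)) := by
    ring
  rw [hsplit]
  have hSE : (0:ℝ) ≤ (z-1)^(1+a) * (z+1)^(M.re-1/2) := mul_nonneg hS hE
  nlinarith [t1, t2, t3, hSE]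


set_option maxHeartbeats 800000 in
lemma caseB (a : ℝ) (ha : a > -1) (M : ℂ) (hM : 0 < M.re) (hp : 1/2 < M.re) :
    ∃ C > 0, ∀ z : ℝ, 1 < z →
      (K1c M * (z^2-z) * 2^|M.re-3/2| * (z+1)^(M.re-3/2)) *
          (2^|M.re-3/2| * (z+1)^(M.re-3/2) * ((z-1)^(1+a)/(1+a))
            + 2^|a| * (z-1)^a * (∫ t in (2:ℝ)..((z+3)/2), t^(M.re-3/2)))
        + (K2c M * max ((2*(z+1))^(M.re-1/2)) (((z+1)^2)^(M.re-1/2))) * ((z-1)^(1+a)/(1+a))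
      ≤ C * (z-1)^(1+a) * (z+1)^(2*M.re-1) := by
  set q := M.re - 3/2 with hq
  have hq1 : 0 < q + 1 := by rw [hq]; linarith
  have h1a : (0:ℝ) < 1 + a := by linarith
  have htwo : (0:ℝ) < 2^(M.re-1/2) := Real.rpow_pos_of_pos (by norm_num) _
  have htwo1 : (1:ℝ) ≤ 2^(M.re-1/2) := Real.one_le_rpow (by norm_num) (by linarith)
  refine ⟨K1c M * 2^|q| * 2^|q| / (1+a) + K1c M * 2^|q| * 2^|a| / (q+1)
      + K2c M * 2^(M.re-1/2) / (1+a) + 1, ?_, ?_⟩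
  · have := K1c_nonneg M
    have := K2c_nonneg M
    positivity
  intro z hz
  have hz1 : (0:ℝ) < z + 1 := by linarith
  have hz1' : (1:ℝ) ≤ z + 1 := by linarith
  have hT : (0:ℝ) < z - 1 := by linarith
  have hS : (0:ℝ) ≤ (z-1)^(1+a) := Real.rpow_nonneg hT.le _
  have hE : (0:ℝ) ≤ (z+1)^(2*M.re-1) := Real.rpow_nonneg hz1.le _
  have hJ := J_bound_gt q z hz hq1
  have h2 : z^2 - z ≤ (z+1)^((2:ℝ)) := by
    rw [show ((2:ℝ)) = ((2:ℕ):ℝ) by norm_num, Real.rpow_natCast]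
    nlinarith
  have hA : (z^2-z) * ((z+1)^q * (z+1)^q) ≤ (z+1)^(2*M.re-1) := by
    calc (z^2-z) * ((z+1)^q * (z+1)^q)
        ≤ (z+1)^((2:ℝ)) * ((z+1)^q * (z+1)^q) := by
          apply mul_le_mul_of_nonneg_right h2 (by positivity)
      _ = (z+1)^(2 + (q+q)) := by
          rw [← Real.rpow_add hz1 q q, ← Real.rpow_add hz1]
      _ ≤ (z+1)^(2*M.re-1) := by
          apply Real.rpow_le_rpow_of_exponent_le hz1'
          rw [hq]; linarith
  have hW : max ((2*(z+1))^(M.re-1/2)) (((z+1)^2)^(M.re-1/2))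
      ≤ 2^(M.re-1/2) * (z+1)^(2*M.re-1) := by
    apply max_le
    · rw [Real.mul_rpow (by norm_num) hz1.le]
      apply mul_le_mul_of_nonneg_left _ htwo.le
      exact Real.rpow_le_rpow_of_exponent_le hz1' (by linarith)
    · have e : (((z+1)^2:ℝ))^(M.re-1/2) = (z+1)^(2*(M.re-1/2)) := by
        rw [← Real.rpow_natCast (z+1) 2, ← Real.rpow_mul hz1.le]
        norm_num
      rw [e]
      have e2 : 2*(M.re-1/2) = 2*M.re-1 := by ring
      rw [e2]
      nlinarith [Real.rpow_nonneg hz1.le (2*M.re-1)]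
  have hbase : (z^2-z) * (z+1)^q * (z-1)^a * (z+1)^(q+1)
      ≤ (z-1)^(1+a) * (z+1)^(2*M.re-1) := by
    have e1 : (z^2-z) * (z+1)^q * (z-1)^a * (z+1)^(q+1)
        = (z*((z+1)^q*(z+1)^(q+1))) * ((z-1)*(z-1)^a) := by ring
    have f1 : z*((z+1)^q*(z+1)^(q+1)) ≤ (z+1)^(2*M.re-1) := by
      rw [← Real.rpow_add hz1 q (q+1)]
      calc z*(z+1)^(q+(q+1)) ≤ (z+1)*(z+1)^(q+(q+1)) := by
            apply mul_le_mul_of_nonneg_right (by linarith) (Real.rpow_nonneg hz1.le _)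
        _ = (z+1)^(1+(q+(q+1))) := by rw [Real.rpow_add hz1 1 (q+(q+1)), Real.rpow_one]
        _ = (z+1)^(2*M.re-1) := by congr 1; rw [hq]; ring
    have f2 : (z-1)*(z-1)^a = (z-1)^(1+a) := by
      rw [Real.rpow_add hT, Real.rpow_one]
    rw [e1, f2]
    calc z*((z+1)^q*(z+1)^(q+1)) * (z-1)^(1+a) ≤ (z+1)^(2*M.re-1) * (z-1)^(1+a) :=
          mul_le_mul_of_nonneg_right f1 hS
      _ = (z-1)^(1+a) * (z+1)^(2*M.re-1) := by ring
  have hK1 := K1c_nonneg M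
  have hK2 := K2c_nonneg M
  have t1 : K1c M * (z^2-z) * 2^|q| * (z+1)^q * (2^|q| * (z+1)^q * ((z-1)^(1+a)/(1+a)))
      ≤ (K1c M * 2^|q| * 2^|q| / (1+a)) * ((z-1)^(1+a) * (z+1)^(2*M.re-1)) := by
    have e : K1c M * (z^2-z) * 2^|q| * (z+1)^q * (2^|q| * (z+1)^q * ((z-1)^(1+a)/(1+a)))
        = (K1c M * 2^|q| * 2^|q| / (1+a) * (z-1)^(1+a)) * ((z^2-z)*((z+1)^q*(z+1)^q)) := by
      ring
    rw [e]
    have hc : 0 ≤ K1c M * 2^|q| * 2^|q| / (1+a) * (z-1)^(1+a) := by positivity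
    calc _ ≤ (K1c M * 2^|q| * 2^|q| / (1+a) * (z-1)^(1+a)) * (z+1)^(2*M.re-1) :=
          mul_le_mul_of_nonneg_left hA hc
      _ = (K1c M * 2^|q| * 2^|q| / (1+a)) * ((z-1)^(1+a) * (z+1)^(2*M.re-1)) := by ring
  have t2 : K1c M * (z^2-z) * 2^|q| * (z+1)^q * (2^|a| * (z-1)^a * (∫ t in (2:ℝ)..((z+3)/2), t^q))
      ≤ (K1c M * 2^|q| * 2^|a| / (q+1)) * ((z-1)^(1+a) * (z+1)^(2*M.re-1)) := by
    have hw0 : (0:ℝ) ≤ z^2 - z := by nlinarith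
    have hP0 : 0 ≤ (z^2-z) * (z+1)^q * (z-1)^a := by positivity
    have s1 : ((z^2-z) * (z+1)^q * (z-1)^a) * (∫ t in (2:ℝ)..((z+3)/2), t^q)
        ≤ ((z^2-z) * (z+1)^q * (z-1)^a) * ((z+1)^(q+1)/(q+1)) := mul_le_mul_of_nonneg_left hJ hP0
    have s2 : ((z^2-z) * (z+1)^q * (z-1)^a) * ((z+1)^(q+1)/(q+1))
        = (1/(q+1)) * ((z^2-z) * (z+1)^q * (z-1)^a * (z+1)^(q+1)) := by ring
    have s3 : (1/(q+1)) * ((z^2-z) * (z+1)^q * (z-1)^a * (z+1)^(q+1))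
        ≤ (1/(q+1)) * ((z-1)^(1+a) * (z+1)^(2*M.re-1)) := by
      apply mul_le_mul_of_nonneg_left hbase (by positivity)
    have e : K1c M * (z^2-z) * 2^|q| * (z+1)^q * (2^|a| * (z-1)^a * (∫ t in (2:ℝ)..((z+3)/2), t^q))
        = (K1c M * 2^|q| * 2^|a|) * (((z^2-z) * (z+1)^q * (z-1)^a) * (∫ t in (2:ℝ)..((z+3)/2), t^q)) := by
      ring
    rw [e]
    have hc : (0:ℝ) ≤ K1c M * 2^|q| * 2^|a| := by positivity
    calc (K1c M * 2^|q| * 2^|a|) * (((z^2-z) * (z+1)^q * (z-1)^a) * (∫ t in (2:ℝ)..((z+3)/2), t^q))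
        ≤ (K1c M * 2^|q| * 2^|a|) * ((1/(q+1)) * ((z-1)^(1+a) * (z+1)^(2*M.re-1))) := by
          apply mul_le_mul_of_nonneg_left _ hc
          calc _ ≤ _ := s1
            _ = _ := s2
            _ ≤ _ := s3
      _ = (K1c M * 2^|q| * 2^|a| / (q+1)) * ((z-1)^(1+a) * (z+1)^(2*M.re-1)) := by ring
  have t3 : (K2c M * max ((2*(z+1))^(M.re-1/2)) (((z+1)^2)^(M.re-1/2))) * ((z-1)^(1+a)/(1+a))
      ≤ (K2c M * 2^(M.re-1/2) / (1+a)) * ((z-1)^(1+a) * (z+1)^(2*M.re-1)) := by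
    have e : (K2c M * max ((2*(z+1))^(M.re-1/2)) (((z+1)^2)^(M.re-1/2))) * ((z-1)^(1+a)/(1+a))
        = (K2c M / (1+a) * (z-1)^(1+a)) * (max ((2*(z+1))^(M.re-1/2)) (((z+1)^2)^(M.re-1/2))) := by
      ring
    rw [e]
    have hc : 0 ≤ K2c M / (1+a) * (z-1)^(1+a) := by positivity
    calc _ ≤ (K2c M / (1+a) * (z-1)^(1+a)) * (2^(M.re-1/2) * (z+1)^(2*M.re-1)) :=
          mul_le_mul_of_nonneg_left hW hc
      _ = (K2c M * 2^(M.re-1/2) / (1+a)) * ((z-1)^(1+a) * (z+1)^(2*M.re-1)) := by ring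
  have hsplit : (K1c M * (z^2-z) * 2^|q| * (z+1)^q) *
          (2^|q| * (z+1)^q * ((z-1)^(1+a)/(1+a))
            + 2^|a| * (z-1)^a * (∫ t in (2:ℝ)..((z+3)/2), t^q))
        + (K2c M * max ((2*(z+1))^(M.re-1/2)) (((z+1)^2)^(M.re-1/2))) * ((z-1)^(1+a)/(1+a))
      = K1c M * (z^2-z) * 2^|q| * (z+1)^q * (2^|q| * (z+1)^q * ((z-1)^(1+a)/(1+a)))
        + K1c M * (z^2-z) * 2^|q| * (z+1)^q * (2^|a| * (z-1)^a * (∫ t in (2:ℝ)..((z+3)/2), t^q))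
        + (K2c M * max ((2*(z+1))^(M.re-1/2)) (((z+1)^2)^(M.re-1/2))) * ((z-1)^(1+a)/(1+a)) := by
    ring
  rw [hsplit]
  have hSE : (0:ℝ) ≤ (z-1)^(1+a) * (z+1)^(2*M.re-1) := mul_nonneg hS hE
  nlinarith [t1, t2, t3, hSE]

theorem stmt2 (a : ℝ) (ha : a > -1) (M : ℂ) (hM : 0 < M.re) (hM' : M.re ≠ 1/2) :
    ∃ C > 0, ∀ z : ℝ, 1 < z →
      (M.re < 1/2 →
        (∫ y in Set.Ioo (0:ℝ) (z - 1),
            y ^ a * ((z + 1) ^ 2 - y ^ 2) ^ M.re *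
              (((z - 1) ^ 2 - y ^ 2) * Real.sqrt ((z + 1) ^ 2 - y ^ 2))⁻¹ *
              Norm.norm
                ((((z - z ^ 2 : ℝ) : ℂ) + M * ((1 - z ^ 2 - y ^ 2 : ℝ) : ℂ)) *
                    GaussF (1/2 - M) (1/2 - M) 1
                      ((((z - 1) ^ 2 - y ^ 2) / ((z + 1) ^ 2 - y ^ 2) : ℝ) : ℂ)
                  + ((z ^ 2 - 1 + y ^ 2 : ℝ) : ℂ) * (1/2 + M) *
                    GaussF (-(1/2) - M) (1/2 - M) 1
                      ((((z - 1) ^ 2 - y ^ 2) / ((z + 1) ^ 2 - y ^ 2) : ℝ) : ℂ)))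
          ≤ C * (z - 1) ^ (1 + a) * (z + 1) ^ (M.re - 1/2)) ∧
      (1/2 < M.re →
        (∫ y in Set.Ioo (0:ℝ) (z - 1),
            y ^ a * ((z + 1) ^ 2 - y ^ 2) ^ M.re *
              (((z - 1) ^ 2 - y ^ 2) * Real.sqrt ((z + 1) ^ 2 - y ^ 2))⁻¹ *
              Norm.norm
                ((((z - z ^ 2 : ℝ) : ℂ) + M * ((1 - z ^ 2 - y ^ 2 : ℝ) : ℂ)) *
                    GaussF (1/2 - M) (1/2 - M) 1
                      ((((z - 1) ^ 2 - y ^ 2) / ((z + 1) ^ 2 - y ^ 2) : ℝ) : ℂ)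
                  + ((z ^ 2 - 1 + y ^ 2 : ℝ) : ℂ) * (1/2 + M) *
                    GaussF (-(1/2) - M) (1/2 - M) 1
                      ((((z - 1) ^ 2 - y ^ 2) / ((z + 1) ^ 2 - y ^ 2) : ℝ) : ℂ)))
          ≤ C * (z - 1) ^ (1 + a) * (z + 1) ^ (2 * M.re - 1)) := by
  rcases lt_or_gt_of_ne hM' with hp | hp
  · obtain ⟨C, hC0, hC⟩ := caseA a ha M hM hp
    refine ⟨C, hC0, fun z hz => ⟨fun _ => ?_, fun h => absurd h (by linarith)⟩⟩
    exact (integral_est a ha M hM z hz).trans (hC z hz)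
  · obtain ⟨C, hC0, hC⟩ := caseB a ha M hM hp
    refine ⟨C, hC0, fun z hz => ⟨fun h => absurd h (by linarith), fun _ => ?_⟩⟩
    exact (integral_est a ha M hM z hz).trans (hC z hz)
end

section
/- Let a > −1 be real. Then, as the real variable z → +∞, (1/ln z) · F((a+1)/2, 1; (a+3)/2; (z−1)²/(z+1)²) tends to (1+a)/2. (This is the M = 1/2 case, where 3/2 − M = 1.) -/
open Filter Topology

lemma poch_eval_succ_right (α : ℂ) (n : ℕ) :
    (ascPochhammer ℂ (n + 1)).eval α = (ascPochhammer ℂ n).eval α * (α + n) := by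
  rw [ascPochhammer_succ_right]
  simp

lemma poch_eval_succ_left (α : ℂ) (n : ℕ) :
    (ascPochhammer ℂ (n + 1)).eval α = α * (ascPochhammer ℂ n).eval (α + 1) := by
  rw [ascPochhammer_succ_left]
  simp [Polynomial.eval_comp]

lemma poch_eval_ne_zero (α : ℂ) (hα : ∀ k : ℕ, α + k ≠ 0) (n : ℕ) :
    (ascPochhammer ℂ n).eval α ≠ 0 := by
  induction n with
  | zero => simp
  | succ n ih =>
    rw [poch_eval_succ_right]
    exact mul_ne_zero ih (hα n)

lemma poch_ratio (α : ℂ) (hα : ∀ k : ℕ, α + k ≠ 0) (n : ℕ) :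
    (ascPochhammer ℂ n).eval α / (ascPochhammer ℂ n).eval (α + 1) = α / (α + n) := by
  have h1 : (ascPochhammer ℂ n).eval α * (α + n) = α * (ascPochhammer ℂ n).eval (α + 1) := by
    rw [← poch_eval_succ_right, ← poch_eval_succ_left]
  have h2 : (ascPochhammer ℂ n).eval (α + 1) ≠ 0 := by
    apply poch_eval_ne_zero
    intro k
    have := hα (k + 1)
    push_cast at this ⊢
    convert this using 1
    ring
  have h3 : α + n ≠ 0 := hα n
  field_simp
  linear_combination h1

lemma gaussF_eq (α : ℂ) (hα : ∀ k : ℕ, α + k ≠ 0) (x : ℂ) :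
    GaussF α 1 (α + 1) x = ∑' n : ℕ, α / (α + n) * x ^ n := by
  unfold GaussF
  refine tsum_congr fun n => ?_
  rw [ascPochhammer_eval_one]
  have hf : ((n.factorial : ℂ)) ≠ 0 := Nat.cast_ne_zero.mpr n.factorial_ne_zero
  rw [show (ascPochhammer ℂ n).eval α * ↑n.factorial /
      ((ascPochhammer ℂ n).eval (α + 1) * ↑n.factorial)
      = (ascPochhammer ℂ n).eval α / (ascPochhammer ℂ n).eval (α + 1) by
    rw [mul_div_mul_right _ _ hf]]
  rw [poch_ratio α hα n]

theorem stmt5 (a : ℝ) (ha : a > -1) :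
    Tendsto
      (fun z : ℝ =>
        ((Real.log z : ℂ))⁻¹ *
          GaussF (((a : ℂ) + 1) / 2) 1 (((a : ℂ) + 3) / 2)
            (((z - 1) ^ 2 / (z + 1) ^ 2 : ℝ) : ℂ))
      atTop
      (𝓝 (((1 + a : ℝ) : ℂ) / 2)) := by
  set b : ℝ := (a + 1) / 2 with hbdef
  have hbpos : 0 < b := by simp [hbdef]; linarith
  set α : ℂ := ((a : ℂ) + 1) / 2 with hαdef
  have hαre : α = (b : ℂ) := by rw [hαdef, hbdef]; push_cast; ring
  have hα : ∀ k : ℕ, α + k ≠ 0 := by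
    intro k
    rw [hαre, show (b : ℂ) + k = ((b + k : ℝ) : ℂ) by push_cast; ring]
    exact_mod_cast ne_of_gt (by positivity : (0:ℝ) < b + k)
  have hc1 : (((a : ℂ) + 3) / 2) = α + 1 := by rw [hαdef]; ring
  -- correction coefficients
  set c : ℕ → ℂ := fun n => 1 / (α + n) - 1 / ((n : ℂ) + 1) with hcdef
  set m : ℝ := min b 1 with hmdef
  have hmpos : 0 < m := lt_min hbpos one_pos
  have hnorm_an : ∀ n : ℕ, ‖α + (n : ℂ)‖ = b + n := by
    intro n
    rw [hαre, show (b : ℂ) + n = ((b + n : ℝ) : ℂ) by push_cast; ring,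
      Complex.norm_real, Real.norm_of_nonneg (by positivity)]
  have hcbound : ∀ n : ℕ, ‖c n‖ ≤ ‖1 - α‖ / m * (1 / ((n : ℝ) + 1) ^ 2) := by
    intro n
    have han : α + (n : ℂ) ≠ 0 := hα n
    have hn1 : ((n : ℂ) + 1) ≠ 0 := by
      exact_mod_cast (Nat.cast_add_one_ne_zero n : ((n : ℂ) + 1) ≠ 0)
    have hceq : c n = (1 - α) / ((α + n) * ((n : ℂ) + 1)) := by
      show 1 / (α + n) - 1 / ((n : ℂ) + 1) = _
      rw [div_sub_div _ _ han hn1]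
      congr 1
      ring
    rw [hceq, norm_div, norm_mul, hnorm_an]
    have hn1n : ‖(n : ℂ) + 1‖ = (n : ℝ) + 1 := by
      rw [show (n : ℂ) + 1 = ((n + 1 : ℝ) : ℂ) by push_cast; ring, Complex.norm_real,
        Real.norm_of_nonneg (by positivity)]
    rw [hn1n]
    have hlow : m * ((n : ℝ) + 1) ≤ b + n := by
      have h1 : m ≤ b := min_le_left _ _
      have h2 : m ≤ 1 := min_le_right _ _
      nlinarith [(Nat.cast_nonneg n : (0:ℝ) ≤ (n:ℕ))]
    calc ‖1 - α‖ / ((b + n) * ((n:ℝ) + 1))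
        ≤ ‖1 - α‖ / (m * ((n:ℝ) + 1) * ((n:ℝ) + 1)) := by
          refine div_le_div_of_nonneg_left (norm_nonneg _) (by positivity) ?_
          nlinarith [(Nat.cast_nonneg n : (0:ℝ) ≤ (n:ℕ))]
      _ = ‖1 - α‖ / m * (1 / ((n : ℝ) + 1) ^ 2) := by
          rw [sq, mul_one_div, div_div, mul_assoc]
  have hsum_inv_sq : Summable (fun n : ℕ => 1 / ((n : ℝ) + 1) ^ 2) := by
    have := (summable_nat_add_iff 1).mpr (Real.summable_one_div_nat_pow.mpr (by norm_num : 1 < 2))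
    refine this.congr fun n => ?_
    push_cast
    ring
  have hcsum : Summable (fun n : ℕ => ‖c n‖) :=
    (hsum_inv_sq.mul_left (‖1 - α‖ / m)).of_nonneg_of_le (fun n => norm_nonneg _) hcbound
  set C : ℝ := ∑' n : ℕ, ‖c n‖ with hCdef
  -- the remainder function
  set R : ℂ → ℂ := fun x => ∑' n : ℕ, c n * x ^ n with hRdef
  have hRbound : ∀ x : ℂ, ‖x‖ ≤ 1 → ‖R x‖ ≤ C := by
    intro x hx
    have hsx : Summable fun n : ℕ => ‖c n * x ^ n‖ := by
      refine hcsum.of_nonneg_of_le (fun n => norm_nonneg _) fun n => ?_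
      rw [norm_mul]
      calc ‖c n‖ * ‖x ^ n‖ ≤ ‖c n‖ * 1 := by
            refine mul_le_mul_of_nonneg_left ?_ (norm_nonneg _)
            rw [norm_pow]; exact pow_le_one₀ (norm_nonneg _) hx
        _ = ‖c n‖ := mul_one _
    refine (norm_tsum_le_tsum_norm hsx).trans ?_
    refine Summable.tsum_le_tsum (fun n => ?_) hsx hcsum
    rw [norm_mul]
    calc ‖c n‖ * ‖x ^ n‖ ≤ ‖c n‖ * 1 := by
          refine mul_le_mul_of_nonneg_left ?_ (norm_nonneg _)
          rw [norm_pow]; exact pow_le_one₀ (norm_nonneg _) hx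
      _ = ‖c n‖ := mul_one _
  -- key pointwise formula for 0 < x < 1 real
  have hkey : ∀ x : ℝ, 0 < x → x < 1 →
      GaussF α 1 (α + 1) (x : ℂ) = α * ((-Complex.log (1 - x) / x) + R x) := by
    intro x hx0 hx1
    have hxnorm : ‖(x : ℂ)‖ < 1 := by
      rw [Complex.norm_real, Real.norm_of_nonneg hx0.le]; exact hx1
    have hxne : (x : ℂ) ≠ 0 := by exact_mod_cast ne_of_gt hx0
    -- HasSum for ∑ x^n/(n+1)
    have h0 := Complex.hasSum_taylorSeries_neg_log hxnorm
    have h1 : HasSum (fun n : ℕ => (x : ℂ) ^ (n + 1) / ((n : ℂ) + 1))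
        (-Complex.log (1 - x)) := by
      simpa using (hasSum_nat_add_iff' (f := fun n : ℕ => (x : ℂ) ^ n / (n : ℂ)) 1).mpr h0
    have h2 : HasSum (fun n : ℕ => (x : ℂ) ^ n / ((n : ℂ) + 1))
        (-Complex.log (1 - x) / x) := by
      have h3 := h1.mul_left (x : ℂ)⁻¹
      have h4 : (fun n : ℕ => (x : ℂ)⁻¹ * ((x : ℂ) ^ (n + 1) / ((n : ℂ) + 1)))
          = fun n : ℕ => (x : ℂ) ^ n / ((n : ℂ) + 1) := by
        funext n
        rw [pow_succ', mul_div_assoc, ← mul_assoc, inv_mul_cancel₀ hxne, one_mul]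
      rw [h4] at h3
      rw [div_eq_mul_inv, mul_comm]; exact h3
    rw [gaussF_eq α hα]
    have hS1 : Summable (fun n : ℕ => (x : ℂ) ^ n / ((n : ℂ) + 1)) := h2.summable
    have hS2 : Summable (fun n : ℕ => c n * (x : ℂ) ^ n) := by
      refine Summable.of_norm_bounded hcsum fun n => ?_
      rw [norm_mul]
      calc ‖c n‖ * ‖(x:ℂ) ^ n‖ ≤ ‖c n‖ * 1 := by
            refine mul_le_mul_of_nonneg_left ?_ (norm_nonneg _)
            rw [norm_pow]
            exact pow_le_one₀ (norm_nonneg _) (by rw [Complex.norm_real, Real.norm_of_nonneg hx0.le]; exact hx1.le)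
        _ = ‖c n‖ := mul_one _
    have hterm : ∀ n : ℕ, α / (α + n) * (x:ℂ) ^ n
        = α * ((x:ℂ) ^ n / ((n : ℂ) + 1) + c n * (x:ℂ) ^ n) := by
      intro n
      have han := hα n
      have hn1 : ((n : ℂ) + 1) ≠ 0 := Nat.cast_add_one_ne_zero n
      simp only [hcdef]
      field_simp
      ring
    rw [tsum_congr hterm, tsum_mul_left, Summable.tsum_add hS1 hS2, h2.tsum_eq]
  -- limits of auxiliary real functions
  have hlog_to : Tendsto Real.log atTop atTop := Real.tendsto_log_atTop
  have hloginv : Tendsto (fun z : ℝ => (Real.log z)⁻¹) atTop (𝓝 0) :=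
    hlog_to.inv_tendsto_atTop
  have hzp1 : Tendsto (fun z : ℝ => z + 1) atTop atTop :=
    tendsto_atTop_add_const_right _ 1 tendsto_id
  have hxlim : Tendsto (fun z : ℝ => (z - 1) ^ 2 / (z + 1) ^ 2) atTop (𝓝 1) := by
    have hbase : Tendsto (fun z : ℝ => 1 - 2 * (z + 1)⁻¹) atTop (𝓝 1) := by
      have := ((hzp1.inv_tendsto_atTop).const_mul (2:ℝ)).const_sub (1:ℝ)
      simpa using this
    have hsq : Tendsto (fun z : ℝ => (1 - 2 * (z + 1)⁻¹) ^ 2) atTop (𝓝 1) := by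
      have := hbase.mul hbase
      simpa [sq] using this
    refine hsq.congr' ?_
    filter_upwards [eventually_gt_atTop 1] with z hz
    have hz1 : z + 1 ≠ 0 := by linarith
    field_simp
    ring
  have hlogratio : Tendsto (fun z : ℝ => Real.log (z + 1) / Real.log z) atTop (𝓝 1) := by
    have hnum : Tendsto (fun z : ℝ => Real.log ((z + 1) / z)) atTop (𝓝 0) := by
      have hq : Tendsto (fun z : ℝ => (z + 1) / z) atTop (𝓝 1) := by
        have : Tendsto (fun z : ℝ => 1 + z⁻¹) atTop (𝓝 1) := by
          simpa using tendsto_inv_atTop_zero.const_add (1 : ℝ)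
        refine this.congr' ?_
        filter_upwards [eventually_gt_atTop 0] with z hz
        field_simp
      have := (Real.continuousAt_log one_ne_zero).tendsto.comp hq
      simpa [Function.comp_def] using this
    have hdiv : Tendsto (fun z : ℝ => Real.log ((z + 1) / z) / Real.log z) atTop (𝓝 0) :=
      hnum.div_atTop hlog_to
    have h1 : Tendsto (fun z : ℝ => 1 + Real.log ((z + 1) / z) / Real.log z) atTop (𝓝 1) := by
      simpa using hdiv.const_add (1:ℝ)
    refine h1.congr' ?_
    filter_upwards [eventually_gt_atTop 1] with z hz
    have hz0 : z ≠ 0 := by linarith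
    have hz1 : z + 1 ≠ 0 := by linarith
    have hlz : Real.log z ≠ 0 := ne_of_gt (Real.log_pos hz)
    rw [Real.log_div hz1 hz0]
    field_simp
    ring
  -- main real factor tends to 1
  set g : ℝ → ℝ := fun z =>
    (Real.log z)⁻¹ * (-(Real.log (1 - (z - 1) ^ 2 / (z + 1) ^ 2))) / ((z - 1) ^ 2 / (z + 1) ^ 2)
    with hgdef
  have hg : Tendsto g atTop (𝓝 1) := by
    have hxinv : Tendsto (fun z : ℝ => ((z - 1) ^ 2 / (z + 1) ^ 2)⁻¹) atTop (𝓝 1) := by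
      have := hxlim.inv₀ one_ne_zero
      simpa using this
    have hmain : Tendsto (fun z : ℝ =>
        (2 * (Real.log (z + 1) / Real.log z) - Real.log 4 * (Real.log z)⁻¹ - 1)
          * ((z - 1) ^ 2 / (z + 1) ^ 2)⁻¹) atTop (𝓝 1) := by
      have h4 : Tendsto (fun z : ℝ => Real.log 4 * (Real.log z)⁻¹) atTop (𝓝 0) := by
        simpa using hloginv.const_mul (Real.log 4)
      have := (((hlogratio.const_mul 2).sub h4).sub_const (1:ℝ)).mul hxinv
      norm_num [inv_div] at this ⊢
      exact this
    refine hmain.congr' ?_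
    filter_upwards [eventually_gt_atTop 1] with z hz
    have hz0 : (0:ℝ) < z := by linarith
    have hz1 : (0:ℝ) < z + 1 := by linarith
    have hzm1 : (0:ℝ) < z - 1 := by linarith
    have hlz : Real.log z ≠ 0 := ne_of_gt (Real.log_pos hz)
    have h1mx : 1 - (z - 1) ^ 2 / (z + 1) ^ 2 = 4 * z / (z + 1) ^ 2 := by
      field_simp
      ring
    have hlog1mx : Real.log (1 - (z - 1) ^ 2 / (z + 1) ^ 2)
        = Real.log 4 + Real.log z - 2 * Real.log (z + 1) := by
      rw [h1mx, Real.log_div (by positivity) (by positivity), Real.log_mul (by norm_num) hz0.ne',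
        Real.log_pow]
      push_cast
      ring
    rw [hgdef]
    simp only
    rw [hlog1mx]
    field_simp
    ring
  -- remainder tends to 0
  have hrem : Tendsto (fun z : ℝ =>
      ((Real.log z : ℂ))⁻¹ * R (((z - 1) ^ 2 / (z + 1) ^ 2 : ℝ) : ℂ)) atTop (𝓝 0) := by
    have hCmul : Tendsto (fun z : ℝ => (Real.log z)⁻¹ * C) atTop (𝓝 0) := by
      simpa using hloginv.mul_const C
    refine squeeze_zero_norm' ?_ hCmul
    filter_upwards [eventually_gt_atTop 1] with z hz
    have hz0 : (0:ℝ) < z := by linarith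
    have hlz : 0 < Real.log z := Real.log_pos hz
    have hx01 : (0:ℝ) ≤ (z - 1) ^ 2 / (z + 1) ^ 2 := by positivity
    have hxlt : (z - 1) ^ 2 / (z + 1) ^ 2 < 1 := by
      rw [div_lt_one (by positivity)]
      nlinarith
    have hxnorm : ‖(((z - 1) ^ 2 / (z + 1) ^ 2 : ℝ) : ℂ)‖ ≤ 1 := by
      rw [Complex.norm_real, Real.norm_of_nonneg hx01]
      exact hxlt.le
    rw [norm_mul, norm_inv, Complex.norm_real, Real.norm_of_nonneg hlz.le]
    exact mul_le_mul_of_nonneg_left (hRbound _ hxnorm) (by positivity)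
  -- final assembly
  have hgC : Tendsto (fun z : ℝ => ((g z : ℝ) : ℂ)) atTop (𝓝 (1 : ℂ)) := by
    have := (Complex.continuous_ofReal.tendsto 1).comp hg
    simpa [Function.comp_def] using this
  have htot : Tendsto (fun z : ℝ =>
      α * ((g z : ℝ) : ℂ) +
        α * (((Real.log z : ℂ))⁻¹ * R (((z - 1) ^ 2 / (z + 1) ^ 2 : ℝ) : ℂ)))
      atTop (𝓝 (α * 1 + α * 0)) :=
    (hgC.const_mul α).add (hrem.const_mul α)
  have hval : α * 1 + α * 0 = ((1 + a : ℝ) : ℂ) / 2 := by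
    rw [hαdef]; push_cast; ring
  rw [hval] at htot
  refine Tendsto.congr' ?_ htot
  filter_upwards [eventually_gt_atTop 1] with z hz
  have hz1 : (0:ℝ) < z - 1 := by linarith
  have hz2 : (0:ℝ) < z + 1 := by linarith
  have hx0' : (0:ℝ) < (z - 1) ^ 2 / (z + 1) ^ 2 := div_pos (pow_pos hz1 2) (pow_pos hz2 2)
  have hx1' : (z - 1) ^ 2 / (z + 1) ^ 2 < 1 := by
    rw [div_lt_one (pow_pos hz2 2)]
    nlinarith
  have h1mx : (0:ℝ) < 1 - (z - 1) ^ 2 / (z + 1) ^ 2 := by linarith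
  rw [hc1, hkey _ hx0' hx1']
  have hlogC : Complex.log (1 - (((z - 1) ^ 2 / (z + 1) ^ 2 : ℝ) : ℂ))
      = ((Real.log (1 - (z - 1) ^ 2 / (z + 1) ^ 2) : ℝ) : ℂ) := by
    rw [show (1 : ℂ) - (((z - 1) ^ 2 / (z + 1) ^ 2 : ℝ) : ℂ)
        = ((1 - (z - 1) ^ 2 / (z + 1) ^ 2 : ℝ) : ℂ) by push_cast; ring,
      Complex.ofReal_log h1mx.le]
  rw [hlogC, hgdef]
  push_cast
  ring
end

section
/- For all real a > −1 and all real z > 1: ∫₀^{z−1} y^a ((z+1)² − y²)^{−3/2} dy = (z−1)^{a+1} / (4(a+1) z (z+1)³) · [ (a+2)(z+1)² F(−1/2, (a+1)/2; (a+3)/2; (z−1)²/(z+1)²) − (z(4a + z + 2) + 1) F(1/2, (a+1)/2; (a+3)/2; (z−1)²/(z+1)²) ]. -/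
open MeasureTheory

open Polynomial Metric Set

section Aux

lemma q_succ_left (s : ℝ) (n : ℕ) :
    (ascPochhammer ℝ (n+1)).eval s = s * (ascPochhammer ℝ n).eval (s+1) := by
  rw [ascPochhammer_succ_left, eval_mul, eval_X, eval_comp, eval_add, eval_X, eval_one]

lemma q_cast (s : ℝ) (n : ℕ) :
    (ascPochhammer ℂ n).eval (s:ℂ) = (((ascPochhammer ℝ n).eval s : ℝ) : ℂ) := by
  have h := ascPochhammer_map Complex.ofRealHom n
  rw [← h, show (s:ℂ) = Complex.ofRealHom s from rfl, Polynomial.eval_map,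
    Polynomial.eval₂_at_apply]
  rfl

lemma q_cross (b : ℝ) (n : ℕ) :
    (ascPochhammer ℝ n).eval b * (b+n) = b * (ascPochhammer ℝ n).eval (b+1) := by
  rw [← ascPochhammer_succ_eval, ascPochhammer_succ_left, eval_mul, eval_X, eval_comp,
    eval_add, eval_X, eval_one]

lemma q_abs_le (s : ℝ) (hs : |s| ≤ 2) (n : ℕ) :
    |(ascPochhammer ℝ n).eval s| ≤ (n+1).factorial := by
  induction n with
  | zero => simp [ascPochhammer_zero]
  | succ n ih =>
      rw [ascPochhammer_succ_eval, abs_mul]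
      calc |(ascPochhammer ℝ n).eval s| * |s + n| ≤ (n+1).factorial * (n+2) := by
            apply mul_le_mul ih ?_ (abs_nonneg _) (by positivity)
            calc |s + n| ≤ |s| + |(n:ℝ)| := abs_add_le _ _
              _ ≤ 2 + n := by rw [abs_of_nonneg (by positivity : (0:ℝ) ≤ (n:ℝ))]; linarith
              _ = (n:ℝ) + 2 := by ring
        _ = (n+2).factorial := by
            rw [show n+2 = (n+1)+1 from rfl, Nat.factorial_succ ((n+1)), Nat.factorial_succ n]
            push_cast; ring

lemma summable_of_bound {f : ℕ → ℝ} {C x : ℝ} (hx1 : x < 1) (hx0 : 0 ≤ x)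
    (h : ∀ n, |f n| ≤ C * ((n:ℝ)+1) * x^n) : Summable f := by
  have hg : Summable (fun n : ℕ => C * ((n:ℝ)+1) * x^n) := by
    have h1 : Summable (fun n : ℕ => ((n:ℝ)+1) * x^n) := by
      have := summable_pow_mul_geometric_of_norm_lt_one (R := ℝ) 1 (r := x)
        (by rwa [Real.norm_eq_abs, abs_of_nonneg hx0])
      simpa [add_mul, one_mul, pow_one] using this.add (summable_geometric_of_lt_one hx0 hx1)
    simpa [mul_assoc] using h1.mul_left C
  exact (hg.of_nonneg_of_le (fun n => abs_nonneg _) h).of_abs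

lemma T_bound (s b x : ℝ) (hb : 0 < b) (hx0 : 0 ≤ x)
    (hs' : ∀ n : ℕ, |(ascPochhammer ℝ n).eval s| ≤ (n+1).factorial)
    (n : ℕ) :
    |(ascPochhammer ℝ n).eval s * b / ((b+n) * n.factorial) * x^n| ≤ 1 * ((n:ℝ)+1) * x^n := by
  have hbn : (0:ℝ) < b + n := by positivity
  have hnf : (0:ℝ) < (n.factorial : ℝ) := by positivity
  rw [abs_mul, abs_pow, abs_of_nonneg hx0, one_mul]
  apply mul_le_mul_of_nonneg_right ?_ (by positivity)
  rw [abs_div, abs_mul, abs_of_pos hb, abs_of_pos (by positivity : (0:ℝ) < (b+n)*n.factorial)]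
  rw [div_le_iff₀ (by positivity)]
  calc |(ascPochhammer ℝ n).eval s| * b ≤ ((n+1).factorial : ℝ) * b :=
        mul_le_mul_of_nonneg_right (hs' n) hb.le
    _ ≤ ((n:ℝ)+1) * ((b+n) * n.factorial) := by
        rw [Nat.factorial_succ]; push_cast
        nlinarith [hnf.le, mul_nonneg (mul_nonneg (by positivity : (0:ℝ) ≤ (n:ℝ)+1) hnf.le)
          (Nat.cast_nonneg n : (0:ℝ) ≤ (n:ℝ))]

lemma key_rec (b : ℝ) (hb : 0 < b) (n : ℕ) :
    (ascPochhammer ℝ (n+1)).eval (3/2) * b/((b+((n:ℝ)+1)) * (n+1).factorial)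
      - (2*b+1) * ((ascPochhammer ℝ (n+1)).eval (-(1/2)) * b/((b+((n:ℝ)+1)) * (n+1).factorial))
      + 2*b * ((ascPochhammer ℝ (n+1)).eval (1/2) * b/((b+((n:ℝ)+1)) * (n+1).factorial))
    = ((ascPochhammer ℝ n).eval (3/2) + (2*b-1) * (ascPochhammer ℝ n).eval (1/2))
        * b/((b+(n:ℝ)) * n.factorial) := by
  have e3 : (ascPochhammer ℝ (n+1)).eval (3/2) = (ascPochhammer ℝ n).eval (3/2) * (3/2 + n) :=
    ascPochhammer_succ_eval n (3/2)
  have em : (ascPochhammer ℝ (n+1)).eval (-(1/2)) = -(1/2) * (ascPochhammer ℝ n).eval (1/2) := by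
    rw [q_succ_left]; norm_num
  have ep : (ascPochhammer ℝ (n+1)).eval (1/2) = (1/2) * (ascPochhammer ℝ n).eval (3/2) := by
    rw [q_succ_left]; norm_num
  have ep' : (ascPochhammer ℝ (n+1)).eval (1/2) = (ascPochhammer ℝ n).eval (1/2) * (1/2 + n) :=
    ascPochhammer_succ_eval n (1/2)
  have e3p : (ascPochhammer ℝ n).eval (3/2) = (2*(n:ℝ)+1) * (ascPochhammer ℝ n).eval (1/2) := by
    have := ep'.symm.trans ep
    nlinarith [this]
  have hbn : (b+(n:ℝ)) ≠ 0 := by positivity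
  have hbn1 : (b+((n:ℝ)+1)) ≠ 0 := by positivity
  have hnf : ((n.factorial : ℝ)) ≠ 0 := by positivity
  have hfs : ((n+1).factorial : ℝ) = ((n:ℝ)+1) * n.factorial := by
    rw [Nat.factorial_succ]; push_cast; ring
  rw [e3, em, ep, e3p, hfs]
  field_simp
  ring

lemma slit (w : ℂ) (hw : w ∈ ball (0:ℂ) 1) : 1 - w ∈ Complex.slitPlane := by
  apply Complex.mem_slitPlane_iff.mpr
  left
  have : |w.re| < 1 := lt_of_le_of_lt (Complex.abs_re_le_norm w) (by simpa using hw)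
  simp only [Complex.sub_re, Complex.one_re]
  cases abs_lt.mp this; linarith

lemma gdiff : DifferentiableOn ℂ (fun w : ℂ => (1 - w) ^ (-(3/2) : ℂ)) (ball (0:ℂ) 1) := by
  intro w hw
  have h1 : HasDerivAt (fun w : ℂ => 1 - w) (-1) w := (hasDerivAt_id w).const_sub 1
  exact ((h1.cpow_const (slit w hw)).differentiableAt).differentiableWithinAt

lemma giter : ∀ n : ℕ, ∀ w ∈ ball (0:ℂ) 1,
    iteratedDeriv n (fun w : ℂ => (1 - w) ^ (-(3/2) : ℂ)) w
      = (ascPochhammer ℂ n).eval (3/2 : ℂ) * (1 - w) ^ (-(3/2) - n : ℂ) := by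
  intro n
  induction n with
  | zero => intro w _; simp [ascPochhammer_zero]
  | succ n ih =>
      intro w hw
      rw [iteratedDeriv_succ]
      have hev : (fun u => iteratedDeriv n (fun w : ℂ => (1 - w) ^ (-(3/2) : ℂ)) u)
          =ᶠ[nhds w] fun u => (ascPochhammer ℂ n).eval (3/2 : ℂ) * (1 - u) ^ (-(3/2) - n : ℂ) := by
        filter_upwards [isOpen_ball.mem_nhds hw] with u hu using ih u hu
      rw [hev.deriv_eq]
      have h1 : HasDerivAt (fun u : ℂ => 1 - u) (-1) w := (hasDerivAt_id w).const_sub 1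
      have h2 := (h1.cpow_const (slit w hw) (c := -(3/2) - n)).const_mul
        ((ascPochhammer ℂ n).eval (3/2 : ℂ))
      rw [h2.deriv]
      rw [ascPochhammer_succ_eval]
      rw [show (-(3/2) - (n:ℂ)) - 1 = -(3/2) - ((n:ℕ)+1 : ℕ) by push_cast; ring]
      push_cast
      ring

lemma binom {t : ℝ} (h0 : 0 ≤ t) (h1 : t < 1) :
    HasSum (fun n : ℕ => (ascPochhammer ℝ n).eval (3/2) / n.factorial * t^n)
      ((1-t) ^ (-(3/2) : ℝ)) := by
  have ht : (t:ℂ) ∈ ball (0:ℂ) 1 := by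
    simp [abs_of_nonneg h0, h1]
  have H := Complex.hasSum_taylorSeries_on_ball gdiff ht
  rw [← Complex.hasSum_ofReal]
  convert H using 2 with n
  · rfl
  · rw [giter n 0 (by simp), sub_zero, sub_zero, Complex.one_cpow,
      show ((3:ℂ)/2) = ((3/2 : ℝ) : ℂ) by norm_num, q_cast]
    push_cast
    rw [smul_eq_mul, smul_eq_mul]
    ring
  · rw [show (1:ℂ) - (t:ℂ) = ((1 - t : ℝ) : ℂ) by push_cast; ring,
      show (-(3/2) : ℂ) = ((-(3/2) : ℝ) : ℂ) by norm_num,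
      ← Complex.ofReal_cpow (by linarith)]

variable {a L c : ℝ}

lemma integrand_eq (hL : 0 < L) (hc : L < c) {y : ℝ} (hy : y ∈ Ioo 0 L) :
    HasSum (fun n : ℕ => (ascPochhammer ℝ n).eval (3/2) / n.factorial * ((c^(2*n+3) : ℝ))⁻¹
        * y ^ (a + 2*n))
      (y ^ a * (c^2 - y^2) ^ (-(3/2) : ℝ)) := by
  obtain ⟨hy0, hyL⟩ := hy
  have hc0 : 0 < c := lt_trans hL hc
  have hyc : y < c := lt_trans hyL hc
  set t : ℝ := y^2 / c^2 with ht
  have h0t : 0 ≤ t := by positivity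
  have h1t : t < 1 := by
    rw [div_lt_one (by positivity)]
    nlinarith
  have hsub : c^2 - y^2 = c^2 * (1 - t) := by
    have hc2 : c^2 ≠ 0 := by positivity
    rw [ht, mul_sub, mul_one, mul_div_assoc', mul_div_cancel_left₀ _ hc2]
  have hrw : (c^2 - y^2) ^ (-(3/2) : ℝ) = ((c^3 : ℝ))⁻¹ * (1-t) ^ (-(3/2) : ℝ) := by
    rw [hsub, Real.mul_rpow (by positivity) (by linarith)]
    congr 1
    rw [show (c^2 : ℝ) = c ^ (2:ℕ) from rfl, ← Real.rpow_natCast c 2,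
      ← Real.rpow_mul hc0.le]
    norm_num
  have H := (binom h0t h1t).mul_left (y ^ a * ((c^3 : ℝ))⁻¹)
  have heq : (y ^ a * (c^2 - y^2) ^ (-(3/2) : ℝ))
      = y ^ a * ((c^3 : ℝ))⁻¹ * (1-t) ^ (-(3/2):ℝ) := by
    rw [hrw]; ring
  rw [heq]
  convert H using 2 with n
  · rfl
  have hyn : y ^ ((2*n : ℕ) : ℝ) = y ^ (2*n : ℕ) := Real.rpow_natCast y (2*n)
  have hb : y ^ (a + 2*n) = y ^ a * y ^ (2*n : ℕ) := by
    rw [← hyn, ← Real.rpow_add hy0]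
    push_cast
    ring_nf
  rw [hb, ht]
  field_simp
  have hcn : c ^ (n*2) * c⁻¹ ^ (n*2) = 1 := by rw [← mul_pow, mul_inv_cancel₀ hc0.ne', one_pow]
  linear_combination (-((ascPochhammer ℝ n).eval (3/2) * y ^ (n*2) * c ^ 3)) * hcn

lemma piece (ha : -1 < a) (hL : 0 < L) (n : ℕ) :
    ∫ y in Ioo (0:ℝ) L, y ^ (a + 2*n) = L ^ (a + 2*n + 1) / (a + 2*n + 1) := by
  have hn : (0:ℝ) ≤ n := Nat.cast_nonneg n
  have h1 : -1 < a + 2*n := by linarith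
  rw [← integral_Ioc_eq_integral_Ioo, ← intervalIntegral.integral_of_le hL.le,
    integral_rpow (Or.inl h1), Real.zero_rpow (by intro h; linarith [h] : a + 2*(n:ℝ) + 1 ≠ 0)]
  ring_nf

lemma piece_integrable (ha : -1 < a) (hL : 0 < L) (n : ℕ) :
    IntegrableOn (fun y : ℝ => y ^ (a + 2*n)) (Ioo 0 L) := by
  have hn : (0:ℝ) ≤ n := Nat.cast_nonneg n
  have h1 : -1 < a + 2*n := by linarith
  have := intervalIntegral.intervalIntegrable_rpow' (a := 0) (b := L) h1
  rw [intervalIntegrable_iff_integrableOn_Ioc_of_le hL.le] at this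
  exact this.mono_set Ioo_subset_Ioc_self

lemma integral_series (ha : -1 < a) (hL : 0 < L) (hc : L < c) :
    ∫ y in Ioo (0:ℝ) L, y ^ a * (c^2 - y^2) ^ (-(3/2) : ℝ)
      = ∑' n : ℕ, (ascPochhammer ℝ n).eval (3/2) / n.factorial * ((c^(2*n+3) : ℝ))⁻¹
          * (L ^ (a + 2*n + 1) / (a + 2*n + 1)) := by
  have hc0 : 0 < c := lt_trans hL hc
  set f : ℕ → ℝ → ℝ := fun n y =>
    (ascPochhammer ℝ n).eval (3/2) / n.factorial * ((c^(2*n+3) : ℝ))⁻¹ * y ^ (a + 2*n) with hf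
  have hCn : ∀ n : ℕ, 0 ≤ (ascPochhammer ℝ n).eval (3/2) / n.factorial * ((c^(2*n+3) : ℝ))⁻¹ := by
    intro n
    have := ascPochhammer_pos n (3/2 : ℝ) (by norm_num)
    positivity
  have hfint : ∀ n, Integrable (f n) (volume.restrict (Ioo (0:ℝ) L)) := fun n =>
    ((piece_integrable ha hL n).const_mul _)
  have hfval : ∀ n, ∫ y in Ioo (0:ℝ) L, f n y
      = (ascPochhammer ℝ n).eval (3/2) / n.factorial * ((c^(2*n+3) : ℝ))⁻¹
          * (L ^ (a + 2*n + 1) / (a + 2*n + 1)) := by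
    intro n
    rw [hf]
    simp only
    rw [integral_const_mul, piece ha hL n]
  have hsum : Summable (fun n : ℕ =>
      (ascPochhammer ℝ n).eval (3/2) / n.factorial * ((c^(2*n+3) : ℝ))⁻¹
        * (L ^ (a + 2*n + 1) / (a + 2*n + 1))) := by
    apply summable_of_bound (C := L ^ (a+1) / (c^3 * (a+1))) (x := L^2/c^2)
    · rw [div_lt_one (by positivity)]; nlinarith
    · positivity
    intro n
    have hq := q_abs_le (3/2) (by rw [abs_of_nonneg (by norm_num : (0:ℝ) ≤ 3/2)]; norm_num) n
    have hqpos := (ascPochhammer_pos n (3/2 : ℝ) (by norm_num)).le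
    have hn0 : (0:ℝ) ≤ n := Nat.cast_nonneg n
    have han : (0:ℝ) < a + 2*n + 1 := by linarith
    have ha1 : (0:ℝ) < a + 1 := by linarith
    have hden : (0:ℝ) < c^3 * (a + 2*n + 1) := mul_pos (pow_pos hc0 3) han
    have hden1 : (0:ℝ) < c^3 * (a+1) := mul_pos (pow_pos hc0 3) ha1
    have hLp : (0:ℝ) ≤ L ^ (a+1) := Real.rpow_nonneg hL.le _
    have hLn : L ^ (a + 2*n + 1) = L ^ (a+1) * (L^2)^n := by
      rw [← Real.rpow_natCast (L^2) n, ← Real.rpow_natCast L 2, ← Real.rpow_mul hL.le,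
        ← Real.rpow_add hL]
      push_cast; ring_nf
    have hq' : (ascPochhammer ℝ n).eval (3/2) / n.factorial ≤ (n:ℝ) + 1 := by
      rw [div_le_iff₀ (by positivity : (0:ℝ) < (n.factorial:ℝ))]
      calc (ascPochhammer ℝ n).eval (3/2) ≤ ((n+1).factorial : ℝ) := by
            rw [← abs_of_nonneg hqpos]; exact hq
        _ = ((n:ℝ)+1) * n.factorial := by rw [Nat.factorial_succ]; push_cast; ring
    have e1 : (ascPochhammer ℝ n).eval (3/2) / n.factorial * ((c^(2*n+3) : ℝ))⁻¹
          * (L ^ (a + 2*n + 1) / (a + 2*n + 1))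
        = ((ascPochhammer ℝ n).eval (3/2) / n.factorial) * (L^2/c^2)^n
            * (L ^ (a+1) / (c^3 * (a + 2*n + 1))) := by
      rw [hLn, pow_add, div_pow]
      field_simp
      ring
    rw [e1, abs_of_nonneg (mul_nonneg (mul_nonneg (by positivity) (by positivity))
      (div_nonneg hLp hden.le))]
    have h2 : L ^ (a+1) / (c^3 * (a + 2*n + 1)) ≤ L ^ (a+1) / (c^3 * (a+1)) := by
      rw [div_le_div_iff₀ hden hden1]
      nlinarith [mul_nonneg hLp (mul_nonneg (pow_pos hc0 3).le hn0)]
    calc (ascPochhammer ℝ n).eval (3/2) / n.factorial * (L^2/c^2)^n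
          * (L ^ (a+1) / (c^3 * (a + 2*n + 1)))
        ≤ (((n:ℝ)+1)) * (L^2/c^2)^n * (L ^ (a+1) / (c^3 * (a+1))) := by
          apply mul_le_mul ?_ h2 (div_nonneg hLp hden.le) (by positivity)
          exact mul_le_mul_of_nonneg_right hq' (by positivity)
      _ = L ^ (a+1) / (c^3 * (a+1)) * ((n:ℝ)+1) * (L^2/c^2)^n := by ring
  have hmeas : ∀ n, AEStronglyMeasurable (f n) (volume.restrict (Ioo (0:ℝ) L)) := fun n =>
    (hfint n).aestronglyMeasurable
  have hlint : ∑' n, ∫⁻ y in Ioo (0:ℝ) L, ‖f n y‖₊ ≠ ⊤ := by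
    have hnn : ∀ n, 0 ≤ᵐ[volume.restrict (Ioo (0:ℝ) L)] f n := by
      intro n
      filter_upwards [ae_restrict_mem measurableSet_Ioo] with y hy
      have : (0:ℝ) < y := hy.1
      exact mul_nonneg (hCn n) (Real.rpow_nonneg this.le _)
    have heq : ∀ n, ∫⁻ y in Ioo (0:ℝ) L, ‖f n y‖₊
        = ENNReal.ofReal (∫ y in Ioo (0:ℝ) L, f n y) := by
      intro n
      rw [MeasureTheory.ofReal_integral_eq_lintegral_ofReal (hfint n) (hnn n)]
      apply lintegral_congr_ae
      filter_upwards [hnn n] with y hy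
      exact Real.enorm_eq_ofReal hy
    simp_rw [heq, hfval]
    rw [← ENNReal.ofReal_tsum_of_nonneg ?_ hsum]
    · exact ENNReal.ofReal_ne_top
    · intro n
      have hn0 : (0:ℝ) ≤ n := Nat.cast_nonneg n
      have h1 : (0:ℝ) < a + 2*n + 1 := by linarith
      exact mul_nonneg (hCn n) (div_nonneg (Real.rpow_nonneg hL.le _) h1.le)
  calc ∫ y in Ioo (0:ℝ) L, y ^ a * (c^2 - y^2) ^ (-(3/2) : ℝ)
      = ∫ y in Ioo (0:ℝ) L, ∑' n, f n y := by
        apply setIntegral_congr_fun measurableSet_Ioo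
        intro y hy
        exact ((integrand_eq hL hc hy).tsum_eq).symm
    _ = ∑' n, ∫ y in Ioo (0:ℝ) L, f n y := integral_tsum hmeas hlint
    _ = _ := by simp_rw [hfval]

lemma gauss_real (s u v : ℝ) (x : ℝ) :
    GaussF (s:ℂ) (u:ℂ) (v:ℂ) (x:ℂ)
      = ((∑' n : ℕ, (ascPochhammer ℝ n).eval s * (ascPochhammer ℝ n).eval u /
          ((ascPochhammer ℝ n).eval v * n.factorial) * x^n : ℝ) : ℂ) := by
  rw [GaussF, Complex.ofReal_tsum]
  apply tsum_congr
  intro n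
  rw [q_cast, q_cast, q_cast]
  push_cast
  ring

lemma gauss_term_eq (s b : ℝ) (hb : 0 < b) (n : ℕ) :
    (ascPochhammer ℝ n).eval s * (ascPochhammer ℝ n).eval b /
        ((ascPochhammer ℝ n).eval (b+1) * n.factorial)
      = (ascPochhammer ℝ n).eval s * b / ((b+n) * n.factorial) := by
  have hq1 : (0:ℝ) < (ascPochhammer ℝ n).eval (b+1) := ascPochhammer_pos n _ (by linarith)
  have hbn : (0:ℝ) < b + n := by positivity
  have hnf : (0:ℝ) < (n.factorial : ℝ) := by positivity
  have hcross := q_cross b n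
  field_simp
  linear_combination ((ascPochhammer ℝ n).eval s) * hcross

lemma series_identity (b x : ℝ) (hb : 0 < b) (hx0 : 0 ≤ x) (hx1 : x < 1) :
    (1-x) * ∑' n : ℕ, (ascPochhammer ℝ n).eval (3/2) * b / ((b+n) * n.factorial) * x^n
      = (2*b+1) * ∑' n : ℕ, (ascPochhammer ℝ n).eval (-(1/2)) * b / ((b+n) * n.factorial) * x^n
        - (2*b - (2*b-1)*x)
          * ∑' n : ℕ, (ascPochhammer ℝ n).eval (1/2) * b / ((b+n) * n.factorial) * x^n := by
  set u : ℕ → ℝ := fun n => (ascPochhammer ℝ n).eval (3/2) * b / ((b+n) * n.factorial) * x^n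
    with hu
  set v : ℕ → ℝ := fun n => (ascPochhammer ℝ n).eval (1/2) * b / ((b+n) * n.factorial) * x^n
    with hv
  set w : ℕ → ℝ := fun n => (ascPochhammer ℝ n).eval (-(1/2)) * b / ((b+n) * n.factorial) * x^n
    with hw
  have habs : ∀ s : ℝ, |s| ≤ 2 →
      Summable (fun n : ℕ => (ascPochhammer ℝ n).eval s * b / ((b+n) * n.factorial) * x^n) :=
    fun s hs => summable_of_bound hx1 hx0 (T_bound s b x hb hx0 (q_abs_le s hs))
  have hsu : Summable u := habs (3/2) (by rw [abs_of_nonneg] <;> norm_num)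
  have hsv : Summable v := habs (1/2) (by rw [abs_of_nonneg] <;> norm_num)
  have hsw : Summable w := habs (-(1/2)) (by rw [abs_of_nonpos] <;> norm_num)
  set A : ℕ → ℝ := fun n => u n - (2*b+1) * w n + 2*b * v n with hA
  have hsA : Summable A := (hsu.sub (hsw.mul_left _)).add (hsv.mul_left _)
  have hA0 : A 0 = 0 := by
    simp only [hA, hu, hv, hw, ascPochhammer_zero, eval_one]
    norm_num
    ring
  have hrec : ∀ n : ℕ, A (n+1) = x * (u n + (2*b-1) * v n) := by
    intro n
    simp only [hA, hu, hv, hw]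
    have hk := key_rec b hb n
    push_cast
    rw [pow_succ]
    push_cast at hk
    linear_combination (x^n * x) * hk
  have h1 : ∑' n, A n = ∑' n, u n - (2*b+1) * ∑' n, w n + 2*b * ∑' n, v n := by
    rw [hA]
    rw [Summable.tsum_add (hsu.sub (hsw.mul_left _)) (hsv.mul_left _),
      Summable.tsum_sub hsu (hsw.mul_left _), tsum_mul_left, tsum_mul_left]
  have h2 : ∑' n, A n = x * (∑' n, u n + (2*b-1) * ∑' n, v n) := by
    rw [Summable.tsum_eq_zero_add hsA, hA0, zero_add]
    calc ∑' n : ℕ, A (n+1) = ∑' n : ℕ, x * (u n + (2*b-1) * v n) := by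
          apply tsum_congr; intro n; exact hrec n
      _ = x * (∑' n, u n + (2*b-1) * ∑' n, v n) := by
          rw [tsum_mul_left, Summable.tsum_add hsu (hsv.mul_left _), tsum_mul_left]
  have := h1.symm.trans h2
  linarith [this]

end Aux

theorem stmt8 (a : ℝ) (ha : a > -1) (z : ℝ) (hz : 1 < z) :
    Complex.ofReal (∫ y in Set.Ioo (0:ℝ) (z - 1),
        y ^ a * ((z + 1) ^ 2 - y ^ 2) ^ (-(3/2) : ℝ))
      = (((z - 1) ^ (a + 1) / (4 * (a + 1) * z * (z + 1) ^ 3) : ℝ) : ℂ) *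
          (((a : ℂ) + 2) * ((z : ℂ) + 1) ^ 2 *
              GaussF (-(1/2)) (((a : ℂ) + 1) / 2) (((a : ℂ) + 3) / 2)
                (((z - 1) ^ 2 / (z + 1) ^ 2 : ℝ) : ℂ)
            - (((z * (4*a + z + 2) + 1 : ℝ)) : ℂ) *
              GaussF (1/2) (((a : ℂ) + 1) / 2) (((a : ℂ) + 3) / 2)
                (((z - 1) ^ 2 / (z + 1) ^ 2 : ℝ) : ℂ)) := by
  have ha' : -1 < a := ha
  have hL : 0 < z - 1 := by linarith
  have hc : z - 1 < z + 1 := by linarith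
  have hc0 : (0:ℝ) < z + 1 := by linarith
  have hz0 : (0:ℝ) < z := by linarith
  have ha1 : (0:ℝ) < a + 1 := by linarith
  have hb : (0:ℝ) < (a+1)/2 := by linarith
  have hx0 : (0:ℝ) ≤ (z-1)^2/(z+1)^2 := by positivity
  have hx1 : (z-1)^2/(z+1)^2 < 1 := by
    rw [div_lt_one (by positivity)]; nlinarith
  have hxc : (z-1)^2/(z+1)^2 * (z+1)^2 = (z-1)^2 := by field_simp
  -- step 1: the integral as a series
  rw [integral_series ha' hL hc]
  -- step 2: rewrite the series
  have hJ : (∑' n : ℕ, (ascPochhammer ℝ n).eval (3/2) / n.factorial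
        * (((z+1)^(2*n+3) : ℝ))⁻¹ * ((z-1) ^ (a + 2*n + 1) / (a + 2*n + 1)))
      = ((z-1)^(a+1)/((a+1)*(z+1)^3))
        * ∑' n : ℕ, (ascPochhammer ℝ n).eval (3/2) * ((a+1)/2)
            / (((a+1)/2+n) * n.factorial) * ((z-1)^2/(z+1)^2)^n := by
    rw [← tsum_mul_left]
    apply tsum_congr
    intro n
    have hn0 : (0:ℝ) ≤ n := Nat.cast_nonneg n
    have hnf : ((n.factorial : ℝ)) ≠ 0 := by positivity
    have hbn : (0:ℝ) < (a+1)/2 + n := by linarith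
    have hLn : (z-1) ^ (a + 2*n + 1) = (z-1) ^ (a+1) * ((z-1)^2)^n := by
      rw [← Real.rpow_natCast ((z-1)^2) n, ← Real.rpow_natCast (z-1) 2,
        ← Real.rpow_mul hL.le, ← Real.rpow_add hL]
      push_cast; ring_nf
    rw [hLn, pow_add, pow_mul, div_pow]
    have han : (0:ℝ) < a + 2*n + 1 := by linarith
    field_simp
    ring
  rw [hJ]
  -- step 3: rewrite the GaussF values
  have e1 : (-(1/2) : ℂ) = ((-(1/2):ℝ) : ℂ) := by norm_num
  have e1' : ((1:ℂ)/2) = (((1:ℝ)/2 : ℝ) : ℂ) := by norm_num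
  have e2 : ((a:ℂ)+1)/2 = (((a+1)/2 : ℝ) : ℂ) := by push_cast; ring
  have e3 : ((a:ℂ)+3)/2 = ((((a+1)/2 + 1) : ℝ) : ℂ) := by push_cast; ring
  have hm : GaussF (-(1/2)) (((a:ℂ)+1)/2) (((a:ℂ)+3)/2) (((z - 1) ^ 2 / (z + 1) ^ 2 : ℝ) : ℂ)
      = ((∑' n : ℕ, (ascPochhammer ℝ n).eval (-(1/2)) * ((a+1)/2)
          / (((a+1)/2+n) * n.factorial) * ((z-1)^2/(z+1)^2)^n : ℝ) : ℂ) := by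
    rw [e1, e2, e3, gauss_real]
    congr 1
    apply tsum_congr
    intro n
    rw [gauss_term_eq _ _ hb]
  have hp : GaussF (1/2) (((a:ℂ)+1)/2) (((a:ℂ)+3)/2) (((z - 1) ^ 2 / (z + 1) ^ 2 : ℝ) : ℂ)
      = ((∑' n : ℕ, (ascPochhammer ℝ n).eval (1/2) * ((a+1)/2)
          / (((a+1)/2+n) * n.factorial) * ((z-1)^2/(z+1)^2)^n : ℝ) : ℂ) := by
    rw [e1', e2, e3, gauss_real]
    congr 1
    apply tsum_congr
    intro n
    rw [gauss_term_eq _ _ hb]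
  rw [hm, hp]
  -- step 4: reduce to a real identity
  have hID := series_identity ((a+1)/2) ((z-1)^2/(z+1)^2) hb hx0 hx1
  set S3 : ℝ := ∑' n : ℕ, (ascPochhammer ℝ n).eval (3/2) * ((a+1)/2)
      / (((a+1)/2+n) * n.factorial) * ((z-1)^2/(z+1)^2)^n with hS3
  set Sm : ℝ := ∑' n : ℕ, (ascPochhammer ℝ n).eval (-(1/2)) * ((a+1)/2)
      / (((a+1)/2+n) * n.factorial) * ((z-1)^2/(z+1)^2)^n with hSm
  set Sp : ℝ := ∑' n : ℕ, (ascPochhammer ℝ n).eval (1/2) * ((a+1)/2)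
      / (((a+1)/2+n) * n.factorial) * ((z-1)^2/(z+1)^2)^n with hSp
  have h4z : 4*z*S3 = (a+2)*(z+1)^2*Sm - (z*(4*a+z+2)+1)*Sp := by
    linear_combination ((z+1)^2) * hID + (S3 + a*Sp) * hxc
  have hreal : (z-1)^(a+1)/((a+1)*(z+1)^3) * S3
      = (z-1)^(a+1) / (4*(a+1)*z*(z+1)^3)
        * ((a+2)*(z+1)^2*Sm - (z*(4*a+z+2)+1)*Sp) := by
    rw [← h4z]
    field_simp
  rw [show ((a:ℂ)+2) = ((a+2 : ℝ) : ℂ) by push_cast; ring,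
    show ((z:ℂ)+1)^2 = (((z+1)^2 : ℝ) : ℂ) by push_cast; ring]
  norm_cast
end

section
/- Let a > −1 be real and M ∈ ℂ with Re M ≥ 1/2 and M ≠ 1/2. Then there exists a constant C > 0, depending only on a and M, such that for all reals t > b > 0: | ∫₀^{e^{−b} − e^{−t}} r^a ((e^{−t} + e^{−b})² − r²)^{−3/2 + M} dr | ≤ C (1 + (t−b)^κ) (e^t − e^b)^{a+1} (e^b + e^t)^{2 Re M − 3} e^{−(a + 2 Re M − 2)(b+t)}, where κ = 1 if Re M = 1/2 and κ = 0 otherwise. -/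
open MeasureTheory

set_option maxHeartbeats 2000000 in
theorem stmt10 (a : ℝ) (ha : a > -1) (M : ℂ) (hM : 1/2 ≤ M.re) (hM' : M ≠ 1/2) :
    ∃ C > 0, ∀ b t : ℝ, 0 < b → b < t →
      ‖
        (∫ r in Set.Ioo (0:ℝ) (Real.exp (-b) - Real.exp (-t)),
          ((r ^ a : ℝ) : ℂ) *
            (((Real.exp (-t) + Real.exp (-b)) ^ 2 - r ^ 2 : ℝ) : ℂ) ^ (-(3/2 : ℂ) + M))‖
        ≤ C * (1 + (t - b) ^ (if M.re = 1/2 then (1:ℝ) else 0)) *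
            (Real.exp t - Real.exp b) ^ (a + 1) *
            (Real.exp b + Real.exp t) ^ (2 * M.re - 3) *
            Real.exp (-(a + 2 * M.re - 2) * (b + t)) := by
  have ha1 : (0:ℝ) < a + 1 := by linarith
  set σ := M.re with hσ
  set c : ℝ := max 1 ((2:ℝ) ^ (-a)) with hc
  have hc1 : (1:ℝ) ≤ c := le_max_left _ _
  have hc0 : (0:ℝ) < c := lt_of_lt_of_le one_pos hc1
  set d : ℝ := if 1/2 < σ then (σ - 1/2)⁻¹ else 1 with hd
  have hd0 : 0 < d := by
    rw [hd]; split
    · exact inv_pos.mpr (by linarith)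
    · norm_num
  clear_value σ c d
  refine ⟨2/(a+1) + 2*c*(1 + d), by positivity, ?_⟩
  intro b t hb hbt
  set R := Real.exp (-b) - Real.exp (-t) with hR
  set S := Real.exp (-t) + Real.exp (-b) with hS
  set κ := (t - b) ^ (if σ = 1/2 then (1:ℝ) else 0) with hκdef
  clear_value R S κ
  have hexp : Real.exp (-t) < Real.exp (-b) := Real.exp_lt_exp.mpr (by linarith)
  have hR0 : 0 < R := by rw [hR]; exact sub_pos.mpr hexp
  have hRS : R < S := by rw [hR, hS]; have := Real.exp_pos (-t); linarith
  have hS0 : 0 < S := lt_trans hR0 hRS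
  have hSR : S - R = 2 * Real.exp (-t) := by rw [hR, hS]; ring
  have hSR0 : 0 < S - R := by rw [hSR]; positivity
  set p := σ - 3/2 with hp
  clear_value p
  have hpge : (-1:ℝ) ≤ p := by rw [hp]; linarith
  have hκ0 : 0 ≤ κ := by rw [hκdef]; exact Real.rpow_nonneg (by linarith) _
  -- RHS identity
  have hrhs : (Real.exp t - Real.exp b) ^ (a + 1) * (Real.exp b + Real.exp t) ^ (2*σ-3) *
      Real.exp (-(a + 2*σ - 2) * (b + t)) = R ^ (a+1) * S ^ (2*σ-3) := by
    have h1 : Real.exp t - Real.exp b = Real.exp (b+t) * R := by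
      rw [hR, mul_sub, ← Real.exp_add, ← Real.exp_add,
        show b + t + -b = t by ring, show b + t + -t = b by ring]
    have h2 : Real.exp b + Real.exp t = Real.exp (b+t) * S := by
      rw [hS, mul_add, ← Real.exp_add, ← Real.exp_add,
        show b + t + -t = b by ring, show b + t + -b = t by ring]
    rw [h1, h2, Real.mul_rpow (Real.exp_pos _).le hR0.le,
      Real.mul_rpow (Real.exp_pos _).le hS0.le, ← Real.exp_mul, ← Real.exp_mul]
    calc Real.exp ((b+t)*(a+1)) * R ^ (a+1) * (Real.exp ((b+t)*(2*σ-3)) * S ^ (2*σ-3)) *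
          Real.exp (-(a + 2*σ - 2) * (b + t))
        = (Real.exp ((b+t)*(a+1)) * Real.exp ((b+t)*(2*σ-3)) *
            Real.exp (-(a + 2*σ - 2) * (b + t))) * (R ^ (a+1) * S ^ (2*σ-3)) := by ring
      _ = R ^ (a+1) * S ^ (2*σ-3) := by
          rw [← Real.exp_add, ← Real.exp_add,
            show (b+t)*(a+1) + (b+t)*(2*σ-3) + -(a + 2*σ - 2)*(b+t) = 0 by ring,
            Real.exp_zero, one_mul]
  -- norm of integrand
  have key : ∀ r ∈ Set.Ioo (0:ℝ) R,
      ‖((r ^ a : ℝ) : ℂ) * ((S ^ 2 - r ^ 2 : ℝ) : ℂ) ^ (-(3/2 : ℂ) + M)‖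
        = r ^ a * (S ^ 2 - r ^ 2) ^ p := by
    intro r hr
    have hb2 : 0 < S ^ 2 - r ^ 2 := by nlinarith [hr.1, hr.2, hRS]
    have hre : (-(3/2:ℂ) + M).re = p := by rw [hp, hσ]; simp; ring
    rw [norm_mul, Complex.norm_real, Real.norm_eq_abs,
      abs_of_nonneg (Real.rpow_nonneg hr.1.le a),
      Complex.norm_cpow_eq_rpow_re_of_pos hb2, hre]
  -- (S^2)^p = S^(2σ-3)
  have hSsq : ((S ^ 2 : ℝ)) ^ p = S ^ (2*σ-3) := by
    rw [← Real.rpow_natCast S 2, ← Real.rpow_mul hS0.le]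
    congr 1
    push_cast
    rw [hp]; ring
  have half_pow : ∀ x : ℝ, 0 < x → (x/2) ^ p ≤ 2 * x ^ p := by
    intro x hx
    have h4 : (2:ℝ)⁻¹ ≤ (2:ℝ) ^ p := by
      have := Real.rpow_le_rpow_of_exponent_le (one_le_two) hpge
      rwa [Real.rpow_neg_one] at this
    rw [Real.div_rpow hx.le (by norm_num), div_le_iff₀ (Real.rpow_pos_of_pos two_pos p)]
    nlinarith [Real.rpow_nonneg hx.le p]
  -- basic integral facts
  have integA : IntegrableOn (fun r : ℝ => r ^ a) (Set.Ioo 0 R) :=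
    ((intervalIntegrable_iff_integrableOn_Ioc_of_le hR0.le).mp
      (intervalIntegral.intervalIntegrable_rpow' ha)).mono_set Set.Ioo_subset_Ioc_self
  have integB : IntegrableOn (fun r : ℝ => (S - r) ^ p) (Set.Ioo 0 R) := by
    have contB : ContinuousOn (fun r : ℝ => (S - r) ^ p) (Set.Icc 0 R) := by
      apply ContinuousOn.rpow_const (continuousOn_const.sub continuousOn_id)
      intro r hr
      left
      have h2 := hr.2
      intro h
      have h' : S - r = 0 := h
      nlinarith [hRS]
    exact (contB.integrableOn_compact isCompact_Icc).mono_set Set.Ioo_subset_Icc_self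
  have intA : ∫ r in Set.Ioo (0:ℝ) R, r ^ a = R ^ (a+1) / (a+1) := by
    rw [← integral_Ioc_eq_integral_Ioo, ← intervalIntegral.integral_of_le hR0.le,
      integral_rpow (Or.inl ha),
      Real.zero_rpow (ne_of_gt ha1), sub_zero]
  have hJeq : (∫ r in Set.Ioo (0:ℝ) R, (S - r) ^ p) = ∫ u in (S-R)..S, u ^ p := by
    rw [← integral_Ioc_eq_integral_Ioo, ← intervalIntegral.integral_of_le hR0.le]
    have h := intervalIntegral.integral_comp_sub_left (a := 0) (b := R) (fun u : ℝ => u ^ p) S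
    simpa using h
  -- main norm-integral bound
  have main : (∫ r in Set.Ioo (0:ℝ) R,
      ‖((r ^ a : ℝ) : ℂ) * ((S ^ 2 - r ^ 2 : ℝ) : ℂ) ^ (-(3/2 : ℂ) + M)‖)
      ≤ (2/(a+1) + 2*c*(1 + d)) * (1 + κ) * (R ^ (a+1) * S ^ (2*σ-3)) := by
    have hP : 0 < R ^ (a+1) := Real.rpow_pos_of_pos hR0 _
    have hQ : 0 < S ^ (2*σ-3) := Real.rpow_pos_of_pos hS0 _
    rcases lt_or_ge σ (3/2) with h32 | h32
    · -- p < 0 case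
      have hpneg : p < 0 := by rw [hp]; linarith
      -- J bound
      have hJ : (∫ r in Set.Ioo (0:ℝ) R, (S - r) ^ p) ≤ 2*(1+d)*(1+κ)*R*S^p := by
        have hSp : 0 < S ^ p := Real.rpow_pos_of_pos hS0 p
        rcases le_or_gt R (S/2) with hreg | hreg
        · -- flat regime
          have step1 : (∫ r in Set.Ioo (0:ℝ) R, (S - r) ^ p)
              ≤ ∫ _r in Set.Ioo (0:ℝ) R, (S - R) ^ p := by
            apply setIntegral_mono_on integB
              ((integrableOn_const_iff).mpr (Or.inr measure_Ioo_lt_top)) measurableSet_Ioo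
            intro r hr
            exact Real.rpow_le_rpow_of_nonpos hSR0 (by linarith [hr.2]) hpneg.le
          have step2 : (∫ _r in Set.Ioo (0:ℝ) R, (S - R) ^ p) = R * (S - R) ^ p := by
            rw [setIntegral_const, Real.volume_real_Ioo, sub_zero, max_eq_left hR0.le,
              smul_eq_mul]
          have step3 : (S - R) ^ p ≤ 2 * S ^ p := by
            have := Real.rpow_le_rpow_of_nonpos (by linarith : (0:ℝ) < S/2)
              (by linarith : S/2 ≤ S - R) hpneg.le
            exact this.trans (half_pow S hS0)
          calc (∫ r in Set.Ioo (0:ℝ) R, (S - r) ^ p) ≤ R * (S - R) ^ p := by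
                rw [← step2]; exact step1
            _ ≤ R * (2 * S ^ p) := by nlinarith
            _ ≤ 2*(1+d)*(1+κ)*R*S^p := by
                nlinarith [mul_nonneg hd0.le (mul_pos hR0 hSp).le,
                  mul_nonneg hκ0 (mul_pos hR0 hSp).le,
                  mul_nonneg (mul_nonneg hd0.le hκ0) (mul_pos hR0 hSp).le]
        · -- singular regime, S < 2R
          rcases eq_or_lt_of_le hM with hhalf | hhalf
          · -- σ = 1/2, p = -1
            have hσhalf : σ = 1/2 := hhalf.symm
            have hpm1 : p = -1 := by rw [hp, hσhalf]; norm_num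
            have hκeq : κ = t - b := by
              rw [hκdef, if_pos hσhalf, Real.rpow_one]
            have hlog : (∫ u in (S-R)..S, u ^ p) = Real.log (S / (S-R)) := by
              rw [hpm1]
              simp_rw [Real.rpow_neg_one]
              apply integral_inv
              intro h
              rw [Set.uIcc_of_le (by linarith)] at h
              exact absurd h.1 (by linarith)
            have hlog2 : Real.log (S / (S-R)) ≤ t - b := by
              have hle : S / (S - R) ≤ Real.exp (t - b) := by
                rw [div_le_iff₀ hSR0, hSR]
                have : Real.exp (t-b) * (2 * Real.exp (-t)) = 2 * Real.exp (-b) := by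
                  rw [show Real.exp (t-b) * (2*Real.exp (-t))
                      = 2*(Real.exp (t-b) * Real.exp (-t)) by ring,
                    ← Real.exp_add, show t - b + -t = -b by ring]
                rw [this, hS]; linarith
              calc Real.log (S / (S-R)) ≤ Real.log (Real.exp (t-b)) :=
                    Real.log_le_log (by positivity) hle
                _ = t - b := Real.log_exp _
            have h2RS : (1:ℝ) < 2 * R * S⁻¹ := by
              rw [← div_eq_mul_inv, lt_div_iff₀ hS0]; linarith
            have hd1 : d = 1 := by rw [hd, if_neg (by rw [hσhalf]; norm_num)]
            calc (∫ r in Set.Ioo (0:ℝ) R, (S - r) ^ p) = ∫ u in (S-R)..S, u ^ p := hJeq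
              _ ≤ t - b := by rw [hlog]; exact hlog2
              _ ≤ 2*(1+d)*(1+κ)*R*S^p := by
                  rw [hpm1, Real.rpow_neg_one, hd1, ← hκeq]
                  nlinarith [hκ0]
          · -- σ > 1/2
            have hp1 : (-1:ℝ) < p := by rw [hp]; linarith
            have hd2 : d = (p+1)⁻¹ := by
              rw [hd, if_pos hhalf, hp]
              congr 1; ring
            have hint : (∫ u in (S-R)..S, u ^ p) = (S^(p+1) - (S-R)^(p+1))/(p+1) :=
              integral_rpow (Or.inl hp1)
            have hb1 : (∫ u in (S-R)..S, u ^ p) ≤ S^(p+1)/(p+1) := by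
              rw [hint]
              apply div_le_div_of_nonneg_right
                (sub_le_self _ (Real.rpow_nonneg hSR0.le _)) (by linarith)
            have hSp1 : S^(p+1) = S^p * S := by
              rw [Real.rpow_add hS0, Real.rpow_one]
            calc (∫ r in Set.Ioo (0:ℝ) R, (S - r) ^ p) = ∫ u in (S-R)..S, u ^ p := hJeq
              _ ≤ S^(p+1)/(p+1) := hb1
              _ = d * (S^p * S) := by rw [hSp1, hd2, div_eq_mul_inv, mul_comm]
              _ ≤ 2*(1+d)*(1+κ)*R*S^p := by
                  nlinarith [mul_nonneg (mul_pos hd0 hSp).le (by linarith : (0:ℝ) ≤ 2*R - S),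
                    (mul_pos hR0 hSp).le,
                    mul_nonneg hκ0 (mul_pos hR0 hSp).le,
                    mul_nonneg (mul_nonneg hκ0 hd0.le) (mul_pos hR0 hSp).le]
      -- pointwise bound
      have hpt : ∀ r ∈ Set.Ioo (0:ℝ) R,
          ‖((r ^ a : ℝ) : ℂ) * ((S ^ 2 - r ^ 2 : ℝ) : ℂ) ^ (-(3/2 : ℂ) + M)‖
            ≤ 2*S^(2*σ-3)*r^a + (c*R^a*S^p)*(S-r)^p := by
        intro r hr
        obtain ⟨hr0, hrR⟩ := hr
        have hrS : r < S := hrR.trans hRS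
        have hb2 : 0 < S ^ 2 - r ^ 2 := by nlinarith
        rw [key r ⟨hr0, hrR⟩]
        have hterm2 : 0 ≤ (c*R^a*S^p)*(S-r)^p :=
          mul_nonneg (by positivity) (Real.rpow_nonneg (by linarith) p)
        have hterm1 : 0 ≤ 2*S^(2*σ-3)*r^a := by positivity
        rcases le_or_gt (2*r) S with h2r | h2r
        · have h1 : S^2/2 ≤ S^2 - r^2 := by nlinarith
          have h2 : (S^2 - r^2)^p ≤ (S^2/2)^p :=
            Real.rpow_le_rpow_of_nonpos (by positivity) h1 hpneg.le
          have h3 : (S^2/2)^p ≤ 2*S^(2*σ-3) := by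
            rw [← hSsq]; exact half_pow (S^2) (by positivity)
          nlinarith [Real.rpow_nonneg hr0.le a,
            mul_le_mul_of_nonneg_left (h2.trans h3) (Real.rpow_nonneg hr0.le a)]
        · have hr2 : R/2 < r := by linarith
          have hra : r^a ≤ c*R^a := by
            rcases le_or_gt 0 a with haa | haa
            · exact le_trans (Real.rpow_le_rpow hr0.le hrR.le haa)
                (le_mul_of_one_le_left (Real.rpow_nonneg hR0.le a) hc1)
            · calc r^a ≤ (R/2)^a :=
                    Real.rpow_le_rpow_of_nonpos (by linarith) hr2.le haa.le
                _ = R^a * (2:ℝ)^(-a) := by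
                    rw [Real.div_rpow hR0.le (by norm_num), Real.rpow_neg (by norm_num),
                      div_eq_mul_inv]
                _ ≤ R^a * c := mul_le_mul_of_nonneg_left
                    (by rw [hc]; exact le_max_right _ _) (Real.rpow_nonneg hR0.le a)
                _ = c * R^a := mul_comm _ _
          have hsplit : (S^2 - r^2)^p = (S-r)^p * (S+r)^p := by
            rw [← Real.mul_rpow (by linarith) (by linarith)]
            congr 1; ring
          have h6 : (S+r)^p ≤ S^p := Real.rpow_le_rpow_of_nonpos hS0 (by linarith) hpneg.le
          calc r^a * (S^2-r^2)^p = r^a * ((S-r)^p * (S+r)^p) := by rw [hsplit]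
            _ ≤ (c*R^a) * ((S-r)^p * S^p) := by
                apply mul_le_mul hra
                  (mul_le_mul_of_nonneg_left h6 (Real.rpow_nonneg (by linarith) p))
                  (mul_nonneg (Real.rpow_nonneg (by linarith) p)
                    (Real.rpow_nonneg (by linarith) p))
                  (by positivity)
            _ = (c*R^a*S^p)*(S-r)^p := by ring
            _ ≤ 2*S^(2*σ-3)*r^a + (c*R^a*S^p)*(S-r)^p := le_add_of_nonneg_left hterm1
      -- put together
      have hInt : Integrable (fun r : ℝ => 2*S^(2*σ-3)*r^a + (c*R^a*S^p)*(S-r)^p)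
          (volume.restrict (Set.Ioo 0 R)) :=
        (integA.const_mul _).add (integB.const_mul _)
      have step : (∫ r in Set.Ioo (0:ℝ) R,
          ‖((r ^ a : ℝ) : ℂ) * ((S ^ 2 - r ^ 2 : ℝ) : ℂ) ^ (-(3/2 : ℂ) + M)‖)
          ≤ ∫ r in Set.Ioo (0:ℝ) R, (2*S^(2*σ-3)*r^a + (c*R^a*S^p)*(S-r)^p) :=
        integral_mono_of_nonneg (Filter.Eventually.of_forall fun r => norm_nonneg _) hInt
          ((ae_restrict_iff' measurableSet_Ioo).mpr (Filter.Eventually.of_forall hpt))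
      have heval : (∫ r in Set.Ioo (0:ℝ) R, (2*S^(2*σ-3)*r^a + (c*R^a*S^p)*(S-r)^p))
          = 2*S^(2*σ-3)*(R^(a+1)/(a+1)) + (c*R^a*S^p)*(∫ r in Set.Ioo (0:ℝ) R, (S-r)^p) := by
        rw [integral_add (integA.const_mul _) (integB.const_mul _),
          integral_const_mul, integral_const_mul, intA]
      have e1 : R^a * R = R^(a+1) := by rw [Real.rpow_add hR0, Real.rpow_one]
      have e2 : S^p * S^p = S^(2*σ-3) := by
        rw [← Real.rpow_add hS0]; congr 1; rw [hp]; ring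
      have hnn : (0:ℝ) ≤ c*R^a*S^p := by positivity
      calc (∫ r in Set.Ioo (0:ℝ) R,
            ‖((r ^ a : ℝ) : ℂ) * ((S ^ 2 - r ^ 2 : ℝ) : ℂ) ^ (-(3/2 : ℂ) + M)‖)
          ≤ 2*S^(2*σ-3)*(R^(a+1)/(a+1)) + (c*R^a*S^p)*(∫ r in Set.Ioo (0:ℝ) R, (S-r)^p) := by
            rw [← heval]; exact step
        _ ≤ 2*S^(2*σ-3)*(R^(a+1)/(a+1)) + (c*R^a*S^p)*(2*(1+d)*(1+κ)*R*S^p) := by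
            nlinarith [mul_le_mul_of_nonneg_left hJ hnn]
        _ = (2/(a+1))*(R^(a+1)*S^(2*σ-3)) + (2*c*(1+d)*(1+κ))*(R^(a+1)*S^(2*σ-3)) := by
            rw [← e1, ← e2]; ring
        _ ≤ (2/(a+1) + 2*c*(1 + d)) * (1 + κ) * (R ^ (a+1) * S ^ (2*σ-3)) := by
            nlinarith [mul_nonneg (mul_nonneg (div_pos two_pos ha1).le hκ0)
              (mul_pos hP hQ).le]
    · -- σ ≥ 3/2, p ≥ 0
      have hppos : 0 ≤ p := by rw [hp]; linarith
      have hpt : ∀ r ∈ Set.Ioo (0:ℝ) R,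
          ‖((r ^ a : ℝ) : ℂ) * ((S ^ 2 - r ^ 2 : ℝ) : ℂ) ^ (-(3/2 : ℂ) + M)‖
            ≤ S^(2*σ-3) * r^a := by
        intro r hr
        rw [key r hr]
        have h1 : (S^2 - r^2)^p ≤ S^(2*σ-3) := by
          rw [← hSsq]
          apply Real.rpow_le_rpow (by nlinarith [hr.1, hr.2, hRS]) (by nlinarith [hr.1]) hppos
        nlinarith [Real.rpow_nonneg hr.1.le a,
          mul_le_mul_of_nonneg_left h1 (Real.rpow_nonneg hr.1.le a)]
      have step : (∫ r in Set.Ioo (0:ℝ) R,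
          ‖((r ^ a : ℝ) : ℂ) * ((S ^ 2 - r ^ 2 : ℝ) : ℂ) ^ (-(3/2 : ℂ) + M)‖)
          ≤ ∫ r in Set.Ioo (0:ℝ) R, S^(2*σ-3) * r^a :=
        integral_mono_of_nonneg (Filter.Eventually.of_forall fun r => norm_nonneg _)
          (integA.const_mul _)
          ((ae_restrict_iff' measurableSet_Ioo).mpr (Filter.Eventually.of_forall hpt))
      have heval : (∫ r in Set.Ioo (0:ℝ) R, S^(2*σ-3) * r^a)
          = S^(2*σ-3) * (R^(a+1)/(a+1)) := by rw [integral_const_mul, intA]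
      calc (∫ r in Set.Ioo (0:ℝ) R,
            ‖((r ^ a : ℝ) : ℂ) * ((S ^ 2 - r ^ 2 : ℝ) : ℂ) ^ (-(3/2 : ℂ) + M)‖)
          ≤ S^(2*σ-3) * (R^(a+1)/(a+1)) := by rw [← heval]; exact step
        _ = (1/(a+1)) * (R^(a+1)*S^(2*σ-3)) := by ring
        _ ≤ (2/(a+1) + 2*c*(1 + d)) * (1 + κ) * (R ^ (a+1) * S ^ (2*σ-3)) := by
            apply mul_le_mul_of_nonneg_right ?_ (mul_pos hP hQ).le
            rw [div_eq_mul_inv, div_eq_mul_inv]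
            have h1 : 0 < (a+1)⁻¹ := inv_pos.mpr ha1
            generalize (a+1)⁻¹ = x at h1 ⊢
            nlinarith [mul_nonneg (mul_nonneg hc0.le (by linarith : (0:ℝ) ≤ 1+d))
                (by linarith : (0:ℝ) ≤ 1+κ), mul_nonneg h1.le hκ0]

  exact le_trans (norm_integral_le_integral_norm _) (le_trans main (le_of_eq (by rw [← hrhs]; ring)))
end

section
/- Let a > −1 be real and M ∈ ℂ with Re M ≥ 3/2 and M ≠ 3/2. Then there exists a constant C > 0, depending only on a and M, such that for all reals t > b > 0: | ∫₀^{e^{−b} − e^{−t}} r^a ((e^{−t} + e^{−b})² − r²)^{−5/2 + M} dr | ≤ C (1 + (t−b)^κ) e^{−(a + 2 Re M − 4)(b+t)} (e^t − e^b)^{1+a} (e^b + e^t)^{2 Re M − 5}, where κ = 1 if Re M = 3/2 and κ = 0 otherwise. -/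
open MeasureTheory Set

private lemma rpow_int_Ioc {v a : ℝ} (hv : 0 < v) (ha : -1 < a) :
    ∫ r in Ioc (0:ℝ) v, r ^ a = v ^ (a + 1) / (a + 1) := by
  rw [← intervalIntegral.integral_of_le hv.le, integral_rpow (Or.inl ha),
    Real.zero_rpow (by linarith : a + 1 ≠ 0)]
  ring

private lemma sq_rpow {s : ℝ} (hs : 0 < s) (α : ℝ) : (s ^ 2) ^ α = s ^ (2 * α) := by
  rw [← Real.rpow_natCast s 2, ← Real.rpow_mul hs.le]
  norm_num

set_option maxHeartbeats 2000000 in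
private lemma keyA (a α : ℝ) (ha : a > -1) (hα : -1 ≤ α) :
    ∃ C > 0, ∀ u s D : ℝ, 0 < u → u < s → 1 ≤ D →
      (α = -1 → Real.log (s / (s - u)) ≤ D) →
      ∫ r in Ioo (0:ℝ) u, r ^ a * (s ^ 2 - r ^ 2) ^ α ≤
        C * D * u ^ (1 + a) * s ^ (2 * α) := by
  have ha1 : (0:ℝ) < a + 1 := by linarith
  have hrint : ∀ v : ℝ, IntegrableOn (fun r : ℝ => r ^ a) (Ioc 0 v) :=
    fun v => (intervalIntegral.intervalIntegrable_rpow' (by linarith)).1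
  have main : ∀ C₀ : ℝ, ∀ u s D : ℝ,
      (∫ r in Ioc (0:ℝ) u, r ^ a * (s ^ 2 - r ^ 2) ^ α ≤
        C₀ * D * u ^ (1 + a) * s ^ (2 * α)) →
      (∫ r in Ioo (0:ℝ) u, r ^ a * (s ^ 2 - r ^ 2) ^ α ≤
        C₀ * D * u ^ (1 + a) * s ^ (2 * α)) := by
    intro C₀ u s D h
    rwa [← integral_Ioc_eq_integral_Ioo]
  rcases le_or_gt 0 α with h0 | h0
  · -- case 0 ≤ α
    refine ⟨1 / (a + 1), by positivity, fun u s D hu hus hD _ => ?_⟩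
    apply main
    have hs : (0:ℝ) < s := hu.trans hus
    have hdom : IntegrableOn (fun r : ℝ => (s ^ 2) ^ α * r ^ a) (Ioc 0 u) :=
      (hrint u).const_mul _
    have hint : IntegrableOn (fun r : ℝ => r ^ a * (s ^ 2 - r ^ 2) ^ α) (Ioc 0 u) := by
      refine Integrable.mono' hdom ?_ ?_
      · exact (Measurable.aestronglyMeasurable (by fun_prop)).restrict
      · filter_upwards [ae_restrict_mem measurableSet_Ioc] with r hr
        have h1 : 0 < r := hr.1
        have hb : (0:ℝ) ≤ s ^ 2 - r ^ 2 := by nlinarith [hr.2]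
        rw [Real.norm_eq_abs, abs_of_nonneg (by positivity)]
        rw [mul_comm]
        refine mul_le_mul_of_nonneg_right ?_ (Real.rpow_nonneg h1.le a)
        exact Real.rpow_le_rpow hb (by nlinarith) h0
    calc ∫ r in Ioc (0:ℝ) u, r ^ a * (s ^ 2 - r ^ 2) ^ α
        ≤ ∫ r in Ioc (0:ℝ) u, (s ^ 2) ^ α * r ^ a := by
          refine setIntegral_mono_on hint hdom measurableSet_Ioc fun r hr => ?_
          have h1 : 0 < r := hr.1
          have hb : (0:ℝ) ≤ s ^ 2 - r ^ 2 := by nlinarith [hr.2]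
          rw [mul_comm]
          refine mul_le_mul_of_nonneg_right ?_ (Real.rpow_nonneg h1.le a)
          exact Real.rpow_le_rpow hb (by nlinarith) h0
      _ = (s ^ 2) ^ α * (u ^ (a + 1) / (a + 1)) := by
          rw [integral_const_mul, rpow_int_Ioc hu (by linarith)]
      _ ≤ 1 / (a + 1) * D * u ^ (1 + a) * s ^ (2 * α) := by
          rw [sq_rpow hs, add_comm a 1]
          have h1 : (0:ℝ) ≤ s ^ (2 * α) := Real.rpow_nonneg hs.le _
          have h2 : (0:ℝ) ≤ u ^ (1 + a) := Real.rpow_nonneg hu.le _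
          calc s ^ (2 * α) * (u ^ (1 + a) / (1 + a))
              = 1 / (1 + a) * 1 * u ^ (1 + a) * s ^ (2 * α) := by ring
            _ ≤ 1 / (1 + a) * D * u ^ (1 + a) * s ^ (2 * α) := by
                have hq : (0:ℝ) ≤ 1 / (1 + a) := div_nonneg zero_le_one (by linarith)
                have := mul_le_mul_of_nonneg_right
                  (mul_le_mul_of_nonneg_right
                    (mul_le_mul_of_nonneg_left hD hq) h2) h1
                nlinarith
  · -- case α < 0
    set K : ℝ := (1 / 2 : ℝ) ^ a + 1 with hK
    set c₃ : ℝ := (2:ℝ) ^ (-α - 1) + 2 + 2 / (α + 1) with hc₃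
    set C₁ : ℝ := (3 / 4 : ℝ) ^ α / (a + 1) with hC₁
    have hdivnn : (0:ℝ) ≤ 2 / (α + 1) := div_nonneg (by norm_num) (by linarith)
    have hppos : (0:ℝ) < (2:ℝ) ^ (-α - 1) := Real.rpow_pos_of_pos (by norm_num) _
    have hKpos : 0 < K := by positivity
    have hc₃pos : 0 < c₃ := by rw [hc₃]; linarith
    have hc₃2 : 2 ≤ c₃ := by rw [hc₃]; linarith
    have hC₁pos : 0 < C₁ := by
      rw [hC₁]
      positivity
    refine ⟨C₁ + K * c₃, by positivity, fun u s D hu hus hD hlog => ?_⟩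
    apply main
    have hs : (0:ℝ) < s := hu.trans hus
    have hu2 : (0:ℝ) < u / 2 := by linarith
    have hsu : (0:ℝ) < s - u := by linarith
    have hDpos : (0:ℝ) < D := by linarith
    have hXnn : (0:ℝ) ≤ u ^ (1 + a) * s ^ (2 * α) :=
      mul_nonneg (Real.rpow_nonneg hu.le _) (Real.rpow_nonneg hs.le _)
    -- integrability of the integrand on Ioc 0 u
    have hdom : IntegrableOn (fun r : ℝ => (s ^ 2 - u ^ 2) ^ α * r ^ a) (Ioc 0 u) :=
      (hrint u).const_mul _
    have hsub : ∀ r ∈ Ioc (0:ℝ) u, r ^ a * (s ^ 2 - r ^ 2) ^ α ≤ (s ^ 2 - u ^ 2) ^ α * r ^ a := by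
      intro r hr
      have h1 : 0 < r := hr.1
      rw [mul_comm]
      refine mul_le_mul_of_nonneg_right ?_ (Real.rpow_nonneg h1.le a)
      refine Real.rpow_le_rpow_of_nonpos (by nlinarith [hr.2]) (by nlinarith [hr.2]) h0.le
    have hint : IntegrableOn (fun r : ℝ => r ^ a * (s ^ 2 - r ^ 2) ^ α) (Ioc 0 u) := by
      refine Integrable.mono' hdom ?_ ?_
      · exact (Measurable.aestronglyMeasurable (by fun_prop)).restrict
      · filter_upwards [ae_restrict_mem measurableSet_Ioc] with r hr
        have h1 : 0 < r := hr.1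
        have hb : (0:ℝ) < s ^ 2 - r ^ 2 := by nlinarith [hr.2]
        rw [Real.norm_eq_abs, abs_of_nonneg (by positivity)]
        exact hsub r hr
    -- split the integral
    have hii1 : IntervalIntegrable (fun r : ℝ => r ^ a * (s ^ 2 - r ^ 2) ^ α) volume 0 (u / 2) := by
      rw [intervalIntegrable_iff_integrableOn_Ioc_of_le hu2.le]
      exact hint.mono_set (Ioc_subset_Ioc_right (by linarith))
    have hii2 : IntervalIntegrable (fun r : ℝ => r ^ a * (s ^ 2 - r ^ 2) ^ α) volume (u / 2) u := by
      rw [intervalIntegrable_iff_integrableOn_Ioc_of_le (by linarith)]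
      exact hint.mono_set (Ioc_subset_Ioc_left hu2.le)
    have hsplit : ∫ r in Ioc (0:ℝ) u, r ^ a * (s ^ 2 - r ^ 2) ^ α
        = (∫ r in Ioc (0:ℝ) (u / 2), r ^ a * (s ^ 2 - r ^ 2) ^ α)
          + ∫ r in Ioc (u / 2) u, r ^ a * (s ^ 2 - r ^ 2) ^ α := by
      rw [← intervalIntegral.integral_of_le hu.le,
        ← intervalIntegral.integral_of_le hu2.le,
        ← intervalIntegral.integral_of_le (by linarith : u / 2 ≤ u),
        intervalIntegral.integral_add_adjacent_intervals hii1 hii2]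
    -- piece 1
    have hp1 : ∫ r in Ioc (0:ℝ) (u / 2), r ^ a * (s ^ 2 - r ^ 2) ^ α
        ≤ C₁ * (u ^ (1 + a) * s ^ (2 * α)) := by
      have hdom1 : IntegrableOn (fun r : ℝ => (3 / 4 * s ^ 2) ^ α * r ^ a) (Ioc 0 (u / 2)) :=
        (hrint _).const_mul _
      have h2 : (u / 2) ^ (a + 1) ≤ u ^ (a + 1) :=
        Real.rpow_le_rpow hu2.le (by linarith) ha1.le
      calc ∫ r in Ioc (0:ℝ) (u / 2), r ^ a * (s ^ 2 - r ^ 2) ^ α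
          ≤ ∫ r in Ioc (0:ℝ) (u / 2), (3 / 4 * s ^ 2) ^ α * r ^ a := by
            refine setIntegral_mono_on
              (hint.mono_set (Ioc_subset_Ioc_right (by linarith))) hdom1
              measurableSet_Ioc fun r hr => ?_
            have h1 : 0 < r := hr.1
            have h2 : r ≤ u / 2 := hr.2
            rw [mul_comm]
            refine mul_le_mul_of_nonneg_right ?_ (Real.rpow_nonneg h1.le a)
            refine Real.rpow_le_rpow_of_nonpos (by positivity) ?_ h0.le
            nlinarith
        _ = (3 / 4 * s ^ 2) ^ α * ((u / 2) ^ (a + 1) / (a + 1)) := by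
            rw [integral_const_mul, rpow_int_Ioc hu2 (by linarith)]
        _ = (3 / 4 : ℝ) ^ α * s ^ (2 * α) * (u / 2) ^ (a + 1) / (a + 1) := by
            rw [Real.mul_rpow (by norm_num) (by positivity), sq_rpow hs]; ring
        _ ≤ (3 / 4 : ℝ) ^ α * s ^ (2 * α) * u ^ (a + 1) / (a + 1) := by
            gcongr
        _ = C₁ * (u ^ (1 + a) * s ^ (2 * α)) := by
            rw [hC₁, add_comm a 1]; ring
    -- piece 2 pointwise
    have hIcont : IntegrableOn (fun r : ℝ => (s - r) ^ α) (Ioc (u / 2) u) := by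
      have hc : ContinuousOn (fun r : ℝ => (s - r) ^ α) (Icc (u / 2) u) := by
        refine ContinuousOn.rpow_const
          ((continuous_const.sub continuous_id).continuousOn) ?_
        intro x hx
        left
        intro hcon
        nlinarith [hx.2]
      exact hc.integrableOn_Icc.mono_set Ioc_subset_Icc_self
    have hp2 : ∫ r in Ioc (u / 2) u, r ^ a * (s ^ 2 - r ^ 2) ^ α
        ≤ K * (u ^ a * s ^ α) * ∫ r in Ioc (u / 2) u, (s - r) ^ α := by
      calc ∫ r in Ioc (u / 2) u, r ^ a * (s ^ 2 - r ^ 2) ^ α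
          ≤ ∫ r in Ioc (u / 2) u, K * (u ^ a * s ^ α) * (s - r) ^ α := by
            refine setIntegral_mono_on (hint.mono_set (Ioc_subset_Ioc_left hu2.le))
              (hIcont.const_mul _) measurableSet_Ioc fun r hr => ?_
            obtain ⟨hr1, hr2⟩ := hr
            have hrpos : 0 < r := lt_trans hu2 hr1
            have hsr : 0 < s - r := by linarith
            have hra : r ^ a ≤ K * u ^ a := by
              rcases le_or_gt 0 a with haa | haa
              · have h1 : r ^ a ≤ u ^ a := Real.rpow_le_rpow hrpos.le hr2 haa
                have hnn : (0:ℝ) ≤ (1 / 2 : ℝ) ^ a * u ^ a := by positivity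
                rw [hK]; nlinarith
              · have h1 : r ^ a ≤ (u / 2) ^ a :=
                  Real.rpow_le_rpow_of_nonpos hu2 hr1.le haa.le
                have h2 : (u / 2) ^ a = (1 / 2 : ℝ) ^ a * u ^ a := by
                  rw [show u / 2 = (1 / 2 : ℝ) * u by ring,
                    Real.mul_rpow (by norm_num) hu.le]
                have hnn : (0:ℝ) ≤ u ^ a := Real.rpow_nonneg hu.le _
                rw [hK]; nlinarith
            have hfac : (s ^ 2 - r ^ 2) ^ α = (s - r) ^ α * (s + r) ^ α := by
              rw [show s ^ 2 - r ^ 2 = (s - r) * (s + r) by ring,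
                Real.mul_rpow hsr.le (by linarith)]
            have hsum : (s + r) ^ α ≤ s ^ α :=
              Real.rpow_le_rpow_of_nonpos hs (by linarith) h0.le
            calc r ^ a * (s ^ 2 - r ^ 2) ^ α
                = r ^ a * ((s - r) ^ α * (s + r) ^ α) := by rw [hfac]
              _ ≤ (K * u ^ a) * ((s - r) ^ α * s ^ α) := by
                  refine mul_le_mul hra ?_ (by positivity) (by positivity)
                  exact mul_le_mul_of_nonneg_left hsum (Real.rpow_nonneg hsr.le _)
              _ = K * (u ^ a * s ^ α) * (s - r) ^ α := by ring
        _ = K * (u ^ a * s ^ α) * ∫ r in Ioc (u / 2) u, (s - r) ^ α :=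
            integral_const_mul _ _
    -- bound on J
    have hJle : (∫ r in Ioc (u / 2) u, (s - r) ^ α) ≤ c₃ * D * (u * s ^ α) := by
      have hsann : (0:ℝ) ≤ s ^ α := Real.rpow_nonneg hs.le _
      rcases le_or_gt u (s / 2) with hcase | hcase
      · -- u small
        calc (∫ r in Ioc (u / 2) u, (s - r) ^ α)
            ≤ ∫ _r in Ioc (u / 2) u, (s / 2) ^ α := by
              refine setIntegral_mono_on hIcont
                (integrableOn_const measure_Ioc_lt_top.ne) measurableSet_Ioc
                fun r hr => ?_
              exact Real.rpow_le_rpow_of_nonpos (by linarith) (by linarith [hr.2]) h0.le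
          _ = (u - u / 2) * (s / 2) ^ α := by
              rw [setIntegral_const, Real.volume_real_Ioc,
                max_eq_left (by linarith : (0:ℝ) ≤ u - u / 2), smul_eq_mul]
          _ = (2:ℝ) ^ (-α - 1) * (1 * (u * s ^ α)) := by
              rw [Real.div_rpow hs.le (by norm_num),
                show -α - 1 = -α + -1 by ring, Real.rpow_add (by norm_num),
                Real.rpow_neg (by norm_num : (0:ℝ) ≤ 2), Real.rpow_neg_one]
              have h2ne : ((2:ℝ) ^ α) ≠ 0 := (Real.rpow_pos_of_pos (by norm_num) α).ne'
              field_simp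
              ring
          _ ≤ c₃ * (D * (u * s ^ α)) := by
              have hun : (0:ℝ) ≤ u * s ^ α := mul_nonneg hu.le hsann
              have hb1 : (2:ℝ) ^ (-α - 1) ≤ c₃ := by rw [hc₃]; linarith
              have hb2 : 1 * (u * s ^ α) ≤ D * (u * s ^ α) :=
                mul_le_mul_of_nonneg_right (by linarith) hun
              exact mul_le_mul hb1 hb2 (by linarith) hc₃pos.le
          _ = c₃ * D * (u * s ^ α) := by ring
      · rcases eq_or_lt_of_le hα with hm1 | hm1
        · -- α = -1
          have hα1 : α = -1 := hm1.symm
          have hJeq : (∫ r in Ioc (u / 2) u, (s - r) ^ α)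
              = Real.log ((s - u / 2) / (s - u)) := by
            simp only [hα1, Real.rpow_neg_one]
            rw [← intervalIntegral.integral_of_le (by linarith : u / 2 ≤ u)]
            rw [show (∫ r in (u/2)..u, (s - r)⁻¹)
                = ∫ x in (s - u)..(s - u/2), x⁻¹ from
              intervalIntegral.integral_comp_sub_left (fun x => x⁻¹) s]
            exact integral_inv_of_pos (by linarith) (by linarith)
          rw [hJeq]
          have hlog1 : Real.log ((s - u / 2) / (s - u)) ≤ Real.log (s / (s - u)) := by
            apply Real.log_le_log (div_pos (by linarith) hsu)
            gcongr
            linarith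
          have hlog2 : Real.log (s / (s - u)) ≤ D := hlog hα1
          have hsinv : s * s⁻¹ = 1 := mul_inv_cancel₀ hs.ne'
          have hsa : s ^ α = s⁻¹ := by rw [hα1, Real.rpow_neg_one]
          rw [hsa]
          have hinvnn : (0:ℝ) ≤ s⁻¹ := inv_nonneg.mpr hs.le
          -- D ≤ c₃ * D * (u * s⁻¹) since 2 * u * s⁻¹ ≥ s * s⁻¹ = 1 and c₃ ≥ 2
          have h1 : (1:ℝ) ≤ 2 * (u * s⁻¹) := by
            have : s * s⁻¹ ≤ 2 * u * s⁻¹ := by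
              apply mul_le_mul_of_nonneg_right (by linarith) hinvnn
            rw [hsinv] at this
            linarith [this]
          have h2 : D ≤ c₃ * D * (u * s⁻¹) := by
            have h3 : D * 1 ≤ D * (2 * (u * s⁻¹)) :=
              mul_le_mul_of_nonneg_left h1 hDpos.le
            have h4 : 2 * D * (u * s⁻¹) ≤ c₃ * D * (u * s⁻¹) := by
              apply mul_le_mul_of_nonneg_right ?_ (mul_nonneg hu.le hinvnn)
              apply mul_le_mul_of_nonneg_right hc₃2 hDpos.le
            nlinarith
          linarith
        · -- -1 < α < 0
          have ha2 : (0:ℝ) < α + 1 := by linarith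
          have hJeq : (∫ r in Ioc (u / 2) u, (s - r) ^ α)
              = ((s - u / 2) ^ (α + 1) - (s - u) ^ (α + 1)) / (α + 1) := by
            rw [← intervalIntegral.integral_of_le (by linarith : u / 2 ≤ u)]
            rw [show (∫ r in (u/2)..u, (s - r) ^ α)
                = ∫ x in (s - u)..(s - u/2), x ^ α from
              intervalIntegral.integral_comp_sub_left (fun x => x ^ α) s]
            exact integral_rpow (Or.inl hm1)
          rw [hJeq]
          calc ((s - u / 2) ^ (α + 1) - (s - u) ^ (α + 1)) / (α + 1)
              ≤ (s - u / 2) ^ (α + 1) / (α + 1) := by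
                refine (div_le_div_iff_of_pos_right ha2).mpr ?_
                nlinarith [Real.rpow_nonneg hsu.le (α + 1)]
            _ ≤ s ^ (α + 1) / (α + 1) :=
                (div_le_div_iff_of_pos_right ha2).mpr
                  (Real.rpow_le_rpow (by linarith) (by linarith) ha2.le)
            _ = s ^ α * s / (α + 1) := by rw [Real.rpow_add_one hs.ne']
            _ ≤ s ^ α * (2 * u) / (α + 1) :=
                (div_le_div_iff_of_pos_right ha2).mpr
                  (mul_le_mul_of_nonneg_left (by linarith) hsann)
            _ = 2 / (α + 1) * (1 * (u * s ^ α)) := by ring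
            _ ≤ c₃ * (D * (u * s ^ α)) := by
                have hun : (0:ℝ) ≤ u * s ^ α := mul_nonneg hu.le hsann
                have hb1 : 2 / (α + 1) ≤ c₃ := by rw [hc₃]; linarith
                have hb2 : 1 * (u * s ^ α) ≤ D * (u * s ^ α) :=
                  mul_le_mul_of_nonneg_right (by linarith) hun
                exact mul_le_mul hb1 hb2 (by linarith) hc₃pos.le
            _ = c₃ * D * (u * s ^ α) := by ring
    -- combine
    have hu1a : u ^ (1 + a) = u ^ a * u := by
      rw [add_comm, Real.rpow_add_one hu.ne']
    have hs2a : s ^ (2 * α) = s ^ α * s ^ α := by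
      rw [show 2 * α = α + α by ring, Real.rpow_add hs]
    have hJnn : (0:ℝ) ≤ ∫ r in Ioc (u / 2) u, (s - r) ^ α :=
      setIntegral_nonneg measurableSet_Ioc fun r hr =>
        Real.rpow_nonneg (by linarith [hr.2] : (0:ℝ) ≤ s - r) _
    calc ∫ r in Ioc (0:ℝ) u, r ^ a * (s ^ 2 - r ^ 2) ^ α
        = (∫ r in Ioc (0:ℝ) (u / 2), r ^ a * (s ^ 2 - r ^ 2) ^ α)
          + ∫ r in Ioc (u / 2) u, r ^ a * (s ^ 2 - r ^ 2) ^ α := hsplit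
      _ ≤ C₁ * (u ^ (1 + a) * s ^ (2 * α))
          + K * (u ^ a * s ^ α) * (c₃ * D * (u * s ^ α)) := by
          refine add_le_add hp1 (le_trans hp2 ?_)
          apply mul_le_mul_of_nonneg_left hJle
          positivity
      _ = C₁ * (u ^ (1 + a) * s ^ (2 * α))
          + K * c₃ * D * (u ^ (1 + a) * s ^ (2 * α)) := by
          rw [hu1a, hs2a]; ring
      _ ≤ (C₁ + K * c₃) * D * u ^ (1 + a) * s ^ (2 * α) := by
          have hX : C₁ * (u ^ (1 + a) * s ^ (2 * α)) ≤ C₁ * D * (u ^ (1 + a) * s ^ (2 * α)) := by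
            have := mul_le_mul_of_nonneg_right hD hXnn
            nlinarith
          nlinarith

set_option maxHeartbeats 1000000 in
theorem stmt11 (a : ℝ) (ha : a > -1) (M : ℂ) (hM : 3/2 ≤ M.re) (hM' : M ≠ 3/2) :
    ∃ C > 0, ∀ b t : ℝ, 0 < b → b < t →
      ‖(∫ r in Set.Ioo (0:ℝ) (Real.exp (-b) - Real.exp (-t)),
          ((r ^ a : ℝ) : ℂ) *
            (((Real.exp (-t) + Real.exp (-b)) ^ 2 - r ^ 2 : ℝ) : ℂ) ^ (-(5/2 : ℂ) + M))‖
        ≤ C * (1 + (t - b) ^ (if M.re = 3/2 then (1:ℝ) else 0)) *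
            Real.exp (-(a + 2 * M.re - 4) * (b + t)) *
            (Real.exp t - Real.exp b) ^ (1 + a) *
            (Real.exp b + Real.exp t) ^ (2 * M.re - 5) := by
  obtain ⟨C, hC, hkey⟩ := keyA a (M.re - 5/2) ha (by linarith)
  refine ⟨C, hC, fun b t hb hbt => ?_⟩
  set u : ℝ := Real.exp (-b) - Real.exp (-t) with hu_def
  set s : ℝ := Real.exp (-t) + Real.exp (-b) with hs_def
  set D : ℝ := 1 + (t - b) ^ (if M.re = 3/2 then (1:ℝ) else 0) with hD_def
  have het : (0:ℝ) < Real.exp (-t) := Real.exp_pos _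
  have heb : (0:ℝ) < Real.exp (-b) := Real.exp_pos _
  have hlt : Real.exp (-t) < Real.exp (-b) := Real.exp_lt_exp.mpr (by linarith)
  have hu : 0 < u := by rw [hu_def]; linarith
  have hus : u < s := by rw [hu_def, hs_def]; linarith
  have hs : 0 < s := hu.trans hus
  have hsu : (0:ℝ) < s - u := by linarith
  have hD : 1 ≤ D := by
    rw [hD_def]
    have : (0:ℝ) ≤ (t - b) ^ (if M.re = 3/2 then (1:ℝ) else 0) :=
      Real.rpow_nonneg (by linarith) _
    linarith
  have hlog : M.re - 5/2 = -1 → Real.log (s / (s - u)) ≤ D := by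
    intro hα1
    have hM32 : M.re = 3/2 := by linarith
    have hsu_eq : s - u = 2 * Real.exp (-t) := by rw [hu_def, hs_def]; ring
    have h2 : Real.exp (t - b) * (2 * Real.exp (-t)) = 2 * Real.exp (-b) := by
      rw [mul_left_comm, ← Real.exp_add, show t - b + -t = -b by ring]
    have hquot : s / (s - u) ≤ Real.exp (t - b) := by
      rw [hsu_eq, div_le_iff₀ (by positivity), h2, hs_def]
      linarith
    have hlog1 : Real.log (s / (s - u)) ≤ t - b := by
      calc Real.log (s / (s - u)) ≤ Real.log (Real.exp (t - b)) :=
            Real.log_le_log (div_pos hs hsu) hquot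
        _ = t - b := Real.log_exp _
    rw [hD_def, if_pos hM32, Real.rpow_one]
    linarith
  have hmain := hkey u s D hu hus hD hlog
  have habs : ‖
      (∫ r in Set.Ioo (0:ℝ) u,
        ((r ^ a : ℝ) : ℂ) * ((s ^ 2 - r ^ 2 : ℝ) : ℂ) ^ (-(5/2 : ℂ) + M))‖
      ≤ ∫ r in Set.Ioo (0:ℝ) u, r ^ a * (s ^ 2 - r ^ 2) ^ (M.re - 5/2) := by
    refine le_trans (norm_integral_le_integral_norm _) (le_of_eq ?_)
    refine setIntegral_congr_fun measurableSet_Ioo fun r hr => ?_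
    obtain ⟨hr1, hr2⟩ := hr
    have hbase : (0:ℝ) < s ^ 2 - r ^ 2 := by nlinarith
    have hre : (-(5/2 : ℂ) + M).re = M.re - 5/2 := by
      have h52 : (5/2 : ℂ) = ((5/2 : ℝ) : ℂ) := by norm_num
      rw [h52, Complex.add_re, Complex.neg_re, Complex.ofReal_re]
      ring
    rw [norm_mul, Complex.norm_real, Real.norm_eq_abs,
      abs_of_nonneg (Real.rpow_nonneg hr1.le a),
      Complex.norm_cpow_eq_rpow_re_of_pos hbase, hre]
  have heq : C * D * u ^ (1 + a) * s ^ (2 * (M.re - 5/2))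
      = C * D * Real.exp (-(a + 2 * M.re - 4) * (b + t)) *
          (Real.exp t - Real.exp b) ^ (1 + a) *
          (Real.exp b + Real.exp t) ^ (2 * M.re - 5) := by
    have hE : Real.exp t - Real.exp b > 0 := by
      have := Real.exp_lt_exp.mpr hbt; linarith
    have hu_eq : u = Real.exp (-(b + t)) * (Real.exp t - Real.exp b) := by
      rw [hu_def, mul_sub, ← Real.exp_add, ← Real.exp_add,
        show -(b + t) + t = -b by ring, show -(b + t) + b = -t by ring]
    have hs_eq : s = Real.exp (-(b + t)) * (Real.exp b + Real.exp t) := by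
      rw [hs_def, mul_add, ← Real.exp_add, ← Real.exp_add,
        show -(b + t) + b = -t by ring, show -(b + t) + t = -b by ring]
    have h1 : u ^ (1 + a)
        = Real.exp (-(b + t) * (1 + a)) * (Real.exp t - Real.exp b) ^ (1 + a) := by
      rw [hu_eq, Real.mul_rpow (Real.exp_nonneg _) hE.le, ← Real.exp_mul]
    have h2 : s ^ (2 * M.re - 5)
        = Real.exp (-(b + t) * (2 * M.re - 5)) * (Real.exp b + Real.exp t) ^ (2 * M.re - 5) := by
      rw [hs_eq, Real.mul_rpow (Real.exp_nonneg _) (by positivity), ← Real.exp_mul]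
    rw [show 2 * (M.re - 5/2) = 2 * M.re - 5 by ring, h1, h2,
      show C * D * (Real.exp (-(b + t) * (1 + a)) * (Real.exp t - Real.exp b) ^ (1 + a)) *
          (Real.exp (-(b + t) * (2 * M.re - 5)) * (Real.exp b + Real.exp t) ^ (2 * M.re - 5))
        = C * D * (Real.exp (-(b + t) * (1 + a)) * Real.exp (-(b + t) * (2 * M.re - 5))) *
          (Real.exp t - Real.exp b) ^ (1 + a) *
          (Real.exp b + Real.exp t) ^ (2 * M.re - 5) by ring,
      ← Real.exp_add, show -(b + t) * (1 + a) + -(b + t) * (2 * M.re - 5)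
        = -(a + 2 * M.re - 4) * (b + t) by ring]
  calc ‖(∫ r in Set.Ioo (0:ℝ) u,
        ((r ^ a : ℝ) : ℂ) * ((s ^ 2 - r ^ 2 : ℝ) : ℂ) ^ (-(5/2 : ℂ) + M))‖
      ≤ ∫ r in Set.Ioo (0:ℝ) u, r ^ a * (s ^ 2 - r ^ 2) ^ (M.re - 5/2) := habs
    _ ≤ C * D * u ^ (1 + a) * s ^ (2 * (M.re - 5/2)) := hmain
    _ = C * D * Real.exp (-(a + 2 * M.re - 4) * (b + t)) *
          (Real.exp t - Real.exp b) ^ (1 + a) *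
          (Real.exp b + Real.exp t) ^ (2 * M.re - 5) := heq
end
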